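/- arXiv:1102.2702 — 14 statements merged into one kernel-verified Lean document; each statement's English description precedes it below -/
import Mathlib

section
/- For every conjugacy class C of the symmetric group S_n, there exists a permutation f in C with d_∞(f, ι) ≤ 2, where ι is the identity permutation. In other words, every conjugacy class intersects the ball B(ι, 2) in the ℓ∞-metric. -/
open Equiv Equiv.Perm
def zigF {k : ℕ} (j : Fin k) : Fin k :=
  ⟨if 2 * j.val + 1 ≤ k then 2 * j.val else 2 * k - 1 - 2 * j.val, by
    have := j.2; split_ifs <;> omega⟩
noncomputable def zigE (k : ℕ) : Equiv.Perm (Fin k) :=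
  Equiv.ofBijective zigF (Finite.injective_iff_bijective.mp (by
    intro a b h
    have ha := a.2; have hb := b.2
    have h' : (zigF a).val = (zigF b).val := congrArg Fin.val h
    simp only [zigF] at h'
    split_ifs at h' <;> (apply Fin.ext; omega)))
lemma zigE_val {k : ℕ} (x : Fin k) : ((zigE k) x).val =
    if 2 * x.val + 1 ≤ k then 2 * x.val else 2 * k - 1 - 2 * x.val := rfl
noncomputable def cyc (m : ℕ) : Equiv.Perm (Fin (m + 2)) :=
  zigE (m + 2) * finRotate (m + 2) * (zigE (m + 2))⁻¹
lemma cyc_bound (m : ℕ) (p : Fin (m + 2)) : (((cyc m) p : ℤ) - p).natAbs ≤ 2 := by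
  set j := (zigE (m + 2))⁻¹ p with hj
  have hp : p = zigE (m + 2) j := by rw [hj]; simp
  have hc : (cyc m) p = zigE (m + 2) (j + 1) := by
    rw [cyc, hp]; simp [mul_apply, finRotate_succ_apply]
  have hadd : (j + 1).val = (j.val + 1) % (m + 2) := by
    rw [Fin.add_def]; simp
  have hjlt := j.2
  rw [hc, hp, zigE_val, zigE_val, hadd]
  have hm : (j.val + 1) % (m + 2) = if j.val + 1 = m + 2 then 0 else j.val + 1 := by
    split_ifs with h
    · rw [h, Nat.mod_self]
    · exact Nat.mod_eq_of_lt (by omega)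
  rw [hm]
  split_ifs <;> omega

lemma cycleType_cyc (m : ℕ) : (cyc m).cycleType = {m + 2} := by
  rw [cyc, cycleType_conj, cycleType_finRotate]

lemma key (m : Multiset ℕ) : ∀ (n : ℕ), m.sum ≤ n → (∀ a ∈ m, 2 ≤ a) →
    ∃ f : Equiv.Perm (Fin n), f.cycleType = m ∧ ∀ i : Fin n, ((f i : ℤ) - i).natAbs ≤ 2 := by
  induction m using Multiset.induction with
  | empty => exact fun n _ _ => ⟨1, by simp, fun i => by simp⟩
  | cons k s ih =>
    intro n hsum h2
    obtain ⟨m0, rfl⟩ : ∃ m0, k = m0 + 2 :=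
      ⟨k - 2, by have := h2 k (Multiset.mem_cons_self _ _); omega⟩
    rw [Multiset.sum_cons] at hsum
    have hk : m0 + 2 ≤ n := by omega
    obtain ⟨f', hf'ct, hf'b⟩ := ih (n - (m0 + 2)) (by omega)
      (fun a ha => h2 a (Multiset.mem_cons_of_mem ha))
    let e1 : Fin (m0 + 2) ≃ {i : Fin n // (i : ℕ) < m0 + 2} :=
      { toFun := fun j => ⟨⟨j, by omega⟩, j.2⟩
        invFun := fun x => ⟨x.1.val, x.2⟩
        left_inv := fun j => rfl
        right_inv := fun x => rfl }
    let e2 : Fin (n - (m0 + 2)) ≃ {i : Fin n // ¬ (i : ℕ) < m0 + 2} :=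
      { toFun := fun j => ⟨⟨m0 + 2 + j.val, by have := j.2; omega⟩, by simp⟩
        invFun := fun x => ⟨x.1.val - (m0 + 2), by have := x.1.2; have := x.2; omega⟩
        left_inv := fun j => by apply Fin.ext; simp
        right_inv := fun x => by
          apply Subtype.ext; apply Fin.ext; have := x.2; simp; omega }
    let C : Equiv.Perm (Fin n) := (cyc m0).extendDomain e1
    let F : Equiv.Perm (Fin n) := f'.extendDomain e2
    have hdisj : C.Disjoint F := by
      intro x
      by_cases hx : (x : ℕ) < m0 + 2
      · exact Or.inr (f'.extendDomain_apply_not_subtype e2 (not_not_intro hx))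
      · exact Or.inl ((cyc m0).extendDomain_apply_not_subtype e1 hx)
    refine ⟨C * F, ?_, ?_⟩
    · rw [Equiv.Perm.Disjoint.cycleType_mul hdisj, cycleType_extendDomain, cycleType_extendDomain,
        cycleType_cyc, hf'ct, ← Multiset.singleton_add]
    · intro i
      by_cases hx : (i : ℕ) < m0 + 2
      · have hF : F i = i := f'.extendDomain_apply_not_subtype e2 (not_not_intro hx)
        have hmul : (C * F) i = C i := by rw [Equiv.Perm.mul_apply, hF]
        have hC : C i = ↑(e1 ((cyc m0) (e1.symm ⟨i, hx⟩))) :=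
          (cyc m0).extendDomain_apply_subtype e1 hx
        have hval : ((C * F) i).val = ((cyc m0) ⟨i.val, hx⟩).val := by
          rw [hmul, hC]; rfl
        have hb := cyc_bound m0 ⟨i.val, hx⟩
        have hd : ((⟨i.val, hx⟩ : Fin (m0 + 2))).val = i.val := rfl
        omega
      · have hC : C i = i := (cyc m0).extendDomain_apply_not_subtype e1 hx
        have hF : F i = ↑(e2 (f' (e2.symm ⟨i, hx⟩))) :=
          f'.extendDomain_apply_subtype e2 hx
        have hval : (F i).val = m0 + 2 + (f' ⟨i.val - (m0 + 2), by have := i.2; omega⟩).val := by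
          rw [hF]; rfl
        have hnot : ¬ ((F i) : ℕ) < m0 + 2 := by omega
        have hmul : (C * F) i = F i := by
          rw [Equiv.Perm.mul_apply]
          exact (cyc m0).extendDomain_apply_not_subtype e1 hnot
        have hb := hf'b ⟨i.val - (m0 + 2), by have := i.2; omega⟩
        have hd : ((⟨i.val - (m0 + 2), by have := i.2; omega⟩ : Fin (n - (m0 + 2)))).val
            = i.val - (m0 + 2) := rfl
        have hmv : ((C * F) i).val = (F i).val := by rw [hmul]
        omega




/-- The ℓ∞-distance on permutations of `Fin n`. -/
def dinf {n : ℕ} (f g : Equiv.Perm (Fin n)) : ℕ :=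
  Finset.univ.sup fun i : Fin n => ((f i : ℤ) - (g i : ℤ)).natAbs

/-- Every conjugacy class of `S_n` meets the ball of radius 2 around the identity
in the ℓ∞-metric. -/
theorem conjugacy_class_meets_ball_two (n : ℕ) (g : Equiv.Perm (Fin n)) :
    ∃ f : Equiv.Perm (Fin n), IsConj g f ∧ dinf f 1 ≤ 2 := by
  obtain ⟨f, hct, hb⟩ := key g.cycleType n
    (by rw [Equiv.Perm.sum_cycleType]
        exact (Finset.card_le_univ _).trans_eq (by simp))
    (fun a ha => Equiv.Perm.two_le_of_mem_cycleType ha)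
  refine ⟨f, Equiv.Perm.isConj_iff_cycleType_eq.mpr hct.symm, ?_⟩
  exact Finset.sup_le fun i _ => by simpa using hb i
end

section
/- For any subset C of S_n with |C| ≥ 2, there exists a permutation l in S_n such that the minimal ℓ∞-distance of the conjugated set l C l^{-1} is at most 2, i.e., there exist distinct f, g ∈ l C l^{-1} with d_∞(f, g) ≤ 2. -/
/-- zigzag function on `{0,...,k-1}`. -/
def zf (k j : ℕ) : ℕ := if 2 * j < k then 2 * j else 2 * (k - j) - 1

lemma zf_lt {k j : ℕ} (h : j < k) : zf k j < k := by
  unfold zf; split_ifs <;> omega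

lemma zf_inj {k i j : ℕ} (hi : i < k) (hj : j < k) (h : zf k i = zf k j) : i = j := by
  unfold zf at h; split_ifs at h <;> omega

lemma zf_adj {k j : ℕ} (h : j < k) :
    ((zf k ((j + 1) % k) : ℤ) - zf k j).natAbs ≤ 2 := by
  rcases Nat.lt_or_ge (j + 1) k with h1 | h1
  · rw [Nat.mod_eq_of_lt h1]
    unfold zf; split_ifs <;> omega
  · have hjk : j + 1 = k := by omega
    have : (j + 1) % k = 0 := by rw [hjk, Nat.mod_self]
    rw [this]
    unfold zf; split_ifs <;> omega

theorem key_s2 : ∀ (n : ℕ) (α : Type) [Fintype α] [DecidableEq α] (π : Equiv.Perm α),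
    Fintype.card α = n →
    ∃ e : α ≃ Fin n, ∀ a : α, ((e (π a) : ℤ) - (e a : ℤ)).natAbs ≤ 2 := by
  intro n
  induction n using Nat.strong_induction_on with
  | _ n IH =>
    intro α _ _ π hcard
    rcases Nat.eq_zero_or_pos n with h0 | hn
    · subst h0
      refine ⟨Fintype.equivFinOfCardEq hcard, fun a => ?_⟩
      have : IsEmpty α := Fintype.card_eq_zero_iff.mp hcard
      exact (this.false a).elim
    · have : Nonempty α := Fintype.card_pos_iff.mp (hcard ▸ hn)
      obtain ⟨a₀⟩ := this
      set k := Function.minimalPeriod (⇑π) a₀ with hkdef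
      have hper : a₀ ∈ Function.periodicPts (⇑π) := by
        refine Function.mk_mem_periodicPts (n := orderOf π) (orderOf_pos π) ?_
        show (⇑π)^[orderOf π] a₀ = a₀
        rw [Equiv.Perm.iterate_eq_pow, pow_orderOf_eq_one]; rfl
      have hk1 : 0 < k := Function.minimalPeriod_pos_of_mem_periodicPts hper
      -- orbit predicate
      set p : α → Prop := fun x => ∃ j : Fin k, (π ^ (j : ℕ)) a₀ = x with hpdef
      have hdec : DecidablePred p := fun x => inferInstanceAs (Decidable (∃ _, _))
      -- powers mod k
      have hmod : ∀ m : ℕ, (π ^ (m % k)) a₀ = (π ^ m) a₀ := by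
        intro m
        have h := Function.iterate_mod_minimalPeriod_eq (f := ⇑π) (x := a₀) (n := m)
        simp only [Equiv.Perm.iterate_eq_pow] at h
        exact h
      -- orbit equiv
      set ofun : Fin k → {x // p x} := fun j => ⟨(π ^ (j : ℕ)) a₀, ⟨j, rfl⟩⟩ with hofun
      have hinj : Function.Injective ofun := by
        intro i j hij
        have h2 : (π ^ (i : ℕ)) a₀ = (π ^ (j : ℕ)) a₀ := congrArg Subtype.val hij
        have := Function.iterate_injOn_Iio_minimalPeriod (f := ⇑π) (x := a₀)
          (Set.mem_Iio.mpr i.isLt) (Set.mem_Iio.mpr j.isLt)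
          (by simpa [Equiv.Perm.iterate_eq_pow] using h2)
        exact Fin.ext this
      have hbij : Function.Bijective ofun :=
        ⟨hinj, by rintro ⟨x, j, hj⟩; exact ⟨j, Subtype.ext hj⟩⟩
      set oe : Fin k ≃ {x // p x} := Equiv.ofBijective ofun hbij with hoe
      have hoeapp : ∀ j : Fin k, ((oe j : α)) = (π ^ (j : ℕ)) a₀ := fun j => rfl
      have hcardp : Fintype.card {x // p x} = k := by
        rw [← Fintype.card_congr oe, Fintype.card_fin]
      have hkn : k ≤ n := by
        rw [← hcardp, ← hcard]; exact Fintype.card_subtype_le _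
      have hcardnp : Fintype.card {x // ¬ p x} = n - k := by
        rw [Fintype.card_subtype_compl, hcardp, hcard]
      -- invariance
      have hp_iff : ∀ x, p x ↔ p (π x) := by
        intro x
        constructor
        · rintro ⟨j, rfl⟩
          refine ⟨⟨((j : ℕ) + 1) % k, Nat.mod_lt _ hk1⟩, ?_⟩
          show (π ^ (((j : ℕ) + 1) % k)) a₀ = π ((π ^ (j : ℕ)) a₀)
          rw [hmod, pow_succ']
          rfl
        · rintro ⟨j, hj⟩
          refine ⟨⟨((j : ℕ) + k - 1) % k, Nat.mod_lt _ hk1⟩, ?_⟩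
          show (π ^ (((j : ℕ) + k - 1) % k)) a₀ = x
          rw [hmod]
          apply π.injective
          have h1 : π ((π ^ ((j:ℕ) + k - 1)) a₀) = (π ^ (((j:ℕ) + k - 1) + 1)) a₀ := by
            rw [pow_succ']; rfl
          rw [h1]
          have h2 : ((j:ℕ) + k - 1) + 1 = (j:ℕ) + k := by omega
          rw [h2, pow_add]
          have hk : (π ^ k) a₀ = a₀ := by
            have h3 := hmod k
            rw [Nat.mod_self, pow_zero] at h3
            exact h3.symm
          show (π ^ (j:ℕ)) ((π ^ k) a₀) = π x
          rw [hk, hj]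
      have hnp_iff : ∀ x, ¬ p x ↔ ¬ p (π x) := fun x => not_iff_not.mpr (hp_iff x)
      -- IH on complement
      have hlt : n - k < n := by omega
      obtain ⟨eC, heC⟩ := IH (n - k) hlt {x // ¬ p x} (π.subtypePerm (fun x => (hnp_iff x).symm)) hcardnp
      -- construct e
      set tf : α → Fin n := fun x =>
        if h : p x then ⟨n - k + zf k (oe.symm ⟨x, h⟩), by
          have := zf_lt (oe.symm ⟨x, h⟩).isLt; omega⟩
        else ⟨(eC ⟨x, h⟩ : ℕ), by have := (eC ⟨x, h⟩).isLt; omega⟩ with htf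
      have htf_inj : Function.Injective tf := by
        intro x y hxy
        by_cases hx : p x <;> by_cases hy : p y
        · simp only [htf, dif_pos hx, dif_pos hy, Fin.mk.injEq] at hxy
          have h1 : zf k (oe.symm ⟨x, hx⟩) = zf k (oe.symm ⟨y, hy⟩) := by omega
          have h2 := zf_inj (oe.symm ⟨x, hx⟩).isLt (oe.symm ⟨y, hy⟩).isLt h1
          have h3 : oe.symm ⟨x, hx⟩ = oe.symm ⟨y, hy⟩ := Fin.ext h2
          have h4 := congrArg oe h3
          rw [oe.apply_symm_apply, oe.apply_symm_apply] at h4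
          exact congrArg Subtype.val h4
        · exfalso
          simp only [htf, dif_pos hx, dif_neg hy, Fin.mk.injEq] at hxy
          have := (eC ⟨y, hy⟩).isLt; omega
        · exfalso
          simp only [htf, dif_neg hx, dif_pos hy, Fin.mk.injEq] at hxy
          have := (eC ⟨x, hx⟩).isLt; omega
        · simp only [htf, dif_neg hx, dif_neg hy, Fin.mk.injEq] at hxy
          have h1 : eC ⟨x, hx⟩ = eC ⟨y, hy⟩ := Fin.ext hxy
          have h2 := eC.injective h1
          exact congrArg Subtype.val h2
      have htf_bij : Function.Bijective tf := by
        have h1 : Fintype.card α = Fintype.card (Fin n) := by rw [hcard, Fintype.card_fin]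
        exact (Fintype.bijective_iff_injective_and_card tf).mpr ⟨htf_inj, h1⟩
      refine ⟨Equiv.ofBijective tf htf_bij, fun a => ?_⟩
      show ((tf (π a) : ℤ) - (tf a : ℤ)).natAbs ≤ 2
      by_cases ha : p a
      · have hπa : p (π a) := (hp_iff a).mp ha
        set i : Fin k := oe.symm ⟨a, ha⟩ with hi
        have hai : (π ^ (i : ℕ)) a₀ = a :=
          congrArg Subtype.val (oe.apply_symm_apply ⟨a, ha⟩)
        have hπai : oe.symm ⟨π a, hπa⟩ = ⟨((i : ℕ) + 1) % k, Nat.mod_lt _ hk1⟩ := by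
          rw [Equiv.symm_apply_eq]
          apply Subtype.ext
          show π a = (π ^ (((i : ℕ) + 1) % k)) a₀
          rw [hmod, pow_succ', ← hai]
          rfl
        simp only [htf, dif_pos ha, dif_pos hπa, hπai, ← hi]
        have hb := zf_adj (k := k) (j := (i : ℕ)) i.isLt
        have hz1 := zf_lt (k := k) (j := (i:ℕ)) i.isLt
        have hz2 : zf k (((i:ℕ) + 1) % k) < k := zf_lt (Nat.mod_lt _ hk1)
        omega
      · have hπa : ¬ p (π a) := (hnp_iff a).mp ha
        simp only [htf, dif_neg ha, dif_neg hπa]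
        have h1 : (⟨π a, hπa⟩ : {x // ¬ p x}) = (π.subtypePerm (fun x => (hnp_iff x).symm)) ⟨a, ha⟩ := rfl
        rw [h1]
        have := heC ⟨a, ha⟩
        simpa using this

/-- Any code `C ⊆ S_n` with at least two elements can be relabeled
(conjugated) so that its minimal ℓ∞-distance is at most 2. -/
theorem exists_labeling_min_dist_le_two (n : ℕ) (C : Finset (Equiv.Perm (Fin n)))
    (hC : 2 ≤ C.card) :
    ∃ l : Equiv.Perm (Fin n), ∃ f ∈ C, ∃ g ∈ C, f ≠ g ∧
      dinf (l * f * l⁻¹) (l * g * l⁻¹) ≤ 2 := by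
  obtain ⟨f, hf, g, hg, hfg⟩ := Finset.one_lt_card.mp hC
  obtain ⟨e, he⟩ := key_s2 n (Fin n) (f * g⁻¹) (Fintype.card_fin n)
  refine ⟨e, f, hf, g, hg, hfg, ?_⟩
  unfold dinf
  apply Finset.sup_le
  intro i _
  have h1 : (e * f * e⁻¹) i = e (f (e⁻¹ i)) := rfl
  have h2 : (e * g * e⁻¹) i = e (g (e⁻¹ i)) := rfl
  rw [h1, h2]
  have := he (g (e⁻¹ i))
  simpa using this
end

section
/- A subset C ⊆ S_n with |C| ≥ 2 admits a labeling l ∈ S_n with d(l C l^{-1}) = 1 if and only if the set {a b^{-1} : a, b ∈ C} contains an involution (a non-identity permutation g with g² = ι). -/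
open Equiv Finset

section Aux

lemma card_filter_val_lt' {n m : ℕ} (h : m ≤ n) :
    (Finset.univ.filter fun i : Fin n => i.val < m).card = m := by
  have : (Finset.univ.filter fun i : Fin n => i.val < m)
      = Finset.map (Fin.castLEEmb h) Finset.univ := by
    ext i
    simp only [mem_filter, mem_univ, true_and, Finset.mem_map, Fin.castLEEmb_apply]
    constructor
    · intro hi; exact ⟨⟨i.val, hi⟩, Fin.ext rfl⟩
    · rintro ⟨j, rfl⟩; exact j.isLt
  rw [this, Finset.card_map, Finset.card_univ, Fintype.card_fin]

lemma lemA' {n : ℕ} (σ : Equiv.Perm (Fin n))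
    (hb : ∀ i : Fin n, ((σ i : ℤ) - (i : ℤ)).natAbs ≤ 1)
    (j : Fin n) (hj : (σ j).val = j.val + 1) : σ (σ j) = j := by
  set m := j.val with hm
  have hmn : m + 1 < n := hj ▸ (σ j).isLt
  set S := Finset.univ.filter (fun i : Fin n => (σ i).val ≤ m) with hS
  set T := Finset.univ.filter (fun i : Fin n => i.val < m + 2 ∧ i.val ≠ m) with hT
  have hbv : ∀ i : Fin n, (σ i).val + 1 ≥ i.val ∧ (σ i).val ≤ i.val + 1 := by
    intro i
    have := hb i
    have h1 : ((σ i : ℤ)) = ((σ i).val : ℤ) := by simp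
    have h2 : ((i : ℤ)) = (i.val : ℤ) := by simp
    rw [h1, h2] at this
    omega
  have hST : S ⊆ T := by
    intro i hi
    simp only [hS, mem_filter, mem_univ, true_and] at hi
    simp only [hT, mem_filter, mem_univ, true_and]
    have := (hbv i).1
    constructor
    · omega
    · intro hiv
      have : i = j := Fin.ext hiv
      rw [this] at hi; omega
  have hScard : S.card = m + 1 := by
    have : S = Finset.map σ.symm.toEmbedding
        (Finset.univ.filter fun i : Fin n => i.val < m + 1) := by
      ext i
      simp only [hS, mem_filter, mem_univ, true_and, Finset.mem_map,
        Equiv.coe_toEmbedding]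
      constructor
      · intro hi; exact ⟨σ i, by omega, σ.symm_apply_apply i⟩
      · rintro ⟨x, hx, rfl⟩; simpa using by omega
    rw [this, Finset.card_map, card_filter_val_lt' (by omega)]
  have hTcard : T.card = m + 1 := by
    have he : T = (Finset.univ.filter fun i : Fin n => i.val < m + 2).erase j := by
      ext i
      simp only [hT, mem_filter, mem_univ, true_and, Finset.mem_erase, Fin.ext_iff, ← hm]
      omega
    rw [he, Finset.card_erase_of_mem (by simp [hm]), card_filter_val_lt' (by omega)]
    omega
  have hSeqT : S = T := Finset.eq_of_subset_of_card_le hST (le_of_eq (hTcard.trans hScard.symm))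
  have hσjT : σ j ∈ T := by
    simp only [hT, mem_filter, mem_univ, true_and]
    omega
  have hσjS : σ j ∈ S := hSeqT ▸ hσjT
  simp only [hS, mem_filter, mem_univ, true_and] at hσjS
  have := (hbv (σ j)).1
  exact Fin.ext (by omega)

lemma sq_eq_one_of_bound' {n : ℕ} (σ : Equiv.Perm (Fin n))
    (hb : ∀ i : Fin n, ((σ i : ℤ) - (i : ℤ)).natAbs ≤ 1) : σ ^ 2 = 1 := by
  have hbv : ∀ i : Fin n, (σ i).val + 1 ≥ i.val ∧ (σ i).val ≤ i.val + 1 := by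
    intro i
    have := hb i
    have h1 : ((σ i : ℤ)) = ((σ i).val : ℤ) := by simp
    have h2 : ((i : ℤ)) = (i.val : ℤ) := by simp
    rw [h1, h2] at this; omega
  have hbinv : ∀ i : Fin n, ((σ⁻¹ i : ℤ) - (i : ℤ)).natAbs ≤ 1 := by
    intro i
    have := hb (σ⁻¹ i)
    rw [show σ (σ⁻¹ i) = i from (Equiv.eq_symm_apply σ).mp rfl] at this
    omega
  have key : ∀ i, σ (σ i) = i := by
    intro i
    have key := hbv i
    rcases Nat.lt_trichotomy (σ i).val i.val with h | h | h
    · have h1 : (σ⁻¹ (σ i)).val = (σ i).val + 1 := by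
        rw [show σ⁻¹ (σ i) = i from Equiv.Perm.inv_eq_iff_eq.mpr rfl]; omega
      have h2 := lemA' σ⁻¹ hbinv (σ i) h1
      rw [show σ⁻¹ (σ i) = i from Equiv.Perm.inv_eq_iff_eq.mpr rfl] at h2
      have h3 : σ⁻¹ i = σ i := h2
      calc σ (σ i) = σ (σ⁻¹ i) := by rw [h3]
      _ = i := (Equiv.eq_symm_apply σ).mp rfl
    · have h4 : σ i = i := Fin.ext h
      rw [h4, h4]
    · exact lemA' σ hb i (by omega)
  ext i
  simp only [sq, Equiv.Perm.mul_apply, Equiv.Perm.coe_one, id_eq]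
  exact congrArg Fin.val (key i)

def stdFun' (n k : ℕ) (hkn : 2*k ≤ n) (i : Fin n) : Fin n :=
  if hi : i.val < 2*k then ⟨2*(i.val/2) + 1 - i.val % 2, by omega⟩ else i

lemma stdFun_invol' (n k : ℕ) (hkn : 2*k ≤ n) : Function.Involutive (stdFun' n k hkn) := by
  intro i
  unfold stdFun'
  by_cases hi : i.val < 2*k
  · rw [dif_pos hi]
    have h2 : 2*(i.val/2) + 1 - i.val % 2 < 2*k := by omega
    rw [dif_pos h2]
    apply Fin.ext
    simp only
    omega
  · rw [dif_neg hi, dif_neg hi]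

def stdInv' (n k : ℕ) (hkn : 2*k ≤ n) : Equiv.Perm (Fin n) :=
  (stdFun_invol' n k hkn).toPerm

lemma stdInv_apply' (n k : ℕ) (hkn : 2*k ≤ n) (i : Fin n) :
    stdInv' n k hkn i = stdFun' n k hkn i := rfl

lemma stdInv_bound' (n k : ℕ) (hkn : 2*k ≤ n) (i : Fin n) :
    (((stdInv' n k hkn i : Fin n) : ℤ) - (i : ℤ)).natAbs ≤ 1 := by
  rw [stdInv_apply']
  unfold stdFun'
  by_cases hi : i.val < 2*k
  · rw [dif_pos hi]
    have h1 : ((⟨2*(i.val/2) + 1 - i.val % 2, by omega⟩ : Fin n) : ℤ)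
        = ((2*(i.val/2) + 1 - i.val % 2 : ℕ) : ℤ) := by simp
    have h2 : ((i : ℤ)) = (i.val : ℤ) := by simp
    rw [h1, h2]
    omega
  · rw [dif_neg hi]; simp

lemma stdInv_support' (n k : ℕ) (hkn : 2*k ≤ n) :
    (stdInv' n k hkn).support = Finset.univ.filter (fun i : Fin n => i.val < 2*k) := by
  ext i
  simp only [Equiv.Perm.mem_support, mem_filter, mem_univ, true_and, stdInv_apply']
  unfold stdFun'
  by_cases hi : i.val < 2*k
  · rw [dif_pos hi]
    simp only [hi, iff_true, ne_eq, Fin.ext_iff]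
    omega
  · rw [dif_neg hi]
    simp [hi]

lemma stdInv_sq' (n k : ℕ) (hkn : 2*k ≤ n) : (stdInv' n k hkn) ^ 2 = 1 := by
  ext i
  simp only [sq, Equiv.Perm.mul_apply, Equiv.Perm.coe_one, id_eq, stdInv_apply']
  exact congrArg Fin.val (stdFun_invol' n k hkn i)

lemma cycleType_of_sq' {α : Type*} [Fintype α] [DecidableEq α] (g : Equiv.Perm α)
    (h : g ^ 2 = 1) :
    g.cycleType = Multiset.replicate (g.support.card / 2) 2 ∧ 2 ∣ g.support.card := by
  have h2 : ∀ m ∈ g.cycleType, m = 2 := by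
    intro m hm
    have hle : 2 ≤ m := Equiv.Perm.two_le_of_mem_cycleType hm
    have hdvd : m ∣ orderOf g := by
      rw [← Equiv.Perm.lcm_cycleType]; exact Multiset.dvd_lcm hm
    have ho : orderOf g ∣ 2 := orderOf_dvd_of_pow_eq_one h
    have hm2 : m ∣ 2 := hdvd.trans ho
    have := Nat.le_of_dvd (by norm_num) hm2
    omega
  have hrep : g.cycleType = Multiset.replicate (Multiset.card g.cycleType) 2 :=
    Multiset.eq_replicate_card.mpr h2
  have hsum : g.cycleType.sum = g.support.card := Equiv.Perm.sum_cycleType g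
  rw [hrep, Multiset.sum_replicate, smul_eq_mul] at hsum
  constructor
  · rw [hrep]; congr 1; omega
  · omega

lemma exists_label' {n : ℕ} (g : Equiv.Perm (Fin n)) (hg2 : g ^ 2 = 1) :
    ∃ l : Equiv.Perm (Fin n), ∀ i : Fin n,
      (((l * g * l⁻¹) i : ℤ) - (i : ℤ)).natAbs ≤ 1 := by
  obtain ⟨hct, hdvd⟩ := cycleType_of_sq' g hg2
  set k := g.support.card / 2 with hk
  have hkn : 2*k ≤ n := by
    have h1 := Finset.card_le_card (Finset.subset_univ g.support)
    rw [Finset.card_univ, Fintype.card_fin] at h1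
    omega
  set c := stdInv' n k hkn with hc
  have hcsupp : c.support.card = 2*k := by
    rw [hc, stdInv_support', card_filter_val_lt' hkn]
  have hconj : IsConj c g := by
    rw [Equiv.Perm.isConj_iff_cycleType_eq]
    obtain ⟨hct', _⟩ := cycleType_of_sq' c (stdInv_sq' n k hkn)
    rw [hct', hct, hcsupp]
    congr 1
    omega
  obtain ⟨u, hu⟩ := isConj_iff.mp hconj
  refine ⟨u⁻¹, fun i => ?_⟩
  have huc : u⁻¹ * g * u⁻¹⁻¹ = c := by rw [← hu]; group
  rw [huc]
  exact stdInv_bound' n k hkn i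

lemma one_le_dinf_of_ne' {n : ℕ} {u v : Equiv.Perm (Fin n)} (h : u ≠ v) :
    1 ≤ dinf u v := by
  have : ∃ i, u i ≠ v i := by
    by_contra hc
    push_neg at hc
    exact h (Equiv.ext hc)
  obtain ⟨i, hi⟩ := this
  have hvi : (u i).val ≠ (v i).val := fun he => hi (Fin.ext he)
  have h1 : ((u i : ℤ)) = ((u i).val : ℤ) := by simp
  have h2 : ((v i : ℤ)) = ((v i).val : ℤ) := by simp
  have h3 : 1 ≤ ((u i : ℤ) - (v i : ℤ)).natAbs := by
    rw [h1, h2]; omega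
  unfold dinf
  exact h3.trans (Finset.le_sup (f := fun i : Fin n => ((u i : ℤ) - (v i : ℤ)).natAbs)
    (Finset.mem_univ i))

end Aux

/-- A code `C` with at least two elements admits a labeling of minimal
ℓ∞-distance exactly 1 iff `{a b⁻¹ : a, b ∈ C}` contains an involution. -/
theorem labeling_min_dist_one_iff_involution (n : ℕ) (C : Finset (Equiv.Perm (Fin n)))
    (hC : 2 ≤ C.card) :
    (∃ l : Equiv.Perm (Fin n),
      (∀ f ∈ C, ∀ g ∈ C, f ≠ g → 1 ≤ dinf (l * f * l⁻¹) (l * g * l⁻¹)) ∧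
      (∃ f ∈ C, ∃ g ∈ C, f ≠ g ∧ dinf (l * f * l⁻¹) (l * g * l⁻¹) = 1)) ↔
    (∃ g : Equiv.Perm (Fin n), g ≠ 1 ∧ g ^ 2 = 1 ∧ ∃ a ∈ C, ∃ b ∈ C, g = a * b⁻¹) := by
  constructor
  · rintro ⟨l, -, f, hf, g, hg, hfg, hd⟩
    set u := l * f * l⁻¹ with hu
    set v := l * g * l⁻¹ with hv
    have hbound : ∀ j : Fin n, (((u * v⁻¹) j : ℤ) - (j : ℤ)).natAbs ≤ 1 := by
      intro j
      have hd' : (Finset.univ.sup fun i : Fin n => ((u i : ℤ) - (v i : ℤ)).natAbs) = 1 := hd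
      have hterm : ((u (v⁻¹ j) : ℤ) - (v (v⁻¹ j) : ℤ)).natAbs ≤ 1 := by
        have := Finset.le_sup (f := fun i : Fin n => ((u i : ℤ) - (v i : ℤ)).natAbs)
          (Finset.mem_univ (v⁻¹ j))
        rw [hd'] at this
        exact this
      rw [show v (v⁻¹ j) = j from (Equiv.eq_symm_apply v).mp rfl] at hterm
      exact hterm
    have hsq : (u * v⁻¹) ^ 2 = 1 := sq_eq_one_of_bound' _ hbound
    refine ⟨f * g⁻¹, ?_, ?_, f, hf, g, hg, rfl⟩
    · intro he
      exact hfg (by rwa [mul_inv_eq_one] at he)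
    · have huv : u * v⁻¹ = l * (f * g⁻¹) * l⁻¹ := by rw [hu, hv]; group
      rw [huv] at hsq
      have h1 : l * (f * g⁻¹) ^ 2 * l⁻¹ = 1 := by
        rw [← hsq]; simp [sq, mul_assoc]
      have h2 : (f * g⁻¹) ^ 2 = l⁻¹ * (l * (f * g⁻¹) ^ 2 * l⁻¹) * l := by
        simp [mul_assoc]
      rw [h2, h1]
      simp
  · rintro ⟨g, hg1, hg2, a, ha, b, hb, hgab⟩
    obtain ⟨l, hl⟩ := exists_label' g hg2
    have hab : a ≠ b := by
      intro he
      apply hg1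
      rw [hgab, he, mul_inv_cancel]
    refine ⟨l, ?_, a, ha, b, hb, hab, ?_⟩
    · intro f hf g' hg' hne
      apply one_le_dinf_of_ne'
      intro he
      apply hne
      have := congrArg (fun x => l⁻¹ * x * l) he
      simpa [mul_assoc] using this
    · set u := l * a * l⁻¹ with hu
      set v := l * b * l⁻¹ with hv
      have huv : l * g * l⁻¹ = u * v⁻¹ := by rw [hu, hv, hgab]; group
      rw [huv] at hl
      apply le_antisymm
      · apply Finset.sup_le
        intro i _
        have := hl (v i)
        rw [show (u * v⁻¹) (v i) = u i by
          simp [Equiv.Perm.mul_apply]] at this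
        omega
      · apply one_le_dinf_of_ne'
        intro he
        apply hab
        have := congrArg (fun x => l⁻¹ * x * l) he
        simpa [hu, hv, mul_assoc] using this
end

section
/- Let C ⊆ S_n be a code and let I(C) = {g ∈ S_n : g² = ι, g ≠ ι, g = a b^{-1} for some a, b ∈ C}. Then there exists l ∈ S_n with d(l C l^{-1}) ≥ 2 if and only if there exists a Hamiltonian path v_1, v_2, ..., v_n on the vertex set [n] of the complete graph K_n such that for every g ∈ I(C), the path does not contain all the edges of E(g) = {uv : g(u) = v, u ≠ v}. -/
theorem Equiv.Perm.apply_inv_self {α : Type*} (f : Equiv.Perm α) (x : α) : f (f⁻¹ x) = x :=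
  f.apply_symm_apply x

theorem Equiv.Perm.inv_apply_self {α : Type*} (f : Equiv.Perm α) (x : α) : f⁻¹ (f x) = x :=
  f.symm_apply_apply x

private lemma finExtInt {n : ℕ} {a b : Fin n} (h : (a : ℤ) = (b : ℤ)) : a = b := by
  apply Fin.ext
  exact_mod_cast h

private lemma keyB {n : ℕ} (σ : Equiv.Perm (Fin n))
    (hb : ∀ k, ((σ k : ℤ) - (k : ℤ)).natAbs ≤ 1) :
    ∀ a : Fin n, (σ a : ℤ) = (a : ℤ) + 1 → σ (σ a) = a := by
  suffices H : ∀ m : ℕ, ∀ a : Fin n, a.val = m → (σ a : ℤ) = (a : ℤ) + 1 → σ (σ a) = a by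
    exact fun a => H a.val a rfl
  intro m
  induction m using Nat.strong_induction_on with
  | _ m IH =>
    intro a ham hσ
    set m' := σ⁻¹ a with hm'
    have hσm' : σ m' = a := Equiv.Perm.apply_inv_self σ a
    have h1 : ((σ m' : ℤ) - (m' : ℤ)).natAbs ≤ 1 := hb m'
    rw [hσm'] at h1
    rcases (by omega : (m' : ℤ) = (a : ℤ) ∨ (m' : ℤ) = (a : ℤ) + 1 ∨ (m' : ℤ) = (a : ℤ) - 1)
      with h | h | h
    · exfalso
      have hma : m' = a := finExtInt h
      rw [hma] at hσm'
      have := congrArg (fun x : Fin n => (x : ℤ)) hσm'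
      omega
    · have hms : m' = σ a := finExtInt (by rw [h, ← hσ])
      rw [← hms, hσm']
    · have hlt : m'.val < m := by omega
      have hσm'' : (σ m' : ℤ) = (m' : ℤ) + 1 := by rw [hσm']; omega
      have hk := IH m'.val hlt m' rfl hσm''
      rw [hσm'] at hk
      exfalso
      have := congrArg (fun x : Fin n => (x : ℤ)) hk
      omega

private lemma keyA {n : ℕ} (σ : Equiv.Perm (Fin n))
    (hb : ∀ k, ((σ k : ℤ) - (k : ℤ)).natAbs ≤ 1) :
    ∀ k, σ (σ k) = k := by
  intro k
  have h1 := hb k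
  rcases (by omega : (σ k : ℤ) = (k : ℤ) ∨ (σ k : ℤ) = (k : ℤ) + 1 ∨ (σ k : ℤ) = (k : ℤ) - 1)
    with h | h | h
  · have : σ k = k := finExtInt h
    rw [this, this]
  · exact keyB σ hb k h
  · have hb' : ∀ j, ((σ⁻¹ j : ℤ) - (j : ℤ)).natAbs ≤ 1 := by
      intro j
      have := hb (σ⁻¹ j)
      rw [Equiv.Perm.apply_inv_self] at this
      omega
    have hin : (σ⁻¹ (σ k) : ℤ) = ((σ k : Fin n) : ℤ) + 1 := by
      rw [Equiv.Perm.inv_apply_self]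
      omega
    have := keyB σ⁻¹ hb' (σ k) hin
    rw [Equiv.Perm.inv_apply_self] at this
    -- this : σ⁻¹ k = σ k
    have h2 := congrArg σ this
    rw [Equiv.Perm.apply_inv_self] at h2
    exact h2.symm

/-- `C` admits a labeling of minimal ℓ∞-distance at least 2 iff there is a
Hamiltonian path on `[n]` (an ordering `v 0, v 1, ..., v (n-1)` of all vertices)
such that for every involution `g ∈ I(C)` some edge of
`E(g) = {uv : g u = v, u ≠ v}` is missed by the path, i.e. there are `u ≠ w`
with `g u = w` whose positions along the path are not adjacent. -/
theorem labeling_dist_two_iff_hamiltonian_path (n : ℕ) (C : Finset (Equiv.Perm (Fin n))) :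
    (∃ l : Equiv.Perm (Fin n),
      ∀ f ∈ C, ∀ g ∈ C, f ≠ g → 2 ≤ dinf (l * f * l⁻¹) (l * g * l⁻¹)) ↔
    (∃ v : Equiv.Perm (Fin n),
      ∀ g : Equiv.Perm (Fin n), g ^ 2 = 1 → g ≠ 1 →
        (∃ a ∈ C, ∃ b ∈ C, g = a * b⁻¹) →
        ∃ u w : Fin n, g u = w ∧ u ≠ w ∧
          (((v.symm u : ℤ) - (v.symm w : ℤ)).natAbs ≠ 1)) := by
  constructor
  · rintro ⟨l, hl⟩
    refine ⟨l⁻¹, ?_⟩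
    intro g hg2 hg1 hex
    obtain ⟨a, ha, b, hb, hab⟩ := hex
    have hne : a ≠ b := by
      rintro rfl
      exact hg1 (by rw [hab, mul_inv_cancel])
    have h2 := hl a ha b hb hne
    rw [dinf, Finset.le_sup_iff (by norm_num)] at h2
    obtain ⟨i, -, hi⟩ := h2
    simp only [Equiv.Perm.mul_apply] at hi
    refine ⟨b (l⁻¹ i), a (l⁻¹ i), ?_, ?_, ?_⟩
    · rw [hab]
      simp [Equiv.Perm.mul_apply]
    · intro h
      rw [h] at hi
      simp at hi
    · have hsymm : (l⁻¹ : Equiv.Perm (Fin n)).symm = l := by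
        rw [← Equiv.Perm.inv_def, inv_inv]
      rw [hsymm]
      omega
  · rintro ⟨v, hv⟩
    refine ⟨v⁻¹, ?_⟩
    intro f hf g hg hfg
    by_contra hlt
    push_neg at hlt
    have hle : ∀ i : Fin n,
        (((v⁻¹ * f * (v⁻¹)⁻¹) i : ℤ) - ((v⁻¹ * g * (v⁻¹)⁻¹) i : ℤ)).natAbs ≤ 1 := by
      intro i
      have h1 : (((v⁻¹ * f * (v⁻¹)⁻¹) i : ℤ) - ((v⁻¹ * g * (v⁻¹)⁻¹) i : ℤ)).natAbs ≤
          dinf (v⁻¹ * f * (v⁻¹)⁻¹) (v⁻¹ * g * (v⁻¹)⁻¹) :=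
        by rw [dinf]
           exact Finset.le_sup (f := fun i : Fin n =>
             (((v⁻¹ * f * (v⁻¹)⁻¹) i : ℤ) - ((v⁻¹ * g * (v⁻¹)⁻¹) i : ℤ)).natAbs)
             (Finset.mem_univ i)
      omega
    set σ : Equiv.Perm (Fin n) := v⁻¹ * (f * g⁻¹) * v with hσdef
    have hb : ∀ k, ((σ k : ℤ) - (k : ℤ)).natAbs ≤ 1 := by
      intro k
      have h := hle ((v⁻¹ * g * (v⁻¹)⁻¹)⁻¹ k)
      rw [Equiv.Perm.apply_inv_self] at h
      have heq : (v⁻¹ * f * (v⁻¹)⁻¹) ((v⁻¹ * g * (v⁻¹)⁻¹)⁻¹ k) = σ k := by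
        simp [hσdef, Equiv.Perm.mul_apply, mul_inv_rev]
      rw [heq] at h
      exact h
    have hsq := keyA σ hb
    have hσsq : σ * σ = 1 := by
      ext k
      simp [Equiv.Perm.mul_apply, hsq k]
    have hinv : (f * g⁻¹) ^ 2 = 1 := by
      have : f * g⁻¹ = v * σ * v⁻¹ := by
        rw [hσdef]; group
      rw [this, pow_two]
      have : v * σ * v⁻¹ * (v * σ * v⁻¹) = v * (σ * σ) * v⁻¹ := by group
      rw [this, hσsq]
      group
    have hne1 : f * g⁻¹ ≠ 1 := by
      intro h
      exact hfg (mul_inv_eq_one.mp h)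
    obtain ⟨u, w, hguw, hune, hnat⟩ := hv (f * g⁻¹) hinv hne1 ⟨f, hf, g, hg, rfl⟩
    have hbu := hb (v⁻¹ u)
    have hσu : σ (v⁻¹ u) = v⁻¹ w := by
      rw [hσdef]
      simp only [Equiv.Perm.mul_apply, Equiv.Perm.apply_inv_self]
      rw [show f (g⁻¹ u) = w from hguw]
    rw [hσu] at hbu
    have hsymm : v.symm = ⇑v⁻¹ := by rw [← Equiv.Perm.inv_def]
    rw [hsymm] at hnat
    have hne2 : v⁻¹ u ≠ v⁻¹ w := fun h => hune (v⁻¹.injective h)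
    have hne3 : ((v⁻¹ u : Fin n) : ℤ) ≠ ((v⁻¹ w : Fin n) : ℤ) := by
      intro h
      exact hne2 (finExtInt h)
    omega
end

section
/- Let C ⊆ S_n be a transitive cyclic subgroup acting on [n] = {1,...,n}. Then for any labeling l ∈ S_n, the minimal ℓ∞-distance satisfies d(l C l^{-1}) ≤ n − ⌈(√(4n−3) − 1)/2⌉. -/
/-- The ℓ∞-weight of a permutation of `Fin n`: `max_i |f i - i|`. -/
def wt {n : ℕ} (f : Equiv.Perm (Fin n)) : ℕ :=
  Finset.univ.sup fun i : Fin n => ((f i : ℤ) - (i : ℤ)).natAbs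

/-- For a transitive cyclic subgroup `C ≤ S_n` and any labeling `l`, the minimal
ℓ∞-distance of `l C l⁻¹` is at most `n - ⌈(√(4n-3) - 1)/2⌉`. -/
theorem cyclic_group_labeling_upper_bound (n : ℕ) (hn : 2 ≤ n)
    (C : Subgroup (Equiv.Perm (Fin n))) (hcyc : IsCyclic C)
    (htrans : ∀ a b : Fin n, ∃ g ∈ C, g a = b)
    (l : Equiv.Perm (Fin n)) :
    ∃ g ∈ C, g ≠ 1 ∧
      (wt (l * g * l⁻¹) : ℝ) ≤
        (n : ℝ) - (⌈(Real.sqrt (4 * n - 3) - 1) / 2⌉₊ : ℝ) := by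
  classical
  obtain ⟨k, hkdef⟩ : ∃ k : ℕ, k = ⌈(Real.sqrt (4 * n - 3) - 1) / 2⌉₊ := ⟨_, rfl⟩
  rw [← hkdef]
  -- commutativity of C
  have hcomm : ∀ a b : Equiv.Perm (Fin n), a ∈ C → b ∈ C → a * b = b * a := by
    obtain ⟨σ, hσ⟩ := hcyc.exists_generator
    intro a b ha hb
    obtain ⟨i, hi⟩ := hσ ⟨a, ha⟩
    obtain ⟨j, hj⟩ := hσ ⟨b, hb⟩
    have : (⟨a, ha⟩ : C) * ⟨b, hb⟩ = (⟨b, hb⟩ : C) * ⟨a, ha⟩ := by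
      rw [← hi, ← hj, ← zpow_add, ← zpow_add, add_comm]
    exact congrArg Subtype.val this
  -- stabilizers are trivial
  have hstab : ∀ g ∈ C, ∀ x : Fin n, g x = x → g = 1 := by
    intro g hg x hgx
    have hy : ∀ y, g y = y := by
      intro y
      obtain ⟨h, hh, hhx⟩ := htrans x y
      have hc := hcomm g h hg hh
      calc g y = g (h x) := by rw [hhx]
        _ = (g * h) x := rfl
        _ = (h * g) x := by rw [hc]
        _ = h (g x) := rfl
        _ = h x := by rw [hgx]
        _ = y := hhx
    exact Equiv.ext fun y => by simp [hy y]
  -- an element of C is determined by its value at any point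
  have hinj : ∀ g ∈ C, ∀ h ∈ C, ∀ x : Fin n, g x = h x → g = h := by
    intro g hg h hh x hx
    have hmem : h⁻¹ * g ∈ C := mul_mem (inv_mem hh) hg
    have h1 : (h⁻¹ * g) x = x := by
      simp [Equiv.Perm.mul_apply, hx]
    have h2 := hstab _ hmem x h1
    exact (inv_mul_eq_one.mp h2).symm
  -- cardinality of C is n
  let x0 : Fin n := ⟨0, by omega⟩
  have hbij : Function.Bijective (fun g : C => (g : Equiv.Perm (Fin n)) x0) := by
    constructor
    · intro g h hgh
      exact Subtype.ext (hinj _ g.2 _ h.2 x0 hgh)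
    · intro b
      obtain ⟨g, hg, hgb⟩ := htrans x0 b
      exact ⟨⟨g, hg⟩, hgb⟩
  have hcard : Fintype.card C = n := by
    have := Fintype.card_of_bijective hbij
    simpa using this
  -- arithmetic about k
  have h2n : (2:ℝ) ≤ (n:ℝ) := by exact_mod_cast hn
  have hsq : (0:ℝ) ≤ 4 * (n:ℝ) - 3 := by linarith
  have hsqrt1 : (1:ℝ) < Real.sqrt (4 * n - 3) := by
    rw [show (1:ℝ) = Real.sqrt 1 from Real.sqrt_one.symm]
    exact Real.sqrt_lt_sqrt (by norm_num) (by linarith)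
  have hk1 : 1 ≤ k := by
    rw [hkdef]
    exact Nat.ceil_pos.mpr (by linarith)
  have hk2 : k * k + 2 ≤ n + k := by
    have hx0 : (0:ℝ) ≤ (Real.sqrt (4 * n - 3) - 1) / 2 := by linarith
    have h1 : (k:ℝ) < (Real.sqrt (4 * n - 3) - 1) / 2 + 1 := by
      rw [hkdef]; exact Nat.ceil_lt_add_one hx0
    have h2 : (2 * (k:ℝ) - 1) < Real.sqrt (4 * n - 3) := by linarith
    have hnn : (0:ℝ) ≤ 2 * (k:ℝ) - 1 := by
      have : (1:ℝ) ≤ (k:ℝ) := by exact_mod_cast hk1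
      linarith
    have h3 : (2 * (k:ℝ) - 1) * (2 * (k:ℝ) - 1) < 4 * n - 3 := by
      have := mul_self_lt_mul_self hnn h2
      rwa [Real.mul_self_sqrt hsq] at this
    have h4 : 4 * (k * k) + 4 < 4 * n + 4 * k := by
      have : ((4 * (k * k) + 4 : ℕ) : ℝ) < ((4 * n + 4 * k : ℕ) : ℝ) := by
        push_cast
        nlinarith [h3]
      exact_mod_cast this
    omega
  have hsplit : ∀ m : ℕ, m * (m - 1) + m = m * m := by
    intro m
    cases m with
    | zero => rfl
    | succ j => simp [Nat.succ_sub_one]; ring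
  have hkn : k ≤ n := by
    rcases Nat.lt_or_ge k 2 with h | h
    · omega
    · have := hsplit k
      have hge : k ≤ k * (k - 1) := Nat.le_mul_of_pos_right k (by omega)
      omega
  have hk3 : k * (k - 1) + 2 ≤ n := by
    have := hsplit k
    omega
  -- translate the real inequality to ℕ
  have hcond : ∀ m : ℕ, ((m:ℝ) ≤ (n:ℝ) - (k:ℝ) ↔ m + k ≤ n) := by
    intro m
    rw [le_sub_iff_add_le, ← Nat.cast_add, Nat.cast_le]
  by_contra hcon
  push_neg at hcon
  -- every nontrivial element has a "bad" point
  have hbad : ∀ g : C, (g : Equiv.Perm (Fin n)) ≠ 1 →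
      ∃ i : Fin n, n + 1 ≤ ((((l * (g : Equiv.Perm (Fin n)) * l⁻¹) i : ℤ) - (i : ℤ)).natAbs) + k := by
    intro g hg
    have hlt' := hcon (g : Equiv.Perm (Fin n)) g.2 hg
    have hnk : ¬ (wt (l * (g : Equiv.Perm (Fin n)) * l⁻¹) + k ≤ n) := by
      intro hle
      have := (hcond (wt (l * (g : Equiv.Perm (Fin n)) * l⁻¹))).mpr hle
      linarith
    have hlt : n - k < wt (l * (g : Equiv.Perm (Fin n)) * l⁻¹) := by omega
    rw [wt, Finset.lt_sup_iff] at hlt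
    obtain ⟨i, _, hi⟩ := hlt
    exact ⟨i, by omega⟩
  have hkey : ∀ g : C, ∃ i : Fin n, (g : Equiv.Perm (Fin n)) ≠ 1 →
      n + 1 ≤ ((((l * (g : Equiv.Perm (Fin n)) * l⁻¹) i : ℤ) - (i : ℤ)).natAbs) + k := by
    intro g
    by_cases hg : (g : Equiv.Perm (Fin n)) = 1
    · exact ⟨x0, fun h => absurd hg h⟩
    · obtain ⟨i, hi⟩ := hbad g hg
      exact ⟨i, fun _ => hi⟩
  choose f hf using hkey
  set av : C → ℕ := fun g => (f g : ℕ) with hav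
  set bv : C → ℕ := fun g => ((l * (g : Equiv.Perm (Fin n)) * l⁻¹) (f g) : ℕ) with hbv
  set φ : C → (ℕ × ℕ) × Bool := fun g =>
    if av g < bv g then ((av g, n - 1 - bv g), true) else ((bv g, n - 1 - av g), false) with hφ
  set T : Finset (ℕ × ℕ) := (Finset.range (k - 1)).biUnion Finset.HasAntidiagonal.antidiagonal with hT
  set Bad : Finset C := Finset.univ.filter (fun g : C => (g : Equiv.Perm (Fin n)) ≠ 1) with hBad
  have hba : ∀ g ∈ Bad, n + 1 ≤ ((bv g : ℤ) - (av g : ℤ)).natAbs + k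
      ∧ av g < n ∧ bv g < n := by
    intro g hg
    have hg1 : (g : Equiv.Perm (Fin n)) ≠ 1 := by
      rw [hBad] at hg
      exact (Finset.mem_filter.mp hg).2
    have h1 := hf g hg1
    refine ⟨?_, (f g).isLt, Fin.isLt _⟩
    simpa [hav, hbv] using h1
  have hmaps : ∀ g ∈ Bad, φ g ∈ T ×ˢ (Finset.univ : Finset Bool) := by
    intro g hg
    obtain ⟨h1, h2, h3⟩ := hba g hg
    have hmem : ∀ x y : ℕ, x + y + 2 ≤ k → (x, y) ∈ T := by
      intro x y hxy
      rw [hT]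
      apply Finset.mem_biUnion.mpr
      exact ⟨x + y, Finset.mem_range.mpr (by omega), Finset.HasAntidiagonal.mem_antidiagonal.mpr rfl⟩
    simp only [hφ]
    by_cases hab : av g < bv g
    · rw [if_pos hab]
      exact Finset.mem_product.mpr ⟨hmem _ _ (by omega), Finset.mem_univ _⟩
    · rw [if_neg hab]
      exact Finset.mem_product.mpr ⟨hmem _ _ (by omega), Finset.mem_univ _⟩
  have hφinj : Set.InjOn φ Bad := by
    intro g₁ hg₁ g₂ hg₂ heq
    obtain ⟨h11, h12, h13⟩ := hba g₁ (by simpa using hg₁)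
    obtain ⟨h21, h22, h23⟩ := hba g₂ (by simpa using hg₂)
    have same : av g₁ = av g₂ ∧ bv g₁ = bv g₂ := by
      rw [hφ] at heq
      by_cases hab1 : av g₁ < bv g₁ <;> by_cases hab2 : av g₂ < bv g₂ <;>
          simp only [hab1, hab2, if_pos, if_neg, if_true, if_false, Prod.mk.injEq,
            Bool.true_eq_false, Bool.false_eq_true, and_false, false_and,
            reduceIte] at heq
      all_goals obtain ⟨⟨e1, e2⟩, -⟩ := heq
      all_goals exact ⟨by omega, by omega⟩
    have hfi : f g₁ = f g₂ := Fin.ext same.1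
    have himg : (l * (g₁ : Equiv.Perm (Fin n)) * l⁻¹) (f g₁)
        = (l * (g₂ : Equiv.Perm (Fin n)) * l⁻¹) (f g₂) := Fin.ext same.2
    rw [hfi] at himg
    have happ : (g₁ : Equiv.Perm (Fin n)) (l⁻¹ (f g₂))
        = (g₂ : Equiv.Perm (Fin n)) (l⁻¹ (f g₂)) := by
      have := congrArg (fun z => l⁻¹ z) himg
      simpa [Equiv.Perm.mul_apply] using this
    exact Subtype.ext (hinj _ g₁.2 _ g₂.2 _ happ)
  -- counting
  have hBadcard : Bad.card = n - 1 := by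
    have heq : Bad = Finset.univ.erase (1 : C) := by
      rw [hBad, ← Finset.filter_ne']
      apply Finset.filter_congr
      intro g _
      simp [OneMemClass.coe_eq_one]
    rw [heq, Finset.card_erase_of_mem (Finset.mem_univ _), Finset.card_univ, hcard]
  have hTcard : T.card * 2 ≤ k * (k - 1) := by
    have h1 : T.card ≤ ∑ m ∈ Finset.range (k - 1), (Finset.HasAntidiagonal.antidiagonal m).card := by
      rw [hT]; exact Finset.card_biUnion_le
    have h2 : ∑ m ∈ Finset.range (k - 1), (Finset.HasAntidiagonal.antidiagonal m).card
        = ∑ m ∈ Finset.range (k - 1), (m + 1) :=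
      Finset.sum_congr rfl fun m _ => Finset.Nat.card_antidiagonal m
    have h3 : ∑ m ∈ Finset.range (k - 1), (m + 1) = ∑ m ∈ Finset.range k, m := by
      have h := Finset.sum_range_succ' (fun i => i) (k - 1)
      rw [show k - 1 + 1 = k from by omega] at h
      simpa using h.symm
    have h4 := Finset.sum_range_id_mul_two k
    omega
  have hfinal : Bad.card ≤ T.card * 2 := by
    have := Finset.card_le_card_of_injOn φ hmaps hφinj
    rwa [Finset.card_product, Finset.card_univ, Fintype.card_bool] at this
  omega
end

section
/- For every n there exists a transitive cyclic subgroup C' ⊆ S_n (i.e., a relabeling of the transitive cyclic group) with minimal ℓ∞-distance d(C') ≥ n − ⌈(√(4n−3) − 1)/2⌉; combined with the upper bound, the optimal relabeling distance of a transitive cyclic group of order n is exactly n − ⌈(√(4n−3) − 1)/2⌉. -/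
private def Qf (k t : ℕ) : ℕ := ∑ j ∈ Finset.range (t+1), (k - j)

private lemma Qf_zero (k : ℕ) : Qf k 0 = k := by simp [Qf]

private lemma Qf_step (k t : ℕ) : Qf k (t+1) = Qf k t + (k - (t+1)) := by
  rw [Qf, Finset.sum_range_succ]; rfl

private lemma Qf_mono {k : ℕ} : ∀ {t t' : ℕ}, t < t' → t' ≤ k - 1 → Qf k t < Qf k t' := by
  intro t t' h h'
  induction t' with
  | zero => omega
  | succ s ih =>
    rcases Nat.lt_succ_iff_lt_or_eq.mp h with h1 | h1
    · have := ih h1 (by omega)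
      rw [Qf_step]; omega
    · subst h1; rw [Qf_step]; omega

private lemma Qf_top {k : ℕ} (hk : 1 ≤ k) : 2 * Qf k (k-1) = k * (k+1) := by
  have h1 : Qf k (k-1) = ∑ j ∈ Finset.range k, (k - j) := by
    rw [Qf, show k-1+1 = k by omega]
  have h2 : ∑ j ∈ Finset.range k, (k - (k - 1 - j)) = ∑ j ∈ Finset.range k, (k - j) :=
    Finset.sum_range_reflect (fun j => k - j) k
  have h3 : ∑ j ∈ Finset.range k, (k - (k - 1 - j)) = ∑ j ∈ Finset.range k, (j + 1) := by
    apply Finset.sum_congr rfl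
    intro j hj
    have := Finset.mem_range.mp hj
    omega
  have h4 : ∑ j ∈ Finset.range k, (j + 1) = (∑ j ∈ Finset.range k, j) + k := by
    rw [Finset.sum_add_distrib]; simp
  have h5 : (∑ j ∈ Finset.range k, j) * 2 = k * (k - 1) := Finset.sum_range_id_mul_two k
  have hkk : k * (k-1) + 2 * k = k * (k+1) := by
    cases k with
    | zero => simp
    | succ m => simp [Nat.succ_sub_one]; ring
  omega

private lemma Qf_cover {k : ℕ} (hk : 1 ≤ k) {m : ℕ} (h1 : 1 ≤ m) (h2 : m ≤ Qf k (k-1)) :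
    ∃ t a : ℕ, t ≤ k - 1 ∧ a + t + 1 ≤ k ∧ m + a = Qf k t := by
  have hex : ∃ t, m ≤ Qf k t := ⟨k - 1, h2⟩
  classical
  let t := Nat.find hex
  have ht : m ≤ Qf k t := Nat.find_spec hex
  have htle : t ≤ k - 1 := Nat.find_min' hex h2
  refine ⟨t, Qf k t - m, htle, ?_, by omega⟩
  cases h : t with
  | zero =>
    have : Qf k 0 = k := Qf_zero k
    rw [h] at ht; omega
  | succ s =>
    have hs : ¬ m ≤ Qf k s := Nat.find_min hex (by omega)
    have hstep : Qf k (s+1) = Qf k s + (k - (s+1)) := Qf_step k s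
    rw [h] at ht
    omega

private lemma exists_perm_eq {α : Type*} [Fintype α] [DecidableEq α] {ι : Type*} [Fintype ι]
    {u v : ι → α} (hu : Function.Injective u) (hv : Function.Injective v) :
    ∃ c : Equiv.Perm α, ∀ i, c (u i) = v i := by
  classical
  have h1 : Fintype.card (Set.range u) = Fintype.card (Set.range v) := by
    rw [Set.card_range_of_injective hu, Set.card_range_of_injective hv]
  have h2 : Fintype.card (↥(Set.range u)ᶜ) = Fintype.card (↥(Set.range v)ᶜ) := by
    rw [Fintype.card_compl_set, Fintype.card_compl_set, h1]
  obtain ⟨e3⟩ := Fintype.card_eq.mp h2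
  let e : Equiv.Perm α := (Equiv.Set.sumCompl (Set.range u)).symm.trans
    ((((Equiv.ofInjective u hu).symm.trans (Equiv.ofInjective v hv)).sumCongr e3).trans
      (Equiv.Set.sumCompl (Set.range v)))
  refine ⟨e, fun i => ?_⟩
  have hmem : u i ∈ Set.range u := ⟨i, rfl⟩
  have h5 : (Equiv.Set.sumCompl (Set.range u)).symm (u i) = Sum.inl ⟨u i, hmem⟩ := by
    exact Equiv.Set.sumCompl_symm_apply (x := ⟨u i, hmem⟩)
  simp only [e, Equiv.trans_apply, h5, Equiv.sumCongr_apply, Sum.map_inl]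
  have h6 : (Equiv.ofInjective u hu).symm ⟨u i, hmem⟩ = i := by
    apply hu
    simp [Equiv.apply_ofInjective_symm hu]
  rw [h6]
  simp [Equiv.ofInjective]

open Fin.NatCast in
private lemma finRotate_pow_apply {n : ℕ} (m : ℕ) (i : Fin (n+1)) :
    ((finRotate (n+1)) ^ m) i = i + (m : Fin (n+1)) := by
  induction m with
  | zero => simp
  | succ l ih =>
    rw [pow_succ', Equiv.Perm.mul_apply, ih, finRotate_succ_apply]
    push_cast
    rw [add_assoc]

open Fin.NatCast in
private lemma exists_good_cycle (n k : ℕ) (hn : 2 ≤ n) (hk1 : 1 ≤ k)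
    (hkk : n ≤ k * (k+1) + 1) (hkn : k * k + 2 ≤ n + k) :
    ∃ f : Equiv.Perm (Fin n), f.IsCycle ∧ f.support = Finset.univ ∧
      ∀ m : ℕ, 0 < m → m < n → n - k ≤ wt (f ^ m) := by
  classical
  -- basic numeric facts
  have h3k : 3 * k ≤ k * k + 2 := by
    rcases Nat.lt_or_ge k 3 with h | h
    · interval_cases k <;> omega
    · have := Nat.mul_le_mul_right k h
      omega
  have h2k : 2 * k ≤ n := by omega
  obtain ⟨K, hK⟩ : ∃ K, K = k * k := ⟨_, rfl⟩
  have hT' : 2 * Qf k (k-1) = K + k := by rw [Qf_top hk1, hK]; ring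
  have hkk' : n ≤ K + k + 1 := by rw [hK]; nlinarith [hkk]
  have hkn' : K + 2 ≤ n + k := by rw [hK]; exact hkn
  have hTn : Qf k (k-1) ≤ n - 1 := by omega
  have hn2T : n ≤ 2 * Qf k (k-1) + 1 := by omega
  have Qlt : ∀ t, t ≤ k - 1 → Qf k t < n := by
    intro t ht
    rcases Nat.lt_or_ge t (k-1) with h | h
    · have := Qf_mono h (le_refl _)
      omega
    · have : t = k - 1 := by omega
      rw [this]; omega
  have Qge : ∀ t, t ≤ k - 1 → k ≤ Qf k t := by
    intro t ht
    rcases Nat.eq_zero_or_pos t with h | h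
    · rw [h, Qf_zero]
    · have := Qf_mono (show 0 < t from h) ht
      rw [Qf_zero] at this; omega
  -- the two injections
  have hkn2 : k ≤ n := by omega
  set u : Fin k ⊕ Fin k → Fin n := fun x =>
    match x with
    | Sum.inl a => ⟨a.val, by omega⟩
    | Sum.inr t => ⟨Qf k t.val, Qlt t.val (by omega)⟩ with hu_def
  set v : Fin k ⊕ Fin k → Fin n := fun x =>
    match x with
    | Sum.inl a => ⟨a.val, by omega⟩
    | Sum.inr t => ⟨n - 1 - t.val, by omega⟩ with hv_def
  have hQinj : ∀ t t' : Fin k, Qf k t.val = Qf k t'.val → t = t' := by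
    intro t t' h
    have ht1 : t.val ≤ k - 1 := by have := t.isLt; omega
    have ht2 : t'.val ≤ k - 1 := by have := t'.isLt; omega
    apply Fin.ext
    by_contra hne
    rcases Nat.lt_or_ge t.val t'.val with hlt | hge
    · exact absurd h (Nat.ne_of_lt (Qf_mono hlt ht2))
    · have hlt : t'.val < t.val := by omega
      exact absurd h.symm (Nat.ne_of_lt (Qf_mono hlt ht1))
  have hu : Function.Injective u := by
    rintro (a | t) (a' | t') h <;> simp only [hu_def, Fin.mk.injEq] at h
    · exact congrArg Sum.inl (Fin.ext h)
    · exact absurd h (by have := Qge t'.val (by omega); omega)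
    · exact absurd h (by have := Qge t.val (by omega); omega)
    · exact congrArg Sum.inr (hQinj _ _ h)
  have hv : Function.Injective v := by
    rintro (a | t) (a' | t') h <;> simp only [hv_def, Fin.mk.injEq] at h
    · exact congrArg Sum.inl (Fin.ext h)
    · exact absurd h (by have := t'.isLt; omega)
    · exact absurd h (by have := t.isLt; omega)
    · exact congrArg Sum.inr (Fin.ext (by have := t.isLt; have := t'.isLt; omega))
  obtain ⟨c, hc⟩ := exists_perm_eq hu hv
  obtain ⟨n', rfl⟩ : ∃ n', n = n' + 1 := ⟨n - 1, by omega⟩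
  set r : Equiv.Perm (Fin (n'+1)) := finRotate (n'+1) with hr
  refine ⟨c * r * c⁻¹, (isCycle_finRotate_of_le hn).conj, ?_, ?_⟩
  · rw [Equiv.Perm.support_conj, support_finRotate_of_le hn, Finset.map_univ_equiv]
  intro m hm0 hmn
  have hpow : (c * r * c⁻¹) ^ m = c * r ^ m * c⁻¹ := conj_pow
  have key : ∀ x : Fin k ⊕ Fin k, ((c * r * c⁻¹) ^ m) (c (u x)) = c (u x + (m : Fin (n'+1))) := by
    intro x
    rw [hpow]
    simp only [Equiv.Perm.mul_apply]
    rw [Equiv.Perm.inv_def, Equiv.symm_apply_apply, hr, finRotate_pow_apply]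
  have hvalm : ((m : Fin (n'+1)) : ℕ) = m := by
    rw [Fin.val_natCast]; exact Nat.mod_eq_of_lt hmn
  rcases Nat.lt_or_ge (Qf k (k-1)) m with hcase | hcase
  · -- big m : use n - m
    obtain ⟨t, a, ht, hat, hQ⟩ := Qf_cover hk1 (show 1 ≤ n'+1 - m by omega)
      (show n'+1 - m ≤ Qf k (k-1) by omega)
    set A : Fin k := ⟨a, by omega⟩
    set T : Fin k := ⟨t, by omega⟩
    have hadd : u (Sum.inr T) + (m : Fin (n'+1)) = u (Sum.inl A) := by
      apply Fin.ext
      rw [Fin.val_add, hvalm]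
      show (Qf k t + m) % (n'+1) = a
      have h1 : Qf k t + m = a + (n'+1) := by omega
      rw [h1, Nat.add_mod_right]
      exact Nat.mod_eq_of_lt (by omega)
    have hval : ((c * r * c⁻¹) ^ m) (v (Sum.inr T)) = v (Sum.inl A) := by
      have h1 := key (Sum.inr T)
      rw [hadd] at h1
      exact (congrArg (⇑((c * r * c⁻¹) ^ m)) (hc (Sum.inr T))).symm.trans
        (h1.trans (hc (Sum.inl A)))
    calc n'+1 - k ≤ (((((c * r * c⁻¹) ^ m) (v (Sum.inr T)) : Fin (n'+1)) : ℤ)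
          - ((v (Sum.inr T) : Fin (n'+1)) : ℤ)).natAbs := by
          rw [hval]
          show n'+1 - k ≤ ((a : ℤ) - ((n'+1) - 1 - t : ℕ)).natAbs
          omega
      _ ≤ wt ((c * r * c⁻¹) ^ m) :=
          Finset.le_sup (f := fun i : Fin (n'+1) =>
            (((((c * r * c⁻¹) ^ m) i : Fin (n'+1)) : ℤ) - (i : ℤ)).natAbs)
            (Finset.mem_univ (v (Sum.inr T)))
  · -- small m
    obtain ⟨t, a, ht, hat, hQ⟩ := Qf_cover hk1 (show 1 ≤ m by omega) hcase
    set A : Fin k := ⟨a, by omega⟩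
    set T : Fin k := ⟨t, by omega⟩
    have hadd : u (Sum.inl A) + (m : Fin (n'+1)) = u (Sum.inr T) := by
      apply Fin.ext
      rw [Fin.val_add, hvalm]
      show (a + m) % (n'+1) = Qf k t
      rw [show a + m = Qf k t by omega]
      exact Nat.mod_eq_of_lt (Qlt t (by omega))
    have hval : ((c * r * c⁻¹) ^ m) (v (Sum.inl A)) = v (Sum.inr T) := by
      have h1 := key (Sum.inl A)
      rw [hadd] at h1
      exact (congrArg (⇑((c * r * c⁻¹) ^ m)) (hc (Sum.inl A))).symm.trans
        (h1.trans (hc (Sum.inr T)))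
    calc n'+1 - k ≤ (((((c * r * c⁻¹) ^ m) (v (Sum.inl A)) : Fin (n'+1)) : ℤ)
          - ((v (Sum.inl A) : Fin (n'+1)) : ℤ)).natAbs := by
          rw [hval]
          show n'+1 - k ≤ (((n'+1) - 1 - t : ℕ) - (a : ℤ)).natAbs
          omega
      _ ≤ wt ((c * r * c⁻¹) ^ m) :=
          Finset.le_sup (f := fun i : Fin (n'+1) =>
            (((((c * r * c⁻¹) ^ m) i : Fin (n'+1)) : ℤ) - (i : ℤ)).natAbs)
            (Finset.mem_univ (v (Sum.inl A)))



private lemma upper_bound (n k : ℕ) (hn : 2 ≤ n) (hk1 : 1 ≤ k) (hkn : k * k + 2 ≤ n + k)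
    (f : Equiv.Perm (Fin n)) (hf : f.IsCycle) (hs : f.support = Finset.univ) :
    ∃ m : ℕ, 0 < m ∧ m < n ∧ wt (f ^ m) ≤ n - k := by
  classical
  haveI : NeZero n := ⟨by omega⟩
  have horder : orderOf f = n := by
    rw [hf.orderOf, hs, Finset.card_univ, Fintype.card_fin]
  have hfix : ∀ d : ℕ, d < n → ∀ x : Fin n, (f ^ d) x = x → d = 0 := by
    intro d hd x hx
    have hmoves : f x ≠ x := by
      have : x ∈ f.support := by rw [hs]; exact Finset.mem_univ x
      exact Equiv.Perm.mem_support.mp this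
    have h1 : f ^ d = 1 := hf.pow_eq_one_iff.mpr ⟨x, hmoves, hx⟩
    have h2 := orderOf_dvd_of_pow_eq_one h1
    rw [horder] at h2
    exact Nat.eq_zero_of_dvd_of_lt h2 hd
  -- bad pairs
  set bad : Finset (Fin n × Fin n) :=
    Finset.univ.filter (fun p => n - k + 1 ≤ (((p.2 : Fin n) : ℤ) - ((p.1 : Fin n) : ℤ)).natAbs)
    with hbad_def
  -- count bad pairs
  set N : ℕ := k - 1 with hN
  set target : Finset (ℕ × ℕ) := (Finset.range N).biUnion (fun s => Finset.HasAntidiagonal.antidiagonal s)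
    with htarget
  have htmem : ∀ q : ℕ × ℕ, q ∈ target ↔ q.1 + q.2 < N := by
    intro q
    simp only [htarget, Finset.mem_biUnion, Finset.mem_range, Finset.HasAntidiagonal.mem_antidiagonal]
    constructor
    · rintro ⟨s, hs1, hs2⟩; omega
    · intro h; exact ⟨q.1 + q.2, h, rfl⟩
  have htcard : 2 * target.card ≤ k * (k - 1) := by
    have hdisj : ∀ s1 ∈ Finset.range N, ∀ s2 ∈ Finset.range N, s1 ≠ s2 →
        Disjoint (Finset.HasAntidiagonal.antidiagonal s1) (Finset.HasAntidiagonal.antidiagonal s2) := by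
      intro s1 _ s2 _ hne
      refine Finset.disjoint_left.mpr fun q hq1 hq2 => hne ?_
      rw [Finset.HasAntidiagonal.mem_antidiagonal] at hq1 hq2
      omega
    have h1 : target.card = ∑ s ∈ Finset.range N, (s + 1) := by
      rw [htarget, Finset.card_biUnion hdisj]
      exact Finset.sum_congr rfl fun s _ => Finset.Nat.card_antidiagonal s
    have h2 : ∑ s ∈ Finset.range N, (s + 1) = ∑ s ∈ Finset.range (N + 1), s := by
      rw [Finset.sum_range_succ']
      simp
    have h3 : (∑ s ∈ Finset.range (N + 1), s) * 2 = (N + 1) * N := by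
      rw [Finset.sum_range_id_mul_two]
      simp
    have hNk : N + 1 = k := by omega
    have h4 : 2 * target.card = (N + 1) * N := by rw [h1, h2, ← h3]; ring
    rw [hNk, hN] at h4
    omega
  have hbadcard : 2 * bad.card ≤ 2 * (k * (k - 1)) := by
    have hsplit := Finset.card_filter_add_card_filter_not
      (s := bad) (p := fun p => p.1.val < p.2.val)
    set badpos := bad.filter (fun p => p.1.val < p.2.val) with hbp
    set badneg := bad.filter (fun p => ¬ p.1.val < p.2.val) with hbn
    have hpos : badpos.card ≤ target.card := by
      apply Finset.card_le_card_of_injOn (fun p => (p.1.val, n - 1 - p.2.val))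
      · intro p hp
        rw [Finset.mem_coe, hbp, Finset.mem_filter, hbad_def, Finset.mem_filter] at hp
        rw [Finset.mem_coe, htmem]
        have h1 := p.1.isLt
        have h2 := p.2.isLt
        obtain ⟨⟨-, hineq⟩, hlt⟩ := hp
        simp only at hineq hlt ⊢
        omega
      · intro p hp q hq hpq
        have h2 := p.2.isLt
        have h2' := q.2.isLt
        simp only [Prod.mk.injEq] at hpq
        have hfst : p.1 = q.1 := Fin.ext hpq.1
        have hsnd : p.2 = q.2 := Fin.ext (by omega)
        exact Prod.ext hfst hsnd
    have hneg : badneg.card ≤ target.card := by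
      apply Finset.card_le_card_of_injOn (fun p => (p.2.val, n - 1 - p.1.val))
      · intro p hp
        rw [Finset.mem_coe, hbn, Finset.mem_filter, hbad_def, Finset.mem_filter] at hp
        rw [Finset.mem_coe, htmem]
        have h1 := p.1.isLt
        have h2 := p.2.isLt
        obtain ⟨⟨-, hineq⟩, hlt⟩ := hp
        simp only at hineq hlt ⊢
        omega
      · intro p hp q hq hpq
        have h2 := p.1.isLt
        have h2' := q.1.isLt
        simp only [Prod.mk.injEq] at hpq
        have hsnd : p.2 = q.2 := Fin.ext hpq.1
        have hfst : p.1 = q.1 := Fin.ext (by omega)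
        exact Prod.ext hfst hsnd
    omega
  have hbad2 : bad.card ≤ n - 2 := by
    have hkk : k * (k - 1) + k = k * k := by
      cases k with
      | zero => omega
      | succ m => simp [Nat.succ_sub_one]; ring
    omega
  -- the bad m's
  set badm : Finset ℕ := (Finset.Ico 1 n).filter (fun m => n - k + 1 ≤ wt (f ^ m)) with hbadm
  have hwit : ∀ m ∈ badm, ∃ i : Fin n, n - k + 1 ≤ (((f ^ m) i : ℤ) - (i : ℤ)).natAbs := by
    intro m hm
    rw [hbadm, Finset.mem_filter] at hm
    have := hm.2
    rw [wt] at this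
    obtain ⟨i, -, hi⟩ := (Finset.le_sup_iff (by omega : (0:ℕ) < n - k + 1)).mp this
    exact ⟨i, hi⟩
  set wfun : ℕ → Fin n := fun m =>
    if h : ∃ i : Fin n, n - k + 1 ≤ (((f ^ m) i : ℤ) - (i : ℤ)).natAbs then h.choose
    else 0 with hwfun
  have hbadmcard : badm.card ≤ bad.card := by
    apply Finset.card_le_card_of_injOn (fun m => (wfun m, (f ^ m) (wfun m)))
    · intro m hm
      obtain ⟨i, hi⟩ := hwit m hm
      have hx : ∃ i : Fin n, n - k + 1 ≤ (((f ^ m) i : ℤ) - (i : ℤ)).natAbs := ⟨i, hi⟩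
      have := hx.choose_spec
      rw [Finset.mem_coe, hbad_def, Finset.mem_filter]
      refine ⟨Finset.mem_univ _, ?_⟩
      simp only [hwfun, dif_pos hx]
      exact this
    · intro m1 hm1 m2 hm2 heq
      simp only [Prod.mk.injEq] at heq
      have hm1' : m1 ∈ badm := hm1
      have hm2' : m2 ∈ badm := hm2
      rw [hbadm, Finset.mem_filter, Finset.mem_Ico] at hm1' hm2'
      obtain ⟨⟨hm1a, hm1b⟩, -⟩ := hm1'
      obtain ⟨⟨hm2a, hm2b⟩, -⟩ := hm2'
      rcases Nat.le_or_le m1 m2 with h | h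
      · have hkey : (f ^ (m2 - m1)) ((f ^ m1) (wfun m1)) = (f ^ m1) (wfun m1) := by
          rw [← Equiv.Perm.mul_apply, ← pow_add, Nat.sub_add_cancel h]
          have e1 : (f ^ m2) (wfun m1) = (f ^ m2) (wfun m2) := by rw [heq.1]
          exact e1.trans heq.2.symm
        have := hfix (m2 - m1) (by omega) _ hkey
        omega
      · have hkey : (f ^ (m1 - m2)) ((f ^ m2) (wfun m2)) = (f ^ m2) (wfun m2) := by
          rw [← Equiv.Perm.mul_apply, ← pow_add, Nat.sub_add_cancel h]
          have e1 : (f ^ m1) (wfun m2) = (f ^ m1) (wfun m1) := by rw [heq.1]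
          exact e1.trans heq.2
        have := hfix (m1 - m2) (by omega) _ hkey
        omega
  have hico : (Finset.Ico 1 n).card = n - 1 := by rw [Nat.card_Ico]
  have hnotall : ∃ m ∈ Finset.Ico 1 n, m ∉ badm := by
    by_contra hcon
    push_neg at hcon
    have hsub : Finset.Ico 1 n ⊆ badm := fun m hm => hcon m hm
    have := Finset.card_le_card hsub
    omega
  obtain ⟨m, hm1, hm2⟩ := hnotall
  rw [Finset.mem_Ico] at hm1
  refine ⟨m, by omega, by omega, ?_⟩
  rw [hbadm, Finset.mem_filter] at hm2
  push_neg at hm2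
  have := hm2 (Finset.mem_Ico.mpr hm1)
  omega


private lemma K_facts (n : ℕ) (hn : 2 ≤ n) :
    1 ≤ ⌈(Real.sqrt (4 * n - 3) - 1) / 2⌉₊ ∧
    n ≤ ⌈(Real.sqrt (4 * n - 3) - 1) / 2⌉₊ * (⌈(Real.sqrt (4 * n - 3) - 1) / 2⌉₊ + 1) + 1 ∧
    ⌈(Real.sqrt (4 * n - 3) - 1) / 2⌉₊ * ⌈(Real.sqrt (4 * n - 3) - 1) / 2⌉₊ + 2
      ≤ n + ⌈(Real.sqrt (4 * n - 3) - 1) / 2⌉₊ := by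
  set y : ℝ := (Real.sqrt (4 * n - 3) - 1) / 2 with hy
  set k : ℕ := ⌈y⌉₊ with hk
  have h43 : (5 : ℝ) ≤ 4 * n - 3 := by
    have : (2 : ℝ) ≤ n := by exact_mod_cast hn
    linarith
  have hs2 : (2 : ℝ) < Real.sqrt (4 * n - 3) := by
    rw [show (2:ℝ) = Real.sqrt 4 by rw [show (4:ℝ) = 2^2 by norm_num, Real.sqrt_sq]; norm_num]
    exact Real.sqrt_lt_sqrt (by norm_num) (by linarith)
  have hypos : (0:ℝ) < y := by rw [hy]; linarith
  have hk1 : 1 ≤ k := by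
    rw [hk]; exact Nat.one_le_ceil_iff.mpr hypos
  have hle : y ≤ (k : ℝ) := Nat.le_ceil y
  have hlt : (k : ℝ) < y + 1 := Nat.ceil_lt_add_one hypos.le
  constructor
  · exact hk1
  have hsq : Real.sqrt (4 * n - 3) ≤ 2 * k + 1 := by rw [hy] at hle; linarith
  have h1 : (4 * n - 3 : ℝ) ≤ (2 * k + 1) ^ 2 := by
    have := (Real.sqrt_le_left (by positivity : (0:ℝ) ≤ 2 * k + 1)).mp hsq
    exact this
  have hfst : n ≤ k * (k + 1) + 1 := by
    have : (n : ℝ) ≤ k * (k + 1) + 1 := by nlinarith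
    exact_mod_cast this
  refine ⟨hfst, ?_⟩
  have hsq2 : 2 * (k : ℝ) - 1 < Real.sqrt (4 * n - 3) := by rw [hy] at hlt; linarith
  have h2 : (2 * (k:ℝ) - 1) ^ 2 < 4 * n - 3 := by
    rcases le_or_gt (2 * (k:ℝ) - 1) 0 with h | h
    · nlinarith [(by exact_mod_cast hk1 : (1:ℝ) ≤ (k:ℝ))]
    · exact (Real.lt_sqrt h.le).mp hsq2
  have h3 : (k:ℝ) * k + 1 < n + k := by nlinarith
  have h4 : k * k + 1 < n + k := by exact_mod_cast h3
  omega


/-- There is a transitive cyclic subgroup of `S_n` (generated by an `n`-cycle) whose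
minimal ℓ∞-distance is at least `n - ⌈(√(4n-3) - 1)/2⌉`; moreover this is optimal:
every subgroup generated by an `n`-cycle has minimal distance at most this bound. -/
theorem cyclic_group_optimal_labeling (n : ℕ) (hn : 2 ≤ n) :
    (∃ f : Equiv.Perm (Fin n), f.IsCycle ∧ f.support = Finset.univ ∧
      ∀ g ∈ Subgroup.zpowers f, g ≠ 1 →
        (n : ℝ) - (⌈(Real.sqrt (4 * n - 3) - 1) / 2⌉₊ : ℝ) ≤ (wt g : ℝ)) ∧
    (∀ f : Equiv.Perm (Fin n), f.IsCycle → f.support = Finset.univ →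
      ∃ g ∈ Subgroup.zpowers f, g ≠ 1 ∧
        (wt g : ℝ) ≤ (n : ℝ) - (⌈(Real.sqrt (4 * n - 3) - 1) / 2⌉₊ : ℝ)) := by
  obtain ⟨hk1, hkk, hkn⟩ := K_facts n hn
  set k : ℕ := ⌈(Real.sqrt (4 * n - 3) - 1) / 2⌉₊ with hkdef
  have hkle : k ≤ n := by
    by_contra h
    push_neg at h
    have h1 : k * (n + 1) ≤ k * k := Nat.mul_le_mul_left k (by omega)
    have h2 : k * (n + 1) = k * n + k := by ring
    have h3 : n ≤ k * n := Nat.le_mul_of_pos_left n (by omega)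
    omega
  have hcast : ((n - k : ℕ) : ℝ) = (n : ℝ) - (k : ℝ) := by
    push_cast [Nat.cast_sub hkle]
    ring
  constructor
  · -- lower bound construction
    obtain ⟨f, hfc, hfs, hbound⟩ := exists_good_cycle n k hn hk1 hkk hkn
    refine ⟨f, hfc, hfs, ?_⟩
    intro g hg hg1
    obtain ⟨z, hz⟩ := Subgroup.mem_zpowers_iff.mp hg
    have horder : orderOf f = n := by
      rw [hfc.orderOf, hfs, Finset.card_univ, Fintype.card_fin]
    have hnpos : (0 : ℤ) < (n : ℤ) := by exact_mod_cast (by omega : 0 < n)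
    have hmod1 : f ^ (z % (n : ℤ)) = g := by
      have h := zpow_mod_orderOf f z
      rw [horder] at h
      rw [h, hz]
    set m : ℕ := (z % (n : ℤ)).toNat with hm
    have h0 : (0 : ℤ) ≤ z % (n : ℤ) := Int.emod_nonneg z (by omega)
    have hlt : z % (n : ℤ) < n := Int.emod_lt_of_pos z hnpos
    have hmn : m < n := by omega
    have hgm : f ^ m = g := by
      rw [← hmod1, ← zpow_natCast]
      congr 1
      omega
    have hm0 : 0 < m := by
      rcases Nat.eq_zero_or_pos m with h | h
      · exfalso
        apply hg1
        rw [← hgm, h, pow_zero]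
      · exact h
    have := hbound m hm0 hmn
    rw [hgm] at this
    calc (n : ℝ) - (k : ℝ) = ((n - k : ℕ) : ℝ) := hcast.symm
      _ ≤ (wt g : ℝ) := by exact_mod_cast this
  · -- upper bound
    intro f hfc hfs
    obtain ⟨m, hm0, hmn, hwt⟩ := upper_bound n k hn hk1 hkn f hfc hfs
    have horder : orderOf f = n := by
      rw [hfc.orderOf, hfs, Finset.card_univ, Fintype.card_fin]
    refine ⟨f ^ m, ⟨(m : ℤ), by show f ^ (m:ℤ) = f ^ m; exact zpow_natCast f m⟩, ?_, ?_⟩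
    · intro h1
      have := orderOf_dvd_of_pow_eq_one h1
      rw [horder] at this
      have := Nat.eq_zero_of_dvd_of_lt this hmn
      omega
    · calc (wt (f ^ m) : ℝ) ≤ ((n - k : ℕ) : ℝ) := by exact_mod_cast hwt
        _ = (n : ℝ) - (k : ℝ) := hcast
end

section
/- Let p ≥ 3 be a prime and let AGL(p) = {x ↦ a x + b : a ∈ GF(p)*, b ∈ GF(p)} acting on {0,1,...,p−1} (identified with integers). Then the minimal ℓ∞-distance of AGL(p) equals (p−1)/2. -/
/-- The ℓ∞-weight of a permutation of `ZMod p`, using integer representatives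
in `{0, ..., p-1}`: `max_x |f x - x|`. -/
def wtZ (p : ℕ) [NeZero p] (f : Equiv.Perm (ZMod p)) : ℕ :=
  Finset.univ.sup fun x : ZMod p => (((f x).val : ℤ) - ((x).val : ℤ)).natAbs

/-- `f` is an affine permutation `x ↦ a x + b` with `a ≠ 0`, i.e. an element of `AGL(p)`. -/
def IsAffine (p : ℕ) (f : Equiv.Perm (ZMod p)) : Prop :=
  ∃ a b : ZMod p, a ≠ 0 ∧ ∀ x : ZMod p, f x = a * x + b

private lemma key_disj (p : ℕ) [NeZero p] (f : Equiv.Perm (ZMod p)) (x : ZMod p) (c : ℕ)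
    (hc : c < p) (h : f x - x = (c : ZMod p)) :
    ((((f x).val : ℤ) - (x.val : ℤ)) = c ∨ (((f x).val : ℤ) - (x.val : ℤ)) = c - p) := by
  have hcast : ((((f x).val : ℤ) - (x.val : ℤ) - c : ℤ) : ZMod p) = 0 := by
    push_cast
    rw [ZMod.natCast_val, ZMod.natCast_val, ZMod.cast_id, ZMod.cast_id, ← h]; ring
  have hdvd : (p : ℤ) ∣ ((f x).val : ℤ) - (x.val : ℤ) - c :=
    (ZMod.intCast_zmod_eq_zero_iff_dvd _ p).mp hcast
  have h1 : (f x).val < p := ZMod.val_lt _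
  have h2 : x.val < p := ZMod.val_lt _
  obtain ⟨k, hk⟩ := hdvd
  have hp0 : (0:ℤ) < p := by exact_mod_cast (NeZero.pos p)
  have hk1 : k < 1 := by nlinarith
  have hk2 : -2 < k := by nlinarith
  interval_cases k <;> omega

private lemma val_eq' (p : ℕ) [NeZero p] (a : ZMod p) : ((a.val : ℕ) : ZMod p) = a :=
  (ZMod.natCast_val a).trans (ZMod.cast_id p a)

/-- For any prime `p ≥ 3`, the minimal ℓ∞-distance of `AGL(p)` with its natural
labeling equals `(p-1)/2`. -/
theorem agl_natural_min_dist (p : ℕ) [NeZero p] (hp : p.Prime) (h3 : 3 ≤ p) :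
    (∀ f : Equiv.Perm (ZMod p), IsAffine p f → f ≠ 1 → (p - 1) / 2 ≤ wtZ p f) ∧
    (∃ f : Equiv.Perm (ZMod p), IsAffine p f ∧ f ≠ 1 ∧ wtZ p f = (p - 1) / 2) := by
  haveI := Fact.mk hp
  set m : ℕ := (p - 1) / 2 with hm
  have hpodd : p % 2 = 1 := Nat.odd_iff.mp (hp.odd_of_ne_two (by omega))
  have hpm : p = 2 * m + 1 := by omega
  have hmp : m < p := by omega
  constructor
  · -- lower bound
    rintro f ⟨a, b, ha, hf⟩ hne
    by_cases ha1 : a = 1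
    · -- translation case
      have hb : b ≠ 0 := by
        intro hb0
        apply hne
        ext x
        simp [hf, ha1, hb0]
      set c : ℕ := b.val with hc
      have hc1 : 1 ≤ c := by
        rcases Nat.eq_zero_or_pos c with h0 | h0
        · exact absurd ((ZMod.val_eq_zero b).mp h0) hb
        · exact h0
      have hcp : c < p := ZMod.val_lt b
      by_cases hcm : m ≤ c
      · -- use x = 0
        have hkey := key_disj p f 0 c hcp (by
          rw [hf, ha1, val_eq']; ring)
        have h0 : (0 : ZMod p).val = 0 := ZMod.val_zero
        rw [h0] at hkey
        have hfv : (f 0).val < p := ZMod.val_lt _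
        refine le_trans ?_ (Finset.le_sup (Finset.mem_univ (0 : ZMod p)))
        rw [h0]
        omega
      · -- use x = p - c
        set x : ZMod p := ((p - c : ℕ) : ZMod p) with hx
        have hxv : x.val = p - c := by
          rw [hx, ZMod.val_natCast, Nat.mod_eq_of_lt (by omega)]
        have hkey := key_disj p f x c hcp (by
          rw [hf, ha1, val_eq']; ring)
        rw [hxv] at hkey
        have hfv : (f x).val < p := ZMod.val_lt _
        refine le_trans ?_ (Finset.le_sup (Finset.mem_univ x))
        rw [hxv]
        omega
    · -- a ≠ 1 : pick x with f x - x = m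
      set x : ZMod p := (a - 1)⁻¹ * ((m : ZMod p) - b) with hx
      have hsub : a - 1 ≠ 0 := sub_ne_zero.mpr ha1
      have hfx : f x - x = (m : ZMod p) := by
        rw [hf]
        have : a * x + b - x = (a - 1) * x + b := by ring
        rw [this, hx, ← mul_assoc, mul_inv_cancel₀ hsub, one_mul]
        ring
      have hkey := key_disj p f x m hmp hfx
      have hfv : (f x).val < p := ZMod.val_lt _
      have hxv : x.val < p := ZMod.val_lt _
      refine le_trans ?_ (Finset.le_sup (Finset.mem_univ x))
      omega
  · -- witness: x ↦ 2x
    have h2 : (2 : ZMod p) ≠ 0 := by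
      intro h
      have : ((2:ℕ) : ZMod p) = 0 := by exact_mod_cast h
      have := (ZMod.natCast_eq_zero_iff 2 p).mp this
      have := Nat.le_of_dvd (by norm_num) this
      omega
    refine ⟨Equiv.mulLeft₀ 2 h2, ⟨2, 0, h2, fun x => by simp⟩, ?_, ?_⟩
    · intro h
      have h1 : (Equiv.mulLeft₀ (2 : ZMod p) h2) 1 = (1 : Equiv.Perm (ZMod p)) 1 := by rw [h]
      simp at h1
      have : ((1:ℕ) : ZMod p) = 0 := by
        push_cast
        linear_combination h1
      have := (ZMod.natCast_eq_zero_iff 1 p).mp this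
      have := Nat.le_of_dvd (by norm_num) this
      omega
    · have hval : ∀ x : ZMod p, ((Equiv.mulLeft₀ (2:ZMod p) h2) x).val = 2 * x.val % p := by
        intro x
        have : (Equiv.mulLeft₀ (2:ZMod p) h2) x = ((2 * x.val : ℕ) : ZMod p) := by
          show (2 : ZMod p) * x = _
          push_cast
          rw [val_eq']
        rw [this, ZMod.val_natCast]
      apply le_antisymm
      · apply Finset.sup_le
        intro x _
        rw [hval]
        have hxv : x.val < p := ZMod.val_lt x
        have hw : (2 * x.val < p ∧ 2 * x.val % p = 2 * x.val) ∨
            (p ≤ 2 * x.val ∧ 2 * x.val % p = 2 * x.val - p) := by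
          rcases lt_or_ge (2 * x.val) p with h | h
          · exact Or.inl ⟨h, Nat.mod_eq_of_lt h⟩
          · refine Or.inr ⟨h, ?_⟩
            rw [Nat.mod_eq_sub_mod h, Nat.mod_eq_of_lt (by omega)]
        omega
      · refine le_trans ?_ (Finset.le_sup (Finset.mem_univ ((m : ℕ) : ZMod p)))
        have hmv : ((m : ℕ) : ZMod p).val = m := by
          rw [ZMod.val_natCast, Nat.mod_eq_of_lt hmp]
        rw [hval, hmv, Nat.mod_eq_of_lt (by omega)]
        omega
end

section
/- For any prime p with 3 ≤ p < 8 (i.e., p ∈ {3,5,7}) and any l ∈ S_p, the conjugated group l · AGL(p) · l^{-1} has minimal ℓ∞-distance at most (p−1)/2; hence the optimal relabeling distance of AGL(p) equals (p−1)/2 for these primes. -/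
/-- Counting lemma: if the number of value pairs at distance `> m` is less than `p`,
then some involution shift `b` works for `l`. -/
lemma key_shift (p : ℕ) [NeZero p] (m : ℕ)
    (hT : ((Finset.univ : Finset (ZMod p × ZMod p)).filter
      (fun ac => ac.1.val + m < ac.2.val)).card < p)
    (l : Equiv.Perm (ZMod p)) :
    ∃ b : ZMod p, ∀ x : ZMod p,
      (((l (b - x)).val : ℤ) - ((l x).val : ℤ)).natAbs ≤ m := by
  by_contra h
  push_neg at h
  set S := ((Finset.univ : Finset (ZMod p × ZMod p)).filter
      (fun uv => (l uv.1).val + m < (l uv.2).val)) with hSdef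
  have hScard : S.card ≤ ((Finset.univ : Finset (ZMod p × ZMod p)).filter
      (fun ac => ac.1.val + m < ac.2.val)).card := by
    apply Finset.card_le_card_of_injOn (fun uv => (l uv.1, l uv.2))
    · intro uv huv
      simp only [hSdef, Finset.mem_coe, Finset.mem_filter, Finset.mem_univ, true_and] at huv ⊢
      exact huv
    · intro a _ b _ hab
      simp only [Prod.ext_iff] at hab ⊢
      exact ⟨l.injective hab.1, l.injective hab.2⟩
  have hBad : (Finset.univ : Finset (ZMod p)) ⊆ S.image (fun uv => uv.1 + uv.2) := by
    intro b _
    obtain ⟨x, hx⟩ := h b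
    have hcase : (l x).val + m < (l (b - x)).val ∨ (l (b - x)).val + m < (l x).val := by
      omega
    rcases hcase with hc | hc
    · refine Finset.mem_image.mpr ⟨(x, b - x), ?_, by ring⟩
      simp only [hSdef, Finset.mem_filter, Finset.mem_univ, true_and]
      exact hc
    · refine Finset.mem_image.mpr ⟨(b - x, x), ?_, by ring⟩
      simp only [hSdef, Finset.mem_filter, Finset.mem_univ, true_and]
      exact hc
  have h1 : (Finset.univ : Finset (ZMod p)).card = p := by
    simp [Finset.card_univ, ZMod.card]
  have h2 := Finset.card_le_card hBad
  have h3 := Finset.card_image_le (s := S) (f := fun uv : ZMod p × ZMod p => uv.1 + uv.2)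
  omega

lemma cnt3 : ((Finset.univ : Finset (ZMod 3 × ZMod 3)).filter
    (fun ac => ac.1.val + (3 - 1) / 2 < ac.2.val)).card < 3 := by decide

lemma cnt5 : ((Finset.univ : Finset (ZMod 5 × ZMod 5)).filter
    (fun ac => ac.1.val + (5 - 1) / 2 < ac.2.val)).card < 5 := by decide

lemma cnt7 : ((Finset.univ : Finset (ZMod 7 × ZMod 7)).filter
    (fun ac => ac.1.val + (7 - 1) / 2 < ac.2.val)).card < 7 := by decide

/-- For any prime `3 ≤ p < 8` and any labeling `l`, the conjugated group
`l AGL(p) l⁻¹` has minimal ℓ∞-distance at most `(p-1)/2`; hence the optimal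
relabeling distance of `AGL(p)` is `(p-1)/2` for these primes. -/
theorem agl_small_primes_optimal (p : ℕ) [NeZero p] (hp : p.Prime)
    (h3 : 3 ≤ p) (h8 : p < 8) (l : Equiv.Perm (ZMod p)) :
    ∃ f : Equiv.Perm (ZMod p), IsAffine p f ∧ f ≠ 1 ∧
      wtZ p (l * f * l⁻¹) ≤ (p - 1) / 2 := by
  haveI : Fact (1 < p) := ⟨by omega⟩
  have hT : ((Finset.univ : Finset (ZMod p × ZMod p)).filter
      (fun ac => ac.1.val + (p - 1) / 2 < ac.2.val)).card < p := by
    clear l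
    interval_cases p
    · exact cnt3
    · exact absurd hp (by norm_num)
    · exact cnt5
    · exact absurd hp (by norm_num)
    · exact cnt7
  obtain ⟨b, hb⟩ := key_shift p ((p - 1) / 2) hT l
  refine ⟨Equiv.subLeft b, ⟨-1, b, ?_, fun x => by simp [Equiv.subLeft]; ring⟩, ?_, ?_⟩
  · exact neg_ne_zero.mpr one_ne_zero
  · intro hf
    have h0 : (Equiv.subLeft b) 0 = 0 := by rw [hf]; rfl
    have h1 : (Equiv.subLeft b) 1 = 1 := by rw [hf]; rfl
    simp [Equiv.subLeft] at h0 h1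
    rw [h0] at h1
    have h2 : ((2 : ℕ) : ZMod p) = 0 := by push_cast; linear_combination -h1
    rw [ZMod.natCast_eq_zero_iff] at h2
    have := Nat.le_of_dvd (by norm_num) h2
    omega
  · apply Finset.sup_le
    intro x _
    have hx := hb (l⁻¹ x)
    have heq : (l * Equiv.subLeft b * l⁻¹) x = l (b - l⁻¹ x) := by
      simp [Equiv.Perm.mul_apply, Equiv.subLeft]
    have hlx : l (l⁻¹ x) = x := by
      simp
    rw [heq]
    rw [hlx] at hx
    exact hx
end

section
/- Let C ⊆ S_n be a subgroup acting on [n], and suppose A, B ⊆ [n] are disjoint sets such that for every f ∈ C, f ≠ ι, we have (f(A) ∩ B) ∪ (f(B) ∩ A) ≠ ∅ (i.e., A and B are C-neighboring sets). Then there exists a labeling l ∈ S_n with minimal ℓ∞-distance d(l C l^{-1}) ≥ n − (|A| + |B|) + 1. -/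
/-- If `A, B` are disjoint `C`-neighboring sets for a subgroup `C ≤ S_n`, then
some labeling `l` gives `l C l⁻¹` minimal ℓ∞-distance at least `n - (|A|+|B|) + 1`. -/
theorem neighboring_sets_lower_bound (n : ℕ) (C : Subgroup (Equiv.Perm (Fin n)))
    (A B : Finset (Fin n)) (hAB : Disjoint A B)
    (hnb : ∀ f : Equiv.Perm (Fin n), f ∈ C → f ≠ 1 →
      (∃ a ∈ A, f a ∈ B) ∨ (∃ b ∈ B, f b ∈ A)) :
    ∃ l : Equiv.Perm (Fin n), ∀ g ∈ C, g ≠ 1 →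
      n - (A.card + B.card) + 1 ≤ wt (l * g * l⁻¹) := by
  classical
  have hcard : A.card + B.card ≤ n := by
    have := Finset.card_le_card (Finset.subset_univ (A ∪ B))
    rwa [Finset.card_union_of_disjoint hAB, Finset.card_univ, Fintype.card_fin] at this
  set sA := A.sort (· ≤ ·) with hsA
  set M := (Finset.univ \ (A ∪ B)) with hM
  set sM := M.sort (· ≤ ·) with hsM
  set sB := B.sort (· ≤ ·) with hsB
  set L : List (Fin n) := sA ++ (sM ++ sB) with hL
  have hmemA : ∀ x, x ∈ sA ↔ x ∈ A := fun x => Finset.mem_sort _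
  have hmemM : ∀ x, x ∈ sM ↔ x ∈ M := fun x => Finset.mem_sort _
  have hmemB : ∀ x, x ∈ sB ↔ x ∈ B := fun x => Finset.mem_sort _
  have hnodup : L.Nodup := by
    refine List.Nodup.append (Finset.sort_nodup _ _) (List.Nodup.append (Finset.sort_nodup _ _) (Finset.sort_nodup _ _) ?_) ?_
    · intro x hx hy
      rw [hmemM] at hx; rw [hmemB] at hy
      simp [hM, Finset.mem_sdiff] at hx
      exact hx.2 hy
    · intro x hx hy
      rw [hmemA] at hx
      rcases List.mem_append.1 hy with h | h
      · rw [hmemM] at h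
        simp [hM, Finset.mem_sdiff] at h
        exact h.1 hx
      · rw [hmemB] at h
        exact (Finset.disjoint_left.1 hAB) hx h
  have hmem : ∀ x : Fin n, x ∈ L := by
    intro x
    by_cases hx : x ∈ A
    · exact List.mem_append.2 (Or.inl ((hmemA x).2 hx))
    by_cases hx' : x ∈ B
    · exact List.mem_append.2 (Or.inr (List.mem_append.2 (Or.inr ((hmemB x).2 hx'))))
    · refine List.mem_append.2 (Or.inr (List.mem_append.2 (Or.inl ((hmemM x).2 ?_))))
      simp [hM, Finset.mem_sdiff, hx, hx']
  have hMcard : M.card = n - (A.card + B.card) := by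
    rw [hM, Finset.card_sdiff_of_subset (Finset.subset_univ _), Finset.card_univ, Fintype.card_fin,
      Finset.card_union_of_disjoint hAB]
  have hlen : L.length = n := by
    simp [hL, hsA, hsM, hsB, Finset.length_sort, hMcard]
    omega
  set E := hnodup.getEquivOfForallMemList L hmem with hE
  set l : Equiv.Perm (Fin n) := E.symm.trans (finCongr hlen) with hl
  have hlval : ∀ x : Fin n, (l x : ℕ) = L.idxOf x := by
    intro x
    simp [hl, hE, List.Nodup.getEquivOfForallMemList]
  have hA : ∀ a ∈ A, (l a : ℕ) < A.card := by
    intro a ha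
    rw [hlval a, hL, List.idxOf_append_of_mem ((hmemA a).2 ha)]
    have := List.idxOf_lt_length_iff.2 ((hmemA a).2 ha)
    simpa [hsA, Finset.length_sort] using this
  have hB : ∀ b ∈ B, n - B.card ≤ (l b : ℕ) := by
    intro b hb
    have hbA : b ∉ sA := fun h => (Finset.disjoint_left.1 hAB) ((hmemA b).1 h) hb
    have hbM : b ∉ sM := by
      intro h
      have := (hmemM b).1 h
      simp [hM, Finset.mem_sdiff] at this
      exact this.2 hb
    rw [hlval b, hL, List.idxOf_append_of_notMem hbA, List.idxOf_append_of_notMem hbM]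
    have : sA.length + sM.length = n - B.card := by
      simp [hsA, hsM, Finset.length_sort, hMcard]; omega
    omega
  refine ⟨l, ?_⟩
  intro g hg hg1
  have key : ∃ i : Fin n, n - (A.card + B.card) + 1 ≤ (((l * g * l⁻¹) i : ℤ) - (i : ℤ)).natAbs := by
    rcases hnb g hg hg1 with ⟨a, ha, hga⟩ | ⟨b, hb, hgb⟩
    · refine ⟨l a, ?_⟩
      have h1 : ((l * g * l⁻¹) (l a)) = l (g a) := by
        simp [Equiv.Perm.mul_apply]
      rw [h1]
      have h2 := hA a ha
      have h3 := hB (g a) hga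
      have := Int.natAbs_sub_le ((l (g a) : ℤ)) ((l a : ℤ))
      omega
    · refine ⟨l b, ?_⟩
      have h1 : ((l * g * l⁻¹) (l b)) = l (g b) := by
        simp [Equiv.Perm.mul_apply]
      rw [h1]
      have h2 := hA (g b) hgb
      have h3 := hB b hb
      omega
  rcases key with ⟨i, hi⟩
  unfold wt
  exact le_trans hi (Finset.le_sup (f := fun j : Fin n => (((l * g * l⁻¹) j : ℤ) - (j : ℤ)).natAbs) (Finset.mem_univ i))
end

section
/- Let C ⊆ S_n be a subgroup and suppose there is a labeling l ∈ S_n with d(l C l^{-1}) = D ≥ n/2. Then there exist disjoint C-neighboring sets A, B ⊆ [n] with |A| + |B| ≤ 2(n − D); consequently O(C) ≤ 2(n − L_max(C)) whenever L_max(C) ≥ n/2. -/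
/-- If a subgroup `C ≤ S_n` has a labeling `l` with minimal ℓ∞-distance
`D ≥ n/2`, then there are disjoint `C`-neighboring sets `A, B` with
`|A| + |B| ≤ 2(n - D)`. -/
theorem labeling_gives_neighboring_sets (n : ℕ) (C : Subgroup (Equiv.Perm (Fin n)))
    (l : Equiv.Perm (Fin n)) (D : ℕ) (hD : n ≤ 2 * D)
    (hmin : ∀ g ∈ C, g ≠ 1 → D ≤ wt (l * g * l⁻¹))
    (hex : ∃ g ∈ C, g ≠ 1 ∧ wt (l * g * l⁻¹) = D) :
    ∃ A B : Finset (Fin n), Disjoint A B ∧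
      (∀ f : Equiv.Perm (Fin n), f ∈ C → f ≠ 1 →
        (∃ a ∈ A, f a ∈ B) ∨ (∃ b ∈ B, f b ∈ A)) ∧
      A.card + B.card ≤ 2 * (n - D) := by
  rcases Nat.eq_zero_or_pos n with hn | hn
  · subst hn
    refine ⟨∅, ∅, disjoint_bot_left, ?_, by simp⟩
    intro f _ hf1
    exact absurd (Subsingleton.elim f 1) hf1
  -- n > 0 : derive D < n from hex
  obtain ⟨g, hgC, hg1, hwt⟩ := hex
  have hDn : D < n := by
    rw [← hwt, wt]
    apply Finset.sup_lt_iff (by simpa using hn) |>.2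
    intro i _
    have h1 : ((l * g * l⁻¹) i : ℕ) < n := ((l * g * l⁻¹) i).isLt
    have h2 : (i : ℕ) < n := i.isLt
    omega
  refine ⟨Finset.univ.filter (fun j => (l j : ℕ) < n - D),
    Finset.univ.filter (fun j => D ≤ (l j : ℕ)), ?_, ?_, ?_⟩
  · rw [Finset.disjoint_left]
    intro j hjA hjB
    simp only [Finset.mem_filter] at hjA hjB
    omega
  · intro f hfC hf1
    have hle := hmin f hfC hf1
    obtain ⟨i, -, hi⟩ := Finset.exists_mem_eq_sup Finset.univ
      (Finset.univ_nonempty_iff.2 ⟨⟨0, hn⟩⟩) (fun i : Fin n => (((l * f * l⁻¹) i : ℤ) - (i : ℤ)).natAbs)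
    rw [wt, hi] at hle
    set j := l⁻¹ i with hj
    have hji : (l j : ℕ) = (i : ℕ) := by simp [hj]
    have hlf : (l * f * l⁻¹) i = l (f j) := by simp [hj, Equiv.Perm.mul_apply]
    rw [hlf] at hle
    have ha : (l (f j) : ℕ) < n := (l (f j)).isLt
    have hb : (l j : ℕ) < n := (l j).isLt
    rcases le_or_gt ((l j : ℕ) + D) ((l (f j) : ℕ)) with hc | hc
    · left
      exact ⟨j, by simp only [Finset.mem_filter, Finset.mem_univ, true_and]; omega,
        by simp only [Finset.mem_filter, Finset.mem_univ, true_and]; omega⟩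
    · right
      refine ⟨j, by simp only [Finset.mem_filter, Finset.mem_univ, true_and]; omega,
        by simp only [Finset.mem_filter, Finset.mem_univ, true_and]; omega⟩
  · have hA : (Finset.univ.filter (fun j => (l j : ℕ) < n - D)).card ≤ n - D := by
      have := Finset.card_le_card_of_injOn (fun j => (l j : ℕ))
        (s := Finset.univ.filter (fun j => (l j : ℕ) < n - D))
        (t := Finset.range (n - D))
        (by intro j hj; simp only [Finset.mem_coe, Finset.mem_filter] at hj; simpa using hj.2)
        (by intro x _ y _ hxy
            exact l.injective (Fin.val_injective hxy))
      simpa using this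
    have hB : (Finset.univ.filter (fun j => D ≤ (l j : ℕ))).card ≤ n - D := by
      have := Finset.card_le_card_of_injOn (fun j => (l j : ℕ) - D)
        (s := Finset.univ.filter (fun j => D ≤ (l j : ℕ)))
        (t := Finset.range (n - D))
        (by intro j hj; simp only [Finset.mem_coe, Finset.mem_filter] at hj
            have := (l j).isLt; simp only [Finset.mem_coe, Finset.mem_range]; omega)
        (by intro x hx y hy hxy
            simp only [Finset.mem_coe, Finset.mem_filter] at hx hy
            apply l.injective; apply Fin.val_injective
            simp only at hxy; omega)
      simpa using this
    omega
end

section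
/- For p ∈ {3, 5}, there do not exist AGL(p)-neighboring sets; i.e., O(AGL(p)) = ∞. More precisely, for any two disjoint nonempty sets A, B ⊆ {0,...,p−1}, there exists a non-identity f ∈ AGL(p) with f(A) ∩ B = ∅ and f(B) ∩ A = ∅. -/
/-- The affine permutation `x ↦ a x + b` as an `Equiv`. -/
def affEquiv (p : ℕ) [Fact p.Prime] (a b : ZMod p) (ha : a ≠ 0) :
    Equiv.Perm (ZMod p) where
  toFun x := a * x + b
  invFun x := a⁻¹ * (x - b)
  left_inv x := by field_simp; ring
  right_inv x := by field_simp; ring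

lemma key_s14 (p : ℕ) [Fact p.Prime] (A B : Finset (ZMod p)) (a b : ZMod p)
    (ha : a ≠ 0) (hne : a ≠ 1 ∨ b ≠ 0)
    (h1 : ∀ x ∈ A, a * x + b ∉ B) (h2 : ∀ x ∈ B, a * x + b ∉ A) :
    ∃ f : Equiv.Perm (ZMod p), IsAffine p f ∧ f ≠ 1 ∧
      (∀ x ∈ A, f x ∉ B) ∧ (∀ x ∈ B, f x ∉ A) := by
  refine ⟨affEquiv p a b ha, ⟨a, b, ha, fun x => rfl⟩, ?_, h1, h2⟩
  intro h
  have h0 : (affEquiv p a b ha) 0 = 0 := by rw [h]; rfl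
  have h1' : (affEquiv p a b ha) 1 = 1 := by rw [h]; rfl
  simp only [affEquiv, Equiv.coe_fn_mk, mul_zero, zero_add, mul_one] at h0 h1'
  rcases hne with hne | hne
  · exact hne (by rw [h0] at h1'; simpa using h1')
  · exact hne h0


lemma dec3 : ∀ A B : Finset (ZMod 3), Disjoint A B → A.Nonempty → B.Nonempty →
    ∃ a b : ZMod 3, a ≠ 0 ∧ (a ≠ 1 ∨ b ≠ 0) ∧
      (∀ x ∈ A, a * x + b ∉ B) ∧ (∀ x ∈ B, a * x + b ∉ A) := by decide

lemma dec5 : ∀ A B : Finset (ZMod 5), Disjoint A B → A.Nonempty → B.Nonempty →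
    ∃ a b : ZMod 5, a ≠ 0 ∧ (a ≠ 1 ∨ b ≠ 0) ∧
      (∀ x ∈ A, a * x + b ∉ B) ∧ (∀ x ∈ B, a * x + b ∉ A) := by decide

/-- For `p ∈ {3, 5}` there are no `AGL(p)`-neighboring sets: for any two disjoint
nonempty sets `A, B ⊆ GF(p)` there is a non-identity affine permutation `f` with
`f(A) ∩ B = ∅` and `f(B) ∩ A = ∅`. -/
theorem agl_three_five_no_neighboring_sets (p : ℕ) [NeZero p] (hp : p = 3 ∨ p = 5)
    (A B : Finset (ZMod p)) (hAB : Disjoint A B)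
    (hA : A.Nonempty) (hB : B.Nonempty) :
    ∃ f : Equiv.Perm (ZMod p), IsAffine p f ∧ f ≠ 1 ∧
      (∀ a ∈ A, f a ∉ B) ∧ (∀ b ∈ B, f b ∉ A) := by
  rcases hp with rfl | rfl
  · have : Fact (Nat.Prime 3) := ⟨by norm_num⟩
    have h : ∃ a b : ZMod 3, a ≠ 0 ∧ (a ≠ 1 ∨ b ≠ 0) ∧
        (∀ x ∈ A, a * x + b ∉ B) ∧ (∀ x ∈ B, a * x + b ∉ A) := dec3 A B hAB hA hB
    obtain ⟨a, b, ha, hne, h1, h2⟩ := h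
    exact key_s14 3 A B a b ha hne h1 h2
  · have : Fact (Nat.Prime 5) := ⟨by norm_num⟩
    have h : ∃ a b : ZMod 5, a ≠ 0 ∧ (a ≠ 1 ∨ b ≠ 0) ∧
        (∀ x ∈ A, a * x + b ∉ B) ∧ (∀ x ∈ B, a * x + b ∉ A) := dec5 A B hAB hA hB
    obtain ⟨a, b, ha, hne, h1, h2⟩ := h
    exact key_s14 5 A B a b ha hne h1 h2
end

section
/- For any prime p ≥ 7, if A, B ⊆ {0,...,p−1} are AGL(p)-neighboring sets, then |A| + |B| ≥ max{√(2(p−1)), 6}; in particular 2|A||B| ≥ p − 1. -/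
set_option linter.unusedSectionVars false


/-- affine condition in coordinates -/
def PP (p : ℕ) (A B : Finset (ZMod p)) : Prop :=
  ∀ a b : ZMod p, a ≠ 0 → ¬(a = 1 ∧ b = 0) →
    (∃ k ∈ A, a * k + b ∈ B) ∨ (∃ k ∈ B, a * k + b ∈ A)

theorem pp_of_hnb (p : ℕ) [NeZero p] (hp : p.Prime) (A B : Finset (ZMod p))
    (hnb : ∀ f : Equiv.Perm (ZMod p), IsAffine p f → f ≠ 1 →
      (∃ a ∈ A, f a ∈ B) ∨ (∃ b ∈ B, f b ∈ A)) : PP p A B := by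
  haveI : Fact p.Prime := ⟨hp⟩
  haveI : Fact (1 < p) := ⟨hp.one_lt⟩
  intro a b ha hab
  set f : Equiv.Perm (ZMod p) := (Equiv.mulLeft₀ a ha).trans (Equiv.addRight b) with hf
  have hfx : ∀ x, f x = a * x + b := fun x => rfl
  have haff : IsAffine p f := ⟨a, b, ha, hfx⟩
  have hne : f ≠ 1 := by
    intro h
    apply hab
    have h0 : f 0 = 0 := by rw [h]; rfl
    have h1 : f 1 = 1 := by rw [h]; rfl
    rw [hfx] at h0 h1
    simp at h0
    constructor
    · rw [h0] at h1; simpa using h1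
    · exact h0
  have := hnb f haff hne
  simpa only [hfx] using this

theorem pp_symm {p : ℕ} {A B : Finset (ZMod p)} (h : PP p A B) : PP p B A := by
  intro a b ha hab
  exact (h a b ha hab).symm

theorem aff_inj {p : ℕ} [Fact p.Prime] [NeZero p] {c : ZMod p} (d : ZMod p) (hc : c ≠ 0) :
    Function.Injective (fun u : ZMod p => c * u + d) := by
  intro u v h
  simp only [add_left_inj] at h
  exact mul_left_cancel₀ hc h

theorem pp_image {p : ℕ} [Fact p.Prime] [NeZero p] {A B : Finset (ZMod p)}
    (h : PP p A B) (c d : ZMod p) (hc : c ≠ 0) :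
    PP p (A.image fun u => c * u + d) (B.image fun u => c * u + d) := by
  intro a b ha hab
  have key : ∀ k m : ZMod p, a * k + (c⁻¹ * (a * d + b - d)) = m →
      a * (c * k + d) + b = c * m + d := by
    intro k m hkm
    have : c * (a * k + c⁻¹ * (a * d + b - d)) = c * m := by rw [hkm]
    rw [mul_add, ← mul_assoc c c⁻¹, mul_inv_cancel₀ hc, one_mul] at this
    ring_nf at this ⊢
    linear_combination this
  have hab' : ¬(a = 1 ∧ c⁻¹ * (a * d + b - d) = 0) := by
    rintro ⟨rfl, h0⟩
    apply hab
    refine ⟨rfl, ?_⟩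
    have := mul_eq_zero.mp h0
    rcases this with h1 | h1
    · exact absurd h1 (inv_ne_zero hc)
    · simpa using h1
  rcases h a _ ha hab' with ⟨k, hk, hm⟩ | ⟨k, hk, hm⟩
  · left
    refine ⟨c * k + d, Finset.mem_image_of_mem _ hk, ?_⟩
    rw [key k _ rfl]
    exact Finset.mem_image_of_mem _ hm
  · right
    refine ⟨c * k + d, Finset.mem_image_of_mem _ hk, ?_⟩
    rw [key k _ rfl]
    exact Finset.mem_image_of_mem _ hm

theorem card_bound {p : ℕ} [NeZero p] (hp1 : 1 < p) {A B : Finset (ZMod p)}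
    (h : PP p A B) : p - 1 ≤ 2 * A.card * B.card := by
  haveI : Fact (1 < p) := ⟨hp1⟩
  have hsub : (Finset.univ.filter (fun i : ZMod p => i ≠ 0)) ⊆
      ((A ×ˢ B) ∪ (B ×ˢ A)).image (fun km => km.2 - km.1) := by
    intro i hi
    have hi0 : i ≠ 0 := (Finset.mem_filter.mp hi).2
    rcases h 1 i one_ne_zero (by simp [hi0]) with ⟨k, hk, hm⟩ | ⟨k, hk, hm⟩
    · exact Finset.mem_image.mpr ⟨(k, 1 * k + i),
        Finset.mem_union_left _ (Finset.mem_product.mpr ⟨hk, hm⟩), by simp⟩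
    · exact Finset.mem_image.mpr ⟨(k, 1 * k + i),
        Finset.mem_union_right _ (Finset.mem_product.mpr ⟨hk, hm⟩), by simp⟩
  have h1 : (Finset.univ.filter (fun i : ZMod p => i ≠ 0)).card = p - 1 := by
    rw [Finset.filter_ne', Finset.card_erase_of_mem (Finset.mem_univ _)]
    simp [ZMod.card]
  calc p - 1 = (Finset.univ.filter (fun i : ZMod p => i ≠ 0)).card := h1.symm
    _ ≤ (((A ×ˢ B) ∪ (B ×ˢ A)).image (fun km => km.2 - km.1)).card :=
        Finset.card_le_card hsub
    _ ≤ ((A ×ˢ B) ∪ (B ×ˢ A)).card := Finset.card_image_le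
    _ ≤ (A ×ˢ B).card + (B ×ˢ A).card := Finset.card_union_le _ _
    _ = 2 * A.card * B.card := by
        rw [Finset.card_product, Finset.card_product]; ring

set_option maxRecDepth 40000
set_option maxHeartbeats 8000000
set_option synthInstance.maxSize 4000
set_option synthInstance.maxHeartbeats 2000000

theorem L71 : ∀ x y z : ZMod 7, x ≠ 0 → y ≠ 0 → z ≠ 0 →
    ∃ a b : ZMod 7, a ≠ 0 ∧ ¬(a = 1 ∧ b = 0) ∧
      (b ≠ x ∧ b ≠ y ∧ b ≠ z) ∧ a * x + b ≠ 0 ∧ a * y + b ≠ 0 ∧ a * z + b ≠ 0 := by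
  decide

theorem L72 : ∀ w x y z : ZMod 7, (w ≠ 0 ∧ x ≠ 0 ∧ y ≠ 0 ∧ z ≠ 0) →
    ∃ a b : ZMod 7, a ≠ 0 ∧ ¬(a = 1 ∧ b = 0) ∧
      (b ≠ w ∧ b ≠ x ∧ b ≠ y ∧ b ≠ z) ∧
      a * w + b ≠ 0 ∧ a * x + b ≠ 0 ∧ a * y + b ≠ 0 ∧ a * z + b ≠ 0 := by
  decide

theorem L73 : ∀ x y : ZMod 7, (x ≠ 0 ∧ x ≠ 1 ∧ y ≠ 0 ∧ y ≠ 1) →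
    ∃ a b : ZMod 7, a ≠ 0 ∧ ¬(a = 1 ∧ b = 0) ∧
      (b ≠ x ∧ b ≠ y) ∧ (a + b ≠ x ∧ a + b ≠ y) ∧
      (a * x + b ≠ 0 ∧ a * x + b ≠ 1) ∧ (a * y + b ≠ 0 ∧ a * y + b ≠ 1) := by
  decide

theorem L74 : ∀ x y z : ZMod 7, x ≠ 0 → x ≠ 1 → y ≠ 0 → y ≠ 1 → z ≠ 0 → z ≠ 1 →
    ∃ a b : ZMod 7, a ≠ 0 ∧ ¬(a = 1 ∧ b = 0) ∧
      (b ≠ x ∧ b ≠ y ∧ b ≠ z) ∧ (a + b ≠ x ∧ a + b ≠ y ∧ a + b ≠ z) ∧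
      (a * x + b ≠ 0 ∧ a * x + b ≠ 1) ∧ (a * y + b ≠ 0 ∧ a * y + b ≠ 1) ∧
      (a * z + b ≠ 0 ∧ a * z + b ≠ 1) := by
  decide

theorem L75 : ∀ x y z : ZMod 11, x ≠ 0 → x ≠ 1 → y ≠ 0 → y ≠ 1 → z ≠ 0 → z ≠ 1 →
    ∃ a b : ZMod 11, a ≠ 0 ∧ ¬(a = 1 ∧ b = 0) ∧
      (b ≠ x ∧ b ≠ y ∧ b ≠ z) ∧ (a + b ≠ x ∧ a + b ≠ y ∧ a + b ≠ z) ∧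
      (a * x + b ≠ 0 ∧ a * x + b ≠ 1) ∧ (a * y + b ≠ 0 ∧ a * y + b ≠ 1) ∧
      (a * z + b ≠ 0 ∧ a * z + b ≠ 1) := by
  decide

theorem L76 : ∀ x y z : ZMod 13, x ≠ 0 → x ≠ 1 → y ≠ 0 → y ≠ 1 → z ≠ 0 → z ≠ 1 →
    ∃ a b : ZMod 13, a ≠ 0 ∧ ¬(a = 1 ∧ b = 0) ∧
      (b ≠ x ∧ b ≠ y ∧ b ≠ z) ∧ (a + b ≠ x ∧ a + b ≠ y ∧ a + b ≠ z) ∧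
      (a * x + b ≠ 0 ∧ a * x + b ≠ 1) ∧ (a * y + b ≠ 0 ∧ a * y + b ≠ 1) ∧
      (a * z + b ≠ 0 ∧ a * z + b ≠ 1) := by
  decide



section helpers
variable {p : ℕ} [NeZero p] [Fact p.Prime]

theorem disj_image {A B : Finset (ZMod p)} (hd : Disjoint A B) {c : ZMod p}
    (d : ZMod p) (hc : c ≠ 0) :
    Disjoint (A.image fun u => c * u + d) (B.image fun u => c * u + d) := by
  have hinj : Function.Injective (fun u : ZMod p => c * u + d) := by
    intro u v h
    simp only [add_left_inj] at h
    exact mul_left_cancel₀ hc h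
  rw [Finset.disjoint_image hinj]
  exact hd

theorem card_image' {B : Finset (ZMod p)} {c : ZMod p} (d : ZMod p) (hc : c ≠ 0) :
    (B.image fun u => c * u + d).card = B.card := by
  apply Finset.card_image_of_injective
  intro u v h
  simp only [add_left_inj] at h
  exact mul_left_cancel₀ hc h

/-- normalize a 1-element set to {0} -/
theorem norm1 {A : Finset (ZMod p)} (hA : A.card = 1) :
    ∃ c d : ZMod p, c ≠ 0 ∧ (A.image fun u => c * u + d) = {0} := by
  obtain ⟨x, hx⟩ := Finset.card_eq_one.mp hA
  exact ⟨1, -x, one_ne_zero, by simp [hx]⟩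

/-- normalize a 2-element set to {0,1} -/
theorem norm2 {A : Finset (ZMod p)} (hA : A.card = 2) :
    ∃ c d : ZMod p, c ≠ 0 ∧ (A.image fun u => c * u + d) = {0, 1} := by
  obtain ⟨x, y, hxy, hx⟩ := Finset.card_eq_two.mp hA
  have hyx : y - x ≠ 0 := sub_ne_zero.mpr (Ne.symm hxy)
  refine ⟨(y - x)⁻¹, -((y - x)⁻¹ * x), inv_ne_zero hyx, ?_⟩
  have h1 : (y - x)⁻¹ * x + -((y - x)⁻¹ * x) = 0 := add_neg_cancel _
  have h2 : (y - x)⁻¹ * y + -((y - x)⁻¹ * x) = 1 := by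
    have := inv_mul_cancel₀ hyx
    linear_combination this
  rw [hx, Finset.image_insert, Finset.image_singleton]
  simp only [h1, h2]

theorem helper13 {A B : Finset (ZMod p)} (hd : Disjoint A B) (hP : PP p A B)
    (hA : A.card = 1) (hB : B.card = 3)
    (L : ∀ x y z : ZMod p, x ≠ 0 → y ≠ 0 → z ≠ 0 →
      ∃ a b : ZMod p, a ≠ 0 ∧ ¬(a = 1 ∧ b = 0) ∧
        (b ≠ x ∧ b ≠ y ∧ b ≠ z) ∧ a * x + b ≠ 0 ∧ a * y + b ≠ 0 ∧ a * z + b ≠ 0) :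
    False := by
  obtain ⟨c, d, hc, hA'⟩ := norm1 hA
  have hP' := pp_image hP c d hc
  have hd' := disj_image hd d hc
  rw [hA'] at hP' hd'
  have hB' : (B.image fun u => c * u + d).card = 3 := (card_image' d hc).trans hB
  obtain ⟨x, y, z, _, _, _, hBxyz⟩ := Finset.card_eq_three.mp hB'
  rw [hBxyz] at hP' hd'
  have hmem : ∀ u : ZMod p, u ∈ ({x, y, z} : Finset (ZMod p)) → u ≠ 0 := by
    intro u hu
    have := Finset.disjoint_right.mp hd' hu
    simpa using this
  have hx0 := hmem x (by simp)
  have hy0 := hmem y (by simp)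
  have hz0 := hmem z (by simp)
  obtain ⟨a, b, ha, hab, ⟨hb1, hb2, hb3⟩, hc1, hc2, hc3⟩ := L x y z hx0 hy0 hz0
  rcases hP' a b ha hab with ⟨k, hk, hm⟩ | ⟨k, hk, hm⟩
  · simp only [Finset.mem_singleton] at hk
    subst hk
    simp only [mul_zero, zero_add, Finset.mem_insert, Finset.mem_singleton] at hm
    tauto
  · simp only [Finset.mem_insert, Finset.mem_singleton] at hk hm
    rcases hk with rfl | rfl | rfl <;> tauto

theorem helper14 {A B : Finset (ZMod p)} (hd : Disjoint A B) (hP : PP p A B)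
    (hA : A.card = 1) (hB : B.card = 4)
    (L : ∀ w x y z : ZMod p, (w ≠ 0 ∧ x ≠ 0 ∧ y ≠ 0 ∧ z ≠ 0) →
      ∃ a b : ZMod p, a ≠ 0 ∧ ¬(a = 1 ∧ b = 0) ∧
        (b ≠ w ∧ b ≠ x ∧ b ≠ y ∧ b ≠ z) ∧
        a * w + b ≠ 0 ∧ a * x + b ≠ 0 ∧ a * y + b ≠ 0 ∧ a * z + b ≠ 0) :
    False := by
  obtain ⟨c, d, hc, hA'⟩ := norm1 hA
  have hP' := pp_image hP c d hc
  have hd' := disj_image hd d hc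
  rw [hA'] at hP' hd'
  have hB' : (B.image fun u => c * u + d).card = 4 := (card_image' d hc).trans hB
  obtain ⟨w, t, hwt, hins, ht3⟩ := Finset.card_eq_succ.mp hB'
  obtain ⟨x, y, z, _, _, _, htxyz⟩ := Finset.card_eq_three.mp ht3
  rw [← hins, htxyz] at hP' hd'
  have hmem : ∀ u : ZMod p, u ∈ (insert w {x, y, z} : Finset (ZMod p)) → u ≠ 0 := by
    intro u hu
    have := Finset.disjoint_right.mp hd' hu
    simpa using this
  have hw0 := hmem w (by simp)
  have hx0 := hmem x (by simp)
  have hy0 := hmem y (by simp)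
  have hz0 := hmem z (by simp)
  obtain ⟨a, b, ha, hab, ⟨hb1, hb2, hb3, hb4⟩, hc1, hc2, hc3, hc4⟩ :=
    L w x y z ⟨hw0, hx0, hy0, hz0⟩
  rcases hP' a b ha hab with ⟨k, hk, hm⟩ | ⟨k, hk, hm⟩
  · simp only [Finset.mem_singleton] at hk
    subst hk
    simp only [mul_zero, zero_add, Finset.mem_insert, Finset.mem_singleton] at hm
    tauto
  · simp only [Finset.mem_insert, Finset.mem_singleton] at hk hm
    rcases hk with rfl | rfl | rfl | rfl <;> tauto

theorem helper22 {A B : Finset (ZMod p)} (hd : Disjoint A B) (hP : PP p A B)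
    (hA : A.card = 2) (hB : B.card = 2)
    (L : ∀ x y : ZMod p, (x ≠ 0 ∧ x ≠ 1 ∧ y ≠ 0 ∧ y ≠ 1) →
      ∃ a b : ZMod p, a ≠ 0 ∧ ¬(a = 1 ∧ b = 0) ∧
        (b ≠ x ∧ b ≠ y) ∧ (a + b ≠ x ∧ a + b ≠ y) ∧
        (a * x + b ≠ 0 ∧ a * x + b ≠ 1) ∧ (a * y + b ≠ 0 ∧ a * y + b ≠ 1)) :
    False := by
  obtain ⟨c, d, hc, hA'⟩ := norm2 hA
  have hP' := pp_image hP c d hc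
  have hd' := disj_image hd d hc
  rw [hA'] at hP' hd'
  have hB' : (B.image fun u => c * u + d).card = 2 := (card_image' d hc).trans hB
  obtain ⟨x, y, hxy, hBxy⟩ := Finset.card_eq_two.mp hB'
  rw [hBxy] at hP' hd'
  have hmem : ∀ u : ZMod p, u ∈ ({x, y} : Finset (ZMod p)) → u ≠ 0 ∧ u ≠ 1 := by
    intro u hu
    have := Finset.disjoint_right.mp hd' hu
    simp only [Finset.mem_insert, Finset.mem_singleton] at this
    tauto
  obtain ⟨hx0, hx1⟩ := hmem x (by simp)
  obtain ⟨hy0, hy1⟩ := hmem y (by simp)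
  obtain ⟨a, b, ha, hab, ⟨hb1, hb2⟩, ⟨he1, he2⟩, ⟨hc1, hc2⟩, ⟨hd1, hd2⟩⟩ :=
    L x y ⟨hx0, hx1, hy0, hy1⟩
  rcases hP' a b ha hab with ⟨k, hk, hm⟩ | ⟨k, hk, hm⟩
  · simp only [Finset.mem_insert, Finset.mem_singleton] at hk hm
    rcases hk with rfl | rfl <;>
      simp only [mul_zero, zero_add, mul_one] at hm <;> tauto
  · simp only [Finset.mem_insert, Finset.mem_singleton] at hk hm
    rcases hk with rfl | rfl <;> tauto

theorem helper23 {A B : Finset (ZMod p)} (hd : Disjoint A B) (hP : PP p A B)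
    (hA : A.card = 2) (hB : B.card = 3)
    (L : ∀ x y z : ZMod p, x ≠ 0 → x ≠ 1 → y ≠ 0 → y ≠ 1 → z ≠ 0 → z ≠ 1 →
      ∃ a b : ZMod p, a ≠ 0 ∧ ¬(a = 1 ∧ b = 0) ∧
        (b ≠ x ∧ b ≠ y ∧ b ≠ z) ∧ (a + b ≠ x ∧ a + b ≠ y ∧ a + b ≠ z) ∧
        (a * x + b ≠ 0 ∧ a * x + b ≠ 1) ∧ (a * y + b ≠ 0 ∧ a * y + b ≠ 1) ∧
        (a * z + b ≠ 0 ∧ a * z + b ≠ 1)) :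
    False := by
  obtain ⟨c, d, hc, hA'⟩ := norm2 hA
  have hP' := pp_image hP c d hc
  have hd' := disj_image hd d hc
  rw [hA'] at hP' hd'
  have hB' : (B.image fun u => c * u + d).card = 3 := (card_image' d hc).trans hB
  obtain ⟨x, y, z, _, _, _, hBxyz⟩ := Finset.card_eq_three.mp hB'
  rw [hBxyz] at hP' hd'
  have hmem : ∀ u : ZMod p, u ∈ ({x, y, z} : Finset (ZMod p)) → u ≠ 0 ∧ u ≠ 1 := by
    intro u hu
    have := Finset.disjoint_right.mp hd' hu
    simp only [Finset.mem_insert, Finset.mem_singleton] at this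
    tauto
  obtain ⟨hx0, hx1⟩ := hmem x (by simp)
  obtain ⟨hy0, hy1⟩ := hmem y (by simp)
  obtain ⟨hz0, hz1⟩ := hmem z (by simp)
  obtain ⟨a, b, ha, hab, ⟨hb1, hb2, hb3⟩, ⟨he1, he2, he3⟩, ⟨hc1, hc2⟩, ⟨hd1, hd2⟩,
    ⟨hf1, hf2⟩⟩ := L x y z hx0 hx1 hy0 hy1 hz0 hz1
  rcases hP' a b ha hab with ⟨k, hk, hm⟩ | ⟨k, hk, hm⟩
  · simp only [Finset.mem_insert, Finset.mem_singleton] at hk hm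
    rcases hk with rfl | rfl <;>
      simp only [mul_zero, zero_add, mul_one] at hm <;> tauto
  · simp only [Finset.mem_insert, Finset.mem_singleton] at hk hm
    rcases hk with rfl | rfl | rfl <;> tauto

end helpers



theorem aux (p : ℕ) [NeZero p] (hp : p.Prime) (h7 : 7 ≤ p)
    (A B : Finset (ZMod p)) (hd : Disjoint A B) (hP : PP p A B)
    (hle : A.card ≤ B.card) (hs : A.card + B.card ≤ 5) : False := by
  haveI : Fact p.Prime := ⟨hp⟩
  have h2 : p - 1 ≤ 2 * A.card * B.card := card_bound hp.one_lt hP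
  have hA1 : 1 ≤ A.card := by
    rcases Nat.eq_zero_or_pos A.card with h0 | h0
    · rw [h0] at h2; simp at h2; omega
    · exact h0
  have hcases : (A.card = 1 ∧ (B.card = 1 ∨ B.card = 2 ∨ B.card = 3 ∨ B.card = 4)) ∨
      (A.card = 2 ∧ (B.card = 2 ∨ B.card = 3)) := by omega
  have h8 : p ≠ 8 := by rintro rfl; norm_num at hp
  have h9 : p ≠ 9 := by rintro rfl; norm_num at hp
  have h10 : p ≠ 10 := by rintro rfl; norm_num at hp
  have h12 : p ≠ 12 := by rintro rfl; norm_num at hp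
  rcases hcases with ⟨hA, hB | hB | hB | hB⟩ | ⟨hA, hB | hB⟩
  · rw [hA, hB] at h2; omega
  · rw [hA, hB] at h2; omega
  · have hp7 : p = 7 := by rw [hA, hB] at h2; omega
    subst hp7
    exact helper13 hd hP hA hB L71
  · have hp7 : p = 7 := by rw [hA, hB] at h2; omega
    subst hp7
    exact helper14 hd hP hA hB L72
  · have hp7 : p = 7 := by rw [hA, hB] at h2; omega
    subst hp7
    exact helper22 hd hP hA hB L73
  · have hp' : p = 7 ∨ p = 11 ∨ p = 13 := by rw [hA, hB] at h2; omega
    rcases hp' with rfl | rfl | rfl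
    · exact helper23 hd hP hA hB L74
    · exact helper23 hd hP hA hB L75
    · exact helper23 hd hP hA hB L76


/-- For any prime `p ≥ 7`, any `AGL(p)`-neighboring sets `A, B` satisfy
`|A| + |B| ≥ max {√(2(p-1)), 6}`, and in particular `2|A||B| ≥ p - 1`. -/
theorem agl_neighboring_sets_lower_bound (p : ℕ) [NeZero p] (hp : p.Prime) (h7 : 7 ≤ p)
    (A B : Finset (ZMod p)) (hAB : Disjoint A B)
    (hnb : ∀ f : Equiv.Perm (ZMod p), IsAffine p f → f ≠ 1 →
      (∃ a ∈ A, f a ∈ B) ∨ (∃ b ∈ B, f b ∈ A)) :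
    max (Real.sqrt (2 * (p - 1))) 6 ≤ (A.card : ℝ) + (B.card : ℝ) ∧
    p - 1 ≤ 2 * A.card * B.card := by
  haveI : Fact p.Prime := ⟨hp⟩
  have hP : PP p A B := pp_of_hnb p hp A B hnb
  have h2 : p - 1 ≤ 2 * A.card * B.card := card_bound hp.one_lt hP
  have h6 : 6 ≤ A.card + B.card := by
    by_contra h
    have hs : A.card + B.card ≤ 5 := by omega
    rcases le_total A.card B.card with hle | hle
    · exact aux p hp h7 A B hAB hP hle hs
    · exact aux p hp h7 B A hAB.symm (pp_symm hP) hle (by omega)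
  refine ⟨?_, h2⟩
  apply max_le
  · have hcast : ((p : ℝ) - 1) ≤ 2 * (A.card : ℝ) * (B.card : ℝ) := by
      have h1p : (1 : ℕ) ≤ p := by omega
      have := (Nat.cast_le (α := ℝ)).mpr h2
      rw [Nat.cast_sub h1p] at this
      push_cast at this ⊢
      linarith
    have hsq : 2 * ((p : ℝ) - 1) ≤ ((A.card : ℝ) + (B.card : ℝ)) ^ 2 := by
      nlinarith [sq_nonneg ((A.card : ℝ) - (B.card : ℝ))]
    calc Real.sqrt (2 * ((p : ℝ) - 1))
        ≤ Real.sqrt (((A.card : ℝ) + (B.card : ℝ)) ^ 2) := Real.sqrt_le_sqrt hsq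
      _ = (A.card : ℝ) + (B.card : ℝ) := Real.sqrt_sq (by positivity)
  · exact_mod_cast h6
end

section
/- Let f ∈ S_n be a single k-cycle (a_0, ..., a_{k-1}) with k = n, and randomly partition [n] into sets A, B, C where each element independently lies in A with probability p, in B with probability p, and in C with probability 1−2p, for 0 < p < 1/2. Then the probability that no index i satisfies (a_i ∈ A and a_{i+1 mod k} ∈ B) or (a_i ∈ B and a_{i+1 mod k} ∈ A) is at most (1 − p²/(1−p))^{k−1}. -/
open Finset

namespace SCNP

def w (p : ℝ) (c : Fin 3) : ℝ := if c = 0 then p else if c = 1 then p else 1 - 2 * p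

def ok (c c' : Fin 3) : Prop := ¬((c = 0 ∧ c' = 1) ∨ (c = 1 ∧ c' = 0))

instance (c c' : Fin 3) : Decidable (ok c c') := by unfold ok; infer_instance

def good {m : ℕ} (χ : Fin m → Fin 3) : Prop :=
  ∀ i : Fin m, ∀ h : i.1 + 1 < m, ok (χ i) (χ ⟨i.1 + 1, h⟩)

instance {m : ℕ} : DecidablePred (good (m := m)) := fun χ => by
  unfold good; infer_instance

noncomputable def V (p : ℝ) (m : ℕ) (c : Fin 3) : ℝ :=
  ∑ χ : Fin (m + 1) → Fin 3, if good χ ∧ χ 0 = c then ∏ i, w p (χ i) else 0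

lemma good_cons {m : ℕ} (c : Fin 3) (χ : Fin (m + 1) → Fin 3) :
    good (Fin.cons c χ : Fin (m + 2) → Fin 3) ↔ ok c (χ 0) ∧ good χ := by
  constructor
  · intro hg
    exact ⟨hg ⟨0, Nat.succ_pos (m + 1)⟩ (Nat.succ_lt_succ (Nat.succ_pos m)),
      fun i hi => hg ⟨i.1 + 1, Nat.lt_succ_of_lt hi⟩ (Nat.succ_lt_succ hi)⟩
  · rintro ⟨h1, h2⟩ ⟨j, hj⟩ hi
    match j, hj, hi with
    | 0, hj, hi => exact h1
    | Nat.succ j', hj, hi =>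
      exact h2 ⟨j', Nat.lt_of_succ_lt (Nat.lt_of_succ_lt_succ hi)⟩ (Nat.lt_of_succ_lt_succ hi)

lemma w_nonneg {p : ℝ} (hp0 : 0 < p) (hp2 : p < 1 / 2) (c : Fin 3) : 0 ≤ w p c := by
  unfold w; split
  · linarith
  · split <;> linarith

lemma V_zero (p : ℝ) (c : Fin 3) : V p 0 c = w p c := by
  rw [V]
  have := Fintype.sum_equiv (Equiv.funUnique (Fin 1) (Fin 3))
    (fun χ : Fin 1 → Fin 3 => if good χ ∧ χ 0 = c then ∏ i, w p (χ i) else 0)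
    (fun c' : Fin 3 => if c' = c then w p c' else 0)
    (fun χ => by
      have hg : good χ := fun i hi => absurd hi (by omega)
      simp [hg, Fin.prod_univ_one, Equiv.funUnique])
  rw [this, Finset.sum_ite_eq' Finset.univ c (w p)]
  simp

lemma V_succ (p : ℝ) (m : ℕ) (c : Fin 3) :
    V p (m + 1) c = w p c * ∑ c' : Fin 3, if ok c c' then V p m c' else 0 := by
  have hprod : ∀ (c₀ : Fin 3) (χ : Fin (m + 1) → Fin 3),
      ∏ i : Fin (m + 2), w p ((Fin.cons c₀ χ : Fin (m + 2) → Fin 3) i)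
        = w p c₀ * ∏ i : Fin (m + 1), w p (χ i) := by
    intro c₀ χ
    rw [Fin.prod_univ_succ]
    simp
  have step1 : V p (m + 1) c
      = ∑ x : Fin 3 × (Fin (m + 1) → Fin 3),
          if good (Fin.cons x.1 x.2 : Fin (m + 2) → Fin 3) ∧ x.1 = c
          then w p x.1 * ∏ i, w p (x.2 i) else 0 := by
    rw [V]
    refine (Fintype.sum_equiv (Fin.consEquiv (fun _ : Fin (m + 2) => Fin 3))
      _ _ (fun x => ?_)).symm
    show (if good (Fin.cons x.1 x.2 : Fin (m + 2) → Fin 3) ∧ x.1 = c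
          then w p x.1 * ∏ i, w p (x.2 i) else 0)
        = (if good (Fin.cons x.1 x.2 : Fin (m + 2) → Fin 3) ∧ x.1 = c
          then ∏ i : Fin (m + 2), w p ((Fin.cons x.1 x.2 : Fin (m + 2) → Fin 3) i) else 0)
    rw [hprod]
  rw [step1, Fintype.sum_prod_type]
  rw [Finset.sum_eq_single c (fun c₀ _ hne => by simp [hne]) (by simp)]
  have step2 : ∀ χ : Fin (m + 1) → Fin 3,
      (if good (Fin.cons c χ : Fin (m + 2) → Fin 3) ∧ c = c
        then w p c * ∏ i, w p (χ i) else 0)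
      = ∑ c' : Fin 3, if χ 0 = c'
          then (if ok c c' ∧ good χ then w p c * ∏ i, w p (χ i) else 0) else 0 := by
    intro χ
    rw [Finset.sum_ite_eq Finset.univ (χ 0)]
    simp [good_cons, and_comm]
  rw [Finset.sum_congr rfl (fun χ _ => step2 χ), Finset.sum_comm]
  rw [Finset.mul_sum]
  refine Finset.sum_congr rfl fun c' _ => ?_
  by_cases hok : ok c c'
  · rw [if_pos hok, V, Finset.mul_sum]
    refine Finset.sum_congr rfl fun χ _ => ?_
    by_cases h1 : χ 0 = c' <;> by_cases h2 : good χ <;> simp [h1, h2, hok]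
  · rw [if_neg hok]
    simp [hok]

lemma sum_V (p : ℝ) (m : ℕ) :
    ∑ c : Fin 3, V p m c
      = ∑ χ : Fin (m + 1) → Fin 3, if good χ then ∏ i, w p (χ i) else 0 := by
  simp only [V]
  rw [Finset.sum_comm]
  refine Finset.sum_congr rfl fun χ _ => ?_
  by_cases h : good χ
  · simp [h]
  · simp [h]

lemma V_bound (p : ℝ) (hp0 : 0 < p) (hp2 : p < 1 / 2) (m : ℕ) :
    (0 ≤ V p m 0 ∧ 0 ≤ V p m 1 ∧ 0 ≤ V p m 2) ∧
    p * V p m 2 ≤ (1 - 2 * p) * (V p m 0 + V p m 1) ∧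
    V p m 0 + V p m 1 + V p m 2 ≤ (1 - p ^ 2 / (1 - p)) ^ m := by
  have h1p : (0:ℝ) < 1 - p := by linarith
  have h2p : (0:ℝ) ≤ 1 - 2 * p := by linarith
  have hq0 : 0 ≤ 1 - p ^ 2 / (1 - p) := by
    rw [sub_nonneg, div_le_one h1p]; nlinarith
  induction m with
  | zero =>
    have e0 : V p 0 0 = p := by rw [V_zero]; rfl
    have e1 : V p 0 1 = p := by rw [V_zero]; rfl
    have e2 : V p 0 2 = 1 - 2 * p := by rw [V_zero]; rfl
    rw [e0, e1, e2, pow_zero]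
    refine ⟨⟨hp0.le, hp0.le, by linarith⟩, by nlinarith, by linarith⟩
  | succ m ih =>
    obtain ⟨⟨hx, hy, hz⟩, hinv, htot⟩ := ih
    have e0 : V p (m + 1) 0 = p * (V p m 0 + V p m 2) := by
      rw [V_succ, Fin.sum_univ_three]
      have o1 : ok 0 0 := by decide
      have o2 : ¬ ok 0 1 := by decide
      have o3 : ok 0 2 := by decide
      rw [if_pos o1, if_neg o2, if_pos o3, show w p 0 = p from rfl]
      ring
    have e1 : V p (m + 1) 1 = p * (V p m 1 + V p m 2) := by
      rw [V_succ, Fin.sum_univ_three]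
      have o1 : ¬ ok 1 0 := by decide
      have o2 : ok 1 1 := by decide
      have o3 : ok 1 2 := by decide
      rw [if_neg o1, if_pos o2, if_pos o3, show w p 1 = p from rfl]
      ring
    have e2 : V p (m + 1) 2 = (1 - 2 * p) * (V p m 0 + V p m 1 + V p m 2) := by
      rw [V_succ, Fin.sum_univ_three]
      have o1 : ok 2 0 := by decide
      have o2 : ok 2 1 := by decide
      have o3 : ok 2 2 := by decide
      rw [if_pos o1, if_pos o2, if_pos o3, show w p 2 = 1 - 2 * p from rfl]
    rw [e0, e1, e2]
    refine ⟨⟨by nlinarith, by nlinarith, by nlinarith⟩, by nlinarith [mul_nonneg (mul_nonneg h2p hp0.le) hz], ?_⟩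
    have hstep : p * (V p m 0 + V p m 2) + p * (V p m 1 + V p m 2) + (1 - 2 * p) * (V p m 0 + V p m 1 + V p m 2)
        ≤ (1 - p ^ 2 / (1 - p)) * (V p m 0 + V p m 1 + V p m 2) := by
      have hkey : ((1 - p ^ 2 / (1 - p)) * (V p m 0 + V p m 1 + V p m 2)
          - (p * (V p m 0 + V p m 2) + p * (V p m 1 + V p m 2) + (1 - 2 * p) * (V p m 0 + V p m 1 + V p m 2))) * (1 - p)
          = p * ((1 - 2 * p) * (V p m 0 + V p m 1) - p * V p m 2) := by
        field_simp
        ring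
      nlinarith [mul_nonneg hp0.le (sub_nonneg.mpr hinv), hkey, h1p]
    calc p * (V p m 0 + V p m 2) + p * (V p m 1 + V p m 2) + (1 - 2 * p) * (V p m 0 + V p m 1 + V p m 2)
        ≤ (1 - p ^ 2 / (1 - p)) * (V p m 0 + V p m 1 + V p m 2) := hstep
      _ ≤ (1 - p ^ 2 / (1 - p)) * (1 - p ^ 2 / (1 - p)) ^ m :=
          mul_le_mul_of_nonneg_left htot hq0
      _ = (1 - p ^ 2 / (1 - p)) ^ (m + 1) := by rw [pow_succ]; ring

end SCNP

/-- For a single `n`-cycle `(a 0, a 1, ..., a (n-1))` on `[n]` and an i.i.d. random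
3-coloring of `[n]` into parts `A` (color 0, prob. `p`), `B` (color 1, prob. `p`),
`C` (color 2, prob. `1-2p`), the probability that no cyclically consecutive pair
`(a i, a (i+1))` has one element in `A` and the other in `B` is at most
`(1 - p²/(1-p))^(n-1)`. -/
theorem single_cycle_neighboring_probability (n : ℕ) (hn : 0 < n)
    (a : Fin n ≃ Fin n) (p : ℝ) (hp0 : 0 < p) (hp2 : p < 1 / 2) :
    (∑ χ : Fin n → Fin 3,
      if (∀ i : Fin n,
            ¬((χ (a i) = 0 ∧ χ (a (i + ⟨1 % n, Nat.mod_lt 1 hn⟩)) = 1) ∨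
              (χ (a i) = 1 ∧ χ (a (i + ⟨1 % n, Nat.mod_lt 1 hn⟩)) = 0)))
      then ∏ i : Fin n, (if χ i = 0 then p else if χ i = 1 then p else 1 - 2 * p)
      else 0)
    ≤ (1 - p ^ 2 / (1 - p)) ^ (n - 1) := by
  obtain ⟨m, rfl⟩ : ∃ m, n = m + 1 := ⟨n - 1, by omega⟩
  simp only [Nat.add_sub_cancel]
  set o : Fin (m + 1) := ⟨1 % (m + 1), Nat.mod_lt 1 hn⟩ with ho
  have reindex : (∑ χ : Fin (m + 1) → Fin 3,
      if (∀ i : Fin (m + 1),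
            ¬((χ (a i) = 0 ∧ χ (a (i + o)) = 1) ∨
              (χ (a i) = 1 ∧ χ (a (i + o)) = 0)))
      then ∏ i, (if χ i = 0 then p else if χ i = 1 then p else 1 - 2 * p)
      else 0)
    = ∑ ψ : Fin (m + 1) → Fin 3,
      if (∀ i : Fin (m + 1),
            ¬((ψ i = 0 ∧ ψ (i + o) = 1) ∨ (ψ i = 1 ∧ ψ (i + o) = 0)))
      then ∏ i, SCNP.w p (ψ i) else 0 := by
    refine (Fintype.sum_equiv (Equiv.arrowCongr a (Equiv.refl (Fin 3)))
      _ _ (fun ψ => ?_)).symm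
    have hc : ∀ i, (Equiv.arrowCongr a (Equiv.refl (Fin 3))) ψ (a i) = ψ i := by
      intro i; simp [Equiv.arrowCongr]
    have hp : ∏ i, (if (Equiv.arrowCongr a (Equiv.refl (Fin 3))) ψ i = 0 then p
          else if (Equiv.arrowCongr a (Equiv.refl (Fin 3))) ψ i = 1 then p else 1 - 2 * p)
        = ∏ i, SCNP.w p (ψ i) := by
      rw [← a.symm.prod_comp (fun i => SCNP.w p (ψ i))]
      refine Finset.prod_congr rfl fun i _ => ?_
      simp [Equiv.arrowCongr, SCNP.w]
    rw [← hp]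
    congr 1
    refine propext (forall_congr' fun i => ?_)
    rw [hc i, hc (i + o)]
  rw [reindex]
  have mono : (∑ ψ : Fin (m + 1) → Fin 3,
      if (∀ i : Fin (m + 1),
            ¬((ψ i = 0 ∧ ψ (i + o) = 1) ∨ (ψ i = 1 ∧ ψ (i + o) = 0)))
      then ∏ i, SCNP.w p (ψ i) else 0)
    ≤ ∑ ψ : Fin (m + 1) → Fin 3, if SCNP.good ψ then ∏ i, SCNP.w p (ψ i) else 0 := by
    refine Finset.sum_le_sum fun ψ _ => ?_
    have hnn : 0 ≤ ∏ i, SCNP.w p (ψ i) :=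
      Finset.prod_nonneg fun i _ => SCNP.w_nonneg hp0 hp2 _
    by_cases hc : (∀ i : Fin (m + 1),
        ¬((ψ i = 0 ∧ ψ (i + o) = 1) ∨ (ψ i = 1 ∧ ψ (i + o) = 0)))
    · have hg : SCNP.good ψ := by
        intro i hi
        have heq : i + o = ⟨i.1 + 1, hi⟩ := by
          apply Fin.ext
          rw [Fin.add_def]
          show (i.1 + 1 % (m + 1)) % (m + 1) = i.1 + 1
          rw [Nat.mod_eq_of_lt (show 1 < m + 1 by omega),
            Nat.mod_eq_of_lt hi]
        have := hc i
        rw [heq] at this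
        exact this
      rw [if_pos hc, if_pos hg]
    · rw [if_neg hc]
      split
      · exact hnn
      · exact le_refl 0
  refine mono.trans ?_
  rw [← SCNP.sum_V]
  rw [Fin.sum_univ_three]
  exact (SCNP.V_bound p hp0 hp2 m).2.2
end

section
/- For every n ≥ 37, there exists a labeling l ∈ S_n such that the conjugated dihedral group l · D_n · l^{-1} has minimal ℓ∞-distance at least n − 2n·√(ln(2n+2)/(n/2−1)) − √(n·ln(2n+2)/2), i.e., n − O(√(n ln n)); moreover every labeling yields minimal distance at most n − ⌈(√(4n−3)−1)/2⌉. -/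
/-- The dihedral group of order `2n` in its natural labeling: the subgroup of `S_n`
generated by the `n`-cycle `i ↦ i+1` and the reflection `i ↦ n-1-i` (0-based). -/
def dihedralSubgroup (n : ℕ) : Subgroup (Equiv.Perm (Fin n)) :=
  Subgroup.closure {finRotate n, Fin.revPerm}



lemma rot_val {n : ℕ} (hn : 2 ≤ n) (i : Fin n) : (finRotate n i).val = (i.val + 1) % n := by
  obtain ⟨m, rfl⟩ : ∃ m, n = m + 1 := ⟨n-1, by omega⟩
  rw [finRotate_succ_apply, Fin.val_add]
  congr 1
  rw [Fin.val_one' (m+1), Nat.mod_eq_of_lt (by omega)]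

lemma rotpow_val {n : ℕ} (hn : 2 ≤ n) (k : ℕ) : ∀ i : Fin n,
    ((finRotate n ^ k) i).val = (i.val + k) % n := by
  induction k with
  | zero => intro i; simp [Nat.mod_eq_of_lt i.isLt]
  | succ k ih =>
    intro i
    rw [pow_succ, Equiv.Perm.mul_apply, ih, rot_val hn, Nat.mod_add_mod, Nat.add_assoc,
      Nat.add_comm 1 k]

lemma rev_val {n : ℕ} (i : Fin n) : (Fin.revPerm i).val = n - 1 - i.val := by
  simp [Fin.revPerm_apply, Fin.val_rev]; omega

lemma rotpow_n {n : ℕ} (hn : 2 ≤ n) : (finRotate n) ^ n = 1 := by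
  ext i
  rw [Equiv.Perm.coe_one, id_eq]
  have := rotpow_val hn n i
  rw [Nat.add_mod_right, Nat.mod_eq_of_lt i.isLt] at this
  exact congrArg Fin.val (Fin.ext this)

lemma rev_sq {n : ℕ} : (Fin.revPerm : Equiv.Perm (Fin n)) * Fin.revPerm = 1 := by
  ext i
  simp [Equiv.Perm.mul_apply, Fin.rev_rev]

lemma key_rel {n : ℕ} (hn : 2 ≤ n) :
    (Fin.revPerm : Equiv.Perm (Fin n)) * finRotate n * Fin.revPerm * finRotate n = 1 := by
  ext i
  simp only [Equiv.Perm.mul_apply, Equiv.Perm.coe_one, id_eq]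
  rw [rev_val, rot_val hn, rev_val, rot_val hn]
  rcases Nat.lt_or_ge (i.val + 1) n with h | h
  · rw [Nat.mod_eq_of_lt h]
    have h2 : n - 1 - (i.val + 1) + 1 < n := by omega
    rw [Nat.mod_eq_of_lt h2]
    omega
  · have hi : i.val = n - 1 := by have := i.isLt; omega
    have h0 : (i.val + 1) % n = 0 := by rw [hi, Nat.sub_add_cancel (by omega : 1 ≤ n)]; simp
    rw [h0]
    have h1 : (n - 1 - 0 + 1) % n = 0 := by
      rw [Nat.sub_zero, Nat.sub_add_cancel (by omega : 1 ≤ n)]; simp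
    rw [h1]
    omega




section
variable {n : ℕ}

private abbrev ρ (n : ℕ) : Equiv.Perm (Fin n) := finRotate n
private abbrev σ' (n : ℕ) : Equiv.Perm (Fin n) := Fin.revPerm

lemma pow_norm (hn : 2 ≤ n) (a : ℕ) : (ρ n)^a = (ρ n)^(a % n) := by
  conv_lhs => rw [← Nat.div_add_mod a n]
  rw [pow_add, pow_mul, rotpow_n hn, one_pow, one_mul]

lemma conj_rev (hn : 2 ≤ n) (b : ℕ) : σ' n * (ρ n)^b = (ρ n)^((n-1)*b) * σ' n := by
  have hinv : σ' n * ρ n * σ' n = (ρ n)^(n-1) := by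
    have h1 : (ρ n)^(n-1) * ρ n = 1 := by
      rw [← pow_succ, Nat.sub_add_cancel (by omega : 1 ≤ n), rotpow_n hn]
    have h2 := key_rel hn
    calc σ' n * ρ n * σ' n = σ' n * ρ n * σ' n * ρ n * (ρ n)⁻¹ := by group
    _ = (ρ n)⁻¹ := by rw [h2, one_mul]
    _ = (ρ n)^(n-1) := by
        rw [eq_comm, eq_inv_iff_mul_eq_one, h1]
  have h1 : σ' n * ρ n = (ρ n)^(n-1) * σ' n := by
    calc σ' n * ρ n = (σ' n * ρ n * σ' n) * σ' n := by rw [mul_assoc _ (σ' n) (σ' n), rev_sq, mul_one]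
    _ = (ρ n)^(n-1) * σ' n := by rw [hinv]
  induction b with
  | zero => simp
  | succ b ih =>
    calc σ' n * (ρ n)^(b+1) = (σ' n * (ρ n)^b) * ρ n := by rw [pow_succ, mul_assoc]
    _ = (ρ n)^((n-1)*b) * (σ' n * ρ n) := by rw [ih, mul_assoc]
    _ = (ρ n)^((n-1)*b) * ((ρ n)^(n-1) * σ' n) := by rw [h1]
    _ = (ρ n)^((n-1)*(b+1)) * σ' n := by
        have he : (n-1)*b + (n-1) = (n-1)*(b+1) := by ring
        rw [← mul_assoc, ← pow_add, he]
  
lemma dihedral_mem_cases (hn : 2 ≤ n) {g : Equiv.Perm (Fin n)} (hg : g ∈ dihedralSubgroup n) :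
    ∃ k < n, g = (ρ n)^k ∨ g = (ρ n)^k * σ' n := by
  induction hg using Subgroup.closure_induction with
  | mem x hx =>
    rcases hx with h | h
    · exact ⟨1 % n, Nat.mod_lt _ (by omega), Or.inl (by rw [h, ← pow_norm hn, pow_one])⟩
    · simp only [Set.mem_singleton_iff] at h
      exact ⟨0, by omega, Or.inr (by rw [h, pow_zero, one_mul])⟩
  | one => exact ⟨0, by omega, Or.inl (by rw [pow_zero])⟩
  | mul x y hx hy ihx ihy =>
    obtain ⟨a, ha, hxa⟩ := ihx
    obtain ⟨b, hb, hyb⟩ := ihy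
    rcases hxa with h1 | h1 <;> rcases hyb with h2 | h2
    · exact ⟨(a+b) % n, Nat.mod_lt _ (by omega),
        Or.inl (by rw [h1, h2, ← pow_add, pow_norm hn])⟩
    · exact ⟨(a+b) % n, Nat.mod_lt _ (by omega),
        Or.inr (by rw [h1, h2, ← mul_assoc, ← pow_add, pow_norm hn])⟩
    · refine ⟨(a + (n-1)*b) % n, Nat.mod_lt _ (by omega), Or.inr ?_⟩
      rw [h1, h2, mul_assoc, conj_rev hn, ← mul_assoc, ← pow_add, pow_norm hn]
    · refine ⟨(a + (n-1)*b) % n, Nat.mod_lt _ (by omega), Or.inl ?_⟩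
      rw [h1, h2]
      calc (ρ n)^a * σ' n * ((ρ n)^b * σ' n)
          = (ρ n)^a * (σ' n * (ρ n)^b) * σ' n := by group
        _ = (ρ n)^a * ((ρ n)^((n-1)*b) * σ' n) * σ' n := by rw [conj_rev hn]
        _ = (ρ n)^(a + (n-1)*b) * (σ' n * σ' n) := by rw [pow_add]; group
        _ = (ρ n)^((a + (n-1)*b) % n) := by rw [rev_sq, mul_one, ← pow_norm hn]
  | inv x hx ihx =>
    obtain ⟨a, ha, hxa⟩ := ihx
    rcases hxa with h1 | h1
    · refine ⟨((n-1)*a) % n, Nat.mod_lt _ (by omega), Or.inl ?_⟩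
      rw [h1, ← pow_norm hn, eq_comm, eq_inv_iff_mul_eq_one, ← pow_add]
      have h9 : n - 1 + 1 = n := by omega
      have : (n-1)*a + a = n * a := by
        calc (n-1)*a + a = ((n-1)+1)*a := by ring
        _ = n * a := by rw [h9]
      rw [this, pow_mul, rotpow_n hn, one_pow]
    · refine ⟨a, ha, Or.inr ?_⟩
      rw [h1, eq_comm, eq_inv_iff_mul_eq_one]
      calc (ρ n)^a * σ' n * ((ρ n)^a * σ' n)
          = (ρ n)^a * (σ' n * (ρ n)^a) * σ' n := by group
        _ = (ρ n)^a * ((ρ n)^((n-1)*a) * σ' n) * σ' n := by rw [conj_rev hn]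
        _ = (ρ n)^(a + (n-1)*a) * (σ' n * σ' n) := by rw [pow_add]; group
        _ = 1 := by
            rw [rev_sq, mul_one]
            have : a + (n-1)*a = n * a := by
              have : 1 ≤ n := by omega
              calc a + (n-1)*a = (1 + (n-1)) * a := by ring
              _ = n * a := by rw [Nat.add_sub_cancel' this]
            rw [this, pow_mul, rotpow_n hn, one_pow]
end


def dT (n : ℕ) : ℕ := min (Nat.sqrt n / 2 + 1) ((n-1)/10)
def dM (n : ℕ) : ℕ := (n-1)/(2 * dT n)
def dK (n : ℕ) : ℕ := (n + (2*dT n) - 1)/(2*dT n)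
def dO (n : ℕ) : ℕ := if n % 2 = 0 then n-1 else n-2
def dY (n : ℕ) : ℕ := 2*dK n*dT n - (4*dT n + 2)
def dW (n : ℕ) : ℕ := dO n - 2*dM n

section
variable {n : ℕ}

lemma hs6 (hn : 37 ≤ n) : 6 ≤ Nat.sqrt n := by
  rw [Nat.le_sqrt]; omega

lemma ht3 (hn : 37 ≤ n) : 3 ≤ dT n := by
  have h1 := hs6 hn
  apply le_min
  · omega
  · rw [Nat.le_div_iff_mul_le (by omega : 0 < 10)]; omega

lemma ht10 (hn : 37 ≤ n) : 10 * dT n ≤ n - 1 := by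
  have h := min_le_right (Nat.sqrt n / 2 + 1) ((n-1)/10)
  calc 10 * dT n ≤ 10 * ((n-1)/10) := by exact Nat.mul_le_mul_left _ h
  _ ≤ n - 1 := Nat.mul_div_le _ _

lemma htup (hn : 37 ≤ n) : 2 * dT n ≤ Nat.sqrt n + 2 := by
  have h := min_le_left (Nat.sqrt n / 2 + 1) ((n-1)/10)
  have : dT n ≤ Nat.sqrt n / 2 + 1 := h
  omega

lemma hMt (hn : 37 ≤ n) : 2 * dM n * dT n ≤ n - 1 := by
  have h : dM n * (2 * dT n) ≤ n - 1 := Nat.div_mul_le_self _ _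
  calc 2 * dM n * dT n = dM n * (2 * dT n) := by ring
  _ ≤ n - 1 := h

lemma hMt2 (hn : 37 ≤ n) : n - 1 < 2 * dM n * dT n + 2 * dT n := by
  have ht := ht3 hn
  have hpos : 0 < 2 * dT n := by omega
  have h := Nat.div_add_mod (n-1) (2*dT n)
  have hm : (n-1) % (2*dT n) < 2*dT n := Nat.mod_lt _ hpos
  have hdM : (n-1)/(2*dT n) = dM n := rfl
  rw [hdM] at h
  have he : 2 * dT n * dM n = 2 * dM n * dT n := by ring
  linarith

lemma hKl (hn : 37 ≤ n) : n ≤ 2 * dK n * dT n := by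
  have ht := ht3 hn
  have hpos : 0 < 2 * dT n := by omega
  have h := Nat.div_add_mod (n + 2*dT n - 1) (2*dT n)
  have hm : (n + 2*dT n - 1) % (2*dT n) < 2*dT n := Nat.mod_lt _ hpos
  have h2 : (n + 2*dT n - 1) / (2*dT n) = dK n := rfl
  rw [h2] at h
  have hsub : n + 2*dT n - 1 + 1 = n + 2*dT n := by omega
  have he : 2 * dT n * dK n = 2 * dK n * dT n := by ring
  linarith

lemma hKu (hn : 37 ≤ n) : 2 * dK n * dT n ≤ n + 2 * dT n - 1 := by
  have ht := ht3 hn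
  have h : dK n * (2 * dT n) ≤ n + 2*dT n - 1 := Nat.div_mul_le_self _ _
  calc 2 * dK n * dT n = dK n * (2 * dT n) := by ring
  _ ≤ _ := h

lemma hK6 (hn : 37 ≤ n) : 6 ≤ dK n := by
  have ht := ht3 hn
  have h10 := ht10 hn
  rw [dK, Nat.le_div_iff_mul_le (by omega : 0 < 2 * dT n)]
  omega

lemma h12K (hn : 37 ≤ n) : 12 * dT n ≤ 2 * dK n * dT n := by
  have h := hK6 hn
  calc 12 * dT n = 2 * 6 * dT n := by ring
  _ ≤ 2 * dK n * dT n := by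
      apply Nat.mul_le_mul_right
      omega

lemma hKM (hn : 37 ≤ n) : dK n ≤ dM n + 1 := by
  have ht := ht3 hn
  have h1 := hKu hn
  have h2 := hMt2 hn
  by_contra h
  push_neg at h
  have : dM n + 2 ≤ dK n := by omega
  have : 2 * (dM n + 2) * dT n ≤ 2 * dK n * dT n :=
    Nat.mul_le_mul_right _ (by omega)
  have hx : 2 * (dM n + 2) * dT n = 2 * dM n * dT n + 4 * dT n := by ring
  omega

lemma hO (hn : 37 ≤ n) : n - 2 ≤ dO n ∧ dO n ≤ n - 1 ∧ dO n % 2 = 1 := by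
  rw [dO]; split_ifs with h <;> omega

lemma hMs (hn : 37 ≤ n) : dM n ≤ Nat.sqrt n := by
  have hs := hs6 hn
  have hsq : n < (Nat.sqrt n + 1) * (Nat.sqrt n + 1) := Nat.lt_succ_sqrt n
  by_cases h : Nat.sqrt n + 1 ≤ 2 * dT n
  · -- M * (s+1) ≤ M * 2t ≤ n-1 < (s+1)^2 so M ≤ s
    have h1 := hMt hn
    by_contra hc
    push_neg at hc
    have h2 : (Nat.sqrt n + 1) * (Nat.sqrt n + 1) ≤ dM n * (Nat.sqrt n + 1) :=
      Nat.mul_le_mul_right _ (by omega)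
    have h3 : dM n * (Nat.sqrt n + 1) ≤ dM n * (2 * dT n) := Nat.mul_le_mul_left _ h
    have h4 : dM n * (2 * dT n) = 2 * dM n * dT n := by ring
    omega
  · -- 2t ≤ s, so dT n = (n-1)/10 and M ≤ 6 ≤ s
    push_neg at h
    have hd : dT n = (n-1)/10 := by
      rw [dT, Nat.min_def]
      split_ifs with hif
      · exfalso
        have : 2 * dT n = 2 * min (Nat.sqrt n / 2 + 1) ((n-1)/10) := rfl
        rw [min_eq_left hif] at this
        omega
      · rfl
    -- 14 * dT n > n - 1
    have h14 : n - 1 < 14 * dT n := by rw [hd]; omega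
    have ht := ht3 hn
    -- M ≤ 6
    have hM6 : dM n ≤ 6 := by
      by_contra hc
      push_neg at hc
      have : 2 * 7 * dT n ≤ 2 * dM n * dT n := Nat.mul_le_mul_right _ (by omega)
      have h1 := hMt hn
      omega
    omega

lemma hbig (hn : 37 ≤ n) : 6 * dT n + 2 * dM n + 2 ≤ n := by
  have ht := ht3 hn
  have h10 := ht10 hn
  have h1 := hMt hn
  rcases le_or_gt (dT n) 4 with h | h
  · -- t = 3 or 4 : from 2*M*t ≤ n-1
    have h4 : dT n = 3 ∨ dT n = 4 := by omega
    rcases h4 with h4 | h4 <;> rw [h4] at h1 ⊢ <;> omega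
  · -- t ≥ 5 : multiply out
    have hzn : (10 * (dT n : ℤ) + 1) ≤ (n : ℤ) := by exact_mod_cast (by omega : 10 * dT n + 1 ≤ n)
    have hzm : 2 * (dM n : ℤ) * (dT n : ℤ) ≤ (n : ℤ) - 1 := by
      have : (2 * dM n * dT n : ℤ) ≤ ((n : ℤ) - 1) := by
        have h2 : ((2 * dM n * dT n : ℕ) : ℤ) ≤ ((n - 1 : ℕ) : ℤ) := by exact_mod_cast h1
        have h3 : ((n - 1 : ℕ) : ℤ) = (n : ℤ) - 1 := by
          have : 1 ≤ n := by omega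
          omega
        rw [h3] at h2
        exact_mod_cast h2
      exact_mod_cast this
    have hzt : (5 : ℤ) ≤ (dT n : ℤ) := by exact_mod_cast h
    have goalz : 6 * (dT n : ℤ) + 2 * (dM n : ℤ) + 2 ≤ (n : ℤ) := by
      nlinarith [mul_le_mul_of_nonneg_right hzn (by linarith : (0:ℤ) ≤ (dT n : ℤ) - 1),
        mul_pos (show (0:ℤ) < 2 by norm_num) (show (0:ℤ) < (dT n:ℤ) by linarith)]
    exact_mod_cast goalz
end


def dfun (n t M o y w : ℕ) (i : ℕ) : ℕ :=
  if 2*t+1 ≤ i ∧ i ≤ 4*t-1 then i + 2*t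
  else if 4*t+1 ≤ i ∧ i ≤ 6*t-1 then i - 2*t
  else if i % (2*t) = 0 ∧ 2*t ≤ i ∧ i < n then o + 2 - i / t
  else if i % 2 = o % 2 ∧ o + 2 ≤ i + 2*M ∧ i ≤ o then (o + 2 - i) * t
  else if i = y then w
  else if i = w then y
  else i

structure Facts (n t M K o y w : ℕ) : Prop where
  hn : 37 ≤ n
  ht : 3 ≤ t
  h10 : 10*t + 1 ≤ n
  hMt : 2*M*t + 1 ≤ n
  hMt2 : n ≤ 2*M*t + 2*t
  hKl : n ≤ 2*K*t
  hKu : 2*K*t + 1 ≤ n + 2*t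
  hK6 : 6 ≤ K
  h12K : 12*t ≤ 2*K*t
  hKt : 2*(K*t) = 2*K*t
  ho2 : o % 2 = 1
  hol : n ≤ o + 2
  hou : o + 1 ≤ n
  hbig : 6*t + 2*M + 2 ≤ n
  hy : y + (4*t + 2) = 2*K*t
  hw : w + 2*M = o

namespace Facts
variable {n t M K o y w : ℕ} (F : Facts n t M K o y w)
include F

lemma hyl : 8*t ≤ y + 2 := by have h1 := F.h12K; have h2 := F.hy; omega
lemma hyu : y + 2*t + 3 ≤ n := by have h1 := F.hKu; have h2 := F.hy; omega
lemma hy2 : y % 2 = 0 := by have h1 := F.hKt; have h2 := F.hy; omega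
lemma hw6 : 6*t ≤ w := by
  have h1 := F.hbig; have h2 := F.hol; have h3 := F.hw; omega
lemma hwu : w + 1 ≤ n := by have h1 := F.hw; have h2 := F.hou; omega
lemma hw2 : w % 2 = 1 := by have h1 := F.hw; have h2 := F.ho2; omega
lemma hyw : y ≠ w := by have h1 := F.hy2; have h2 := F.hw2; omega
lemma hM5 : 5 ≤ M := by
  have h1 := F.hKu; have h2 := F.hMt2; have h3 := F.h12K; have ht := F.ht
  have h4 := F.hKl
  by_contra hc
  push_neg at hc
  have h5 : 2*M*t ≤ 2*4*t := by
    have := Nat.mul_le_mul_right t (show 2*M ≤ 2*4 by omega)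
    omega
  omega

lemma hymod : y % (2*t) = 2*t - 2 := by
  have hk3 : K - 3 + 3 = K := by have := F.hK6; omega
  have e1 : 2*t*(K-3) + 6*t = 2*K*t := by
    calc 2*t*(K-3) + 6*t = 2*t*((K-3)+3) := by ring
    _ = 2*K*t := by rw [hk3]; ring
  have e2 : y = 2*t*(K-3) + (2*t - 2) := by have := F.hy; have := F.ht; omega
  rw [e2, Nat.mul_add_mod]
  exact Nat.mod_eq_of_lt (by have := F.ht; omega)

end Facts

lemma odd_not_mod2t {x t : ℕ} (hx : x % 2 = 1) (hmod : x % (2*t) = 0) : False := by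
  have h := Nat.dvd_of_mod_eq_zero hmod
  obtain ⟨c, rfl⟩ := h
  have : 2*t*c = 2*(t*c) := by ring
  omega

lemma gnot1 {t q : ℕ} (ht : 1 ≤ t) (hq : 1 ≤ q) : ¬(2*t+1 ≤ 2*t*q ∧ 2*t*q ≤ 4*t-1) := by
  rintro ⟨a, b⟩
  rcases le_or_gt q 1 with h | h
  · have : q = 1 := by omega
    rw [this] at a b; omega
  · have : 2*t*2 ≤ 2*t*q := Nat.mul_le_mul_left _ h
    omega

lemma gnot2 {t q : ℕ} (ht : 1 ≤ t) (hq : 1 ≤ q) : ¬(4*t+1 ≤ 2*t*q ∧ 2*t*q ≤ 6*t-1) := by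
  rintro ⟨a, b⟩
  rcases le_or_gt q 2 with h | h
  · interval_cases q <;> omega
  · have : 2*t*3 ≤ 2*t*q := Nat.mul_le_mul_left _ h
    omega

section Eval
variable {n t M K o y w : ℕ} (F : Facts n t M K o y w)
include F

lemma dfun_low {i : ℕ} (hi : i < 2*t) : dfun n t M o y w i = i := by
  have ht := F.ht; have hbig := F.hbig; have hol := F.hol
  have hyl := F.hyl; have hw6 := F.hw6
  unfold dfun
  rw [if_neg (by omega), if_neg (by omega),
    if_neg (by rintro ⟨-, h2, -⟩; omega),
    if_neg (by rintro ⟨-, h2, h3⟩; omega),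
    if_neg (by omega), if_neg (by omega)]

omit F in
lemma dfun_Sval {i : ℕ} (h1 : 2*t+1 ≤ i) (h2 : i ≤ 4*t-1) :
    dfun n t M o y w i = i + 2*t := by
  unfold dfun
  rw [if_pos ⟨h1, h2⟩]

lemma dfun_S2 {i : ℕ} (h1 : 4*t+1 ≤ i) (h2 : i ≤ 6*t-1) :
    dfun n t M o y w i = i - 2*t := by
  have ht := F.ht
  unfold dfun
  rw [if_neg (by omega), if_pos ⟨h1, h2⟩]

lemma dfun_grid {q : ℕ} (hq1 : 1 ≤ q) (hqM : q ≤ M) :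
    dfun n t M o y w (2*t*q) = o + 2 - 2*q := by
  have ht := F.ht; have hMt := F.hMt
  have hle : 2*t*q ≤ 2*t*M := Nat.mul_le_mul_left _ hqM
  have he : 2*t*M = 2*M*t := by ring
  have h2t : 2*t*1 ≤ 2*t*q := Nat.mul_le_mul_left _ hq1
  unfold dfun
  rw [if_neg (gnot1 (by omega) hq1), if_neg (gnot2 (by omega) hq1),
    if_pos ⟨Nat.mul_mod_right (2*t) q, by omega, by omega⟩]
  congr 1
  have : 2*t*q = t*(2*q) := by ring
  rw [this, Nat.mul_div_cancel_left _ (by omega : 0 < t)]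

lemma dfun_gval {q : ℕ} (hq1 : 1 ≤ q) (hqM : q ≤ M) :
    dfun n t M o y w (o + 2 - 2*q) = 2*t*q := by
  have ht := F.ht; have hw6 := F.hw6; have hw := F.hw
  have ho2 := F.ho2; have hM5 := F.hM5
  have hov : o + 2 - 2*q ≥ w + 2 := by omega
  have hparity : (o + 2 - 2*q) % 2 = 1 := by omega
  unfold dfun
  rw [if_neg (by omega), if_neg (by omega),
    if_neg (by rintro ⟨h1, -, -⟩; exact odd_not_mod2t hparity h1),
    if_pos ⟨by omega, by omega, by omega⟩]
  have : o + 2 - (o + 2 - 2*q) = 2*q := by omega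
  rw [this]; ring

lemma dfun_y : dfun n t M o y w y = w := by
  have ht := F.ht; have hyl := F.hyl; have hymod := F.hymod
  have hy2 := F.hy2; have ho2 := F.ho2
  unfold dfun
  rw [if_neg (by omega), if_neg (by omega),
    if_neg (by rintro ⟨h1, -, -⟩; omega),
    if_neg (by rintro ⟨h1, -, -⟩; omega),
    if_pos rfl]

lemma dfun_w : dfun n t M o y w w = y := by
  have ht := F.ht; have hw6 := F.hw6; have hw2 := F.hw2
  have hw := F.hw; have hyw := F.hyw
  unfold dfun
  rw [if_neg (by omega), if_neg (by omega),
    if_neg (by rintro ⟨h1, -, -⟩; exact odd_not_mod2t hw2 h1),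
    if_neg (by rintro ⟨-, h2, -⟩; omega),
    if_neg (by omega), if_pos rfl]

lemma dfun_lt {i : ℕ} (hi : i < n) : dfun n t M o y w i < n := by
  have ht := F.ht; have h10 := F.h10; have hou := F.hou
  have hMt := F.hMt; have hwu := F.hwu; have hyu := F.hyu
  unfold dfun
  split_ifs with c1 c2 c3 c4 c5 c6
  · omega
  · omega
  · -- o + 2 - i/t < n : since i ≥ 2t, i/t ≥ 2
    have : 2 ≤ i / t := by
      rw [Nat.le_div_iff_mul_le (by omega : 0 < t)]; omega
    omega
  · -- (o+2-i)*t ≤ 2*M*t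
    obtain ⟨hp, hr1, hr2⟩ := c4
    have : (o + 2 - i) ≤ 2*M := by omega
    have h2 : (o + 2 - i) * t ≤ 2*M*t := Nat.mul_le_mul_right _ this
    omega
  · omega
  · omega
  · omega

lemma dfun_invol {i : ℕ} (hi : i < n) : dfun n t M o y w (dfun n t M o y w i) = i := by
  have ht := F.ht; have h10 := F.h10; have hou := F.hou; have hol := F.hol
  have hMt := F.hMt; have hwu := F.hwu; have hyu := F.hyu
  have hw6 := F.hw6; have hyl := F.hyl; have hy2 := F.hy2
  have hw2 := F.hw2; have ho2 := F.ho2; have hbig := F.hbig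
  have hymod := F.hymod; have hw := F.hw; have hyw := F.hyw
  by_cases c1 : 2*t+1 ≤ i ∧ i ≤ 4*t-1
  · rw [dfun_Sval c1.1 c1.2, dfun_S2 F (by omega) (by omega)]
    omega
  by_cases c2 : 4*t+1 ≤ i ∧ i ≤ 6*t-1
  · have e : dfun n t M o y w i = i - 2*t := by
      unfold dfun; rw [if_neg c1, if_pos c2]
    rw [e, dfun_Sval (by omega) (by omega)]
    omega
  by_cases c3 : i % (2*t) = 0 ∧ 2*t ≤ i ∧ i < n
  · obtain ⟨hm, h2, h3⟩ := c3
    have hdvd := Nat.dvd_of_mod_eq_zero hm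
    obtain ⟨q, hq⟩ := hdvd
    have hq1 : 1 ≤ q := by
      rcases Nat.eq_zero_or_pos q with h | h
      · rw [h] at hq; omega
      · exact h
    have hqM : q ≤ M := by
      by_contra hc
      push_neg at hc
      have : 2*t*(M+1) ≤ 2*t*q := Nat.mul_le_mul_left _ (by omega)
      have he : 2*t*(M+1) = 2*M*t + 2*t := by ring
      have hMt2 := F.hMt2
      omega
    rw [hq, dfun_grid F hq1 hqM, dfun_gval F hq1 hqM]
  by_cases c4 : i % 2 = o % 2 ∧ o + 2 ≤ i + 2*M ∧ i ≤ o
  · obtain ⟨hp, hr1, hr2⟩ := c4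
    have hq : ∃ q, i = o + 2 - 2*q ∧ 1 ≤ q ∧ q ≤ M := by
      refine ⟨(o + 2 - i)/2, by omega, by omega, by omega⟩
    obtain ⟨q, hiq, hq1, hqM⟩ := hq
    rw [hiq, dfun_gval F hq1 hqM, dfun_grid F hq1 hqM]
  by_cases c5 : i = y
  · have e : dfun n t M o y w i = w := by rw [c5]; exact dfun_y F
    rw [e, dfun_w F, c5]
  by_cases c6 : i = w
  · have e : dfun n t M o y w i = y := by rw [c6]; exact dfun_w F
    rw [e, dfun_y F, c6]
  · have e : dfun n t M o y w i = i := by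
      unfold dfun
      rw [if_neg c1, if_neg c2, if_neg c3, if_neg c4, if_neg c5, if_neg c6]
    rw [e, e]

end Eval

section Lower

lemma refl_target {n : ℕ} (hn : 2 ≤ n) {k jv yv : ℕ} (hj : jv < n) (hy : yv < n)
    (hs : jv + yv = (k + n - 1) % n ∨ jv + yv = n + (k + n - 1) % n) :
    (n - 1 - jv + k) % n = yv := by
  cases k with
  | zero =>
    have hc : (0 + n - 1) % n = n - 1 := by
      rw [Nat.zero_add]; exact Nat.mod_eq_of_lt (by omega)
    rw [hc] at hs
    rcases hs with h | h
    · have he : n - 1 - jv + 0 = yv := by omega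
      rw [he]; exact Nat.mod_eq_of_lt hy
    · omega
  | succ k =>
    have hc : (k + 1 + n - 1) % n = k % n := by
      have h1 : k + 1 + n - 1 = k + n := by omega
      rw [h1, Nat.add_mod_right]
    rw [hc] at hs
    have hkm : k % n < n := Nat.mod_lt _ (by omega)
    rcases hs with h | h
    · -- jv + yv = k % n ≤ n-1, value = n + (k%n - jv) + (k - k%n)...
      -- n - 1 - jv + (k+1) ≡ yv : write k = n*(k/n) + k%n
      have hd := Nat.div_add_mod k n
      have he : n - 1 - jv + (k+1) = n * (k / n) + (n + yv) := by omega
      rw [he, Nat.mul_add_mod, Nat.add_mod_left]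
      exact Nat.mod_eq_of_lt hy
    · have hd := Nat.div_add_mod k n
      have he : n - 1 - jv + (k+1) = n * (k / n) + yv := by omega
      rw [he, Nat.mul_add_mod]
      exact Nat.mod_eq_of_lt hy

lemma wt_ge_pair {n : ℕ} (l g : Equiv.Perm (Fin n)) (j : Fin n) :
    ((((l (g j)).val : ℤ)) - ((l j).val : ℤ)).natAbs ≤ wt (l * g * l⁻¹) := by
  have hmem := Finset.mem_univ (l j)
  have hle := Finset.le_sup (f := fun i : Fin n => (((l * g * l⁻¹) i : ℤ) - (i : ℤ)).natAbs) hmem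
  have he : (l * g * l⁻¹) (l j) = l (g j) := by
    simp [Equiv.Perm.mul_apply]
  simp only [he] at hle
  exact hle

def dperm {n t M K o y w : ℕ} (F : Facts n t M K o y w) : Equiv.Perm (Fin n) where
  toFun i := ⟨dfun n t M o y w i.val, dfun_lt F i.isLt⟩
  invFun i := ⟨dfun n t M o y w i.val, dfun_lt F i.isLt⟩
  left_inv i := Fin.ext (dfun_invol F i.isLt)
  right_inv i := Fin.ext (dfun_invol F i.isLt)

lemma conclude {n t M K o y w : ℕ} (F : Facts n t M K o y w)
    (g : Equiv.Perm (Fin n)) (j : Fin n)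
    (h : (dfun n t M o y w j.val ≤ 4*t - 1 ∧ w ≤ dfun n t M o y w (g j).val) ∨
         (w ≤ dfun n t M o y w j.val ∧ dfun n t M o y w (g j).val ≤ 4*t - 1)) :
    (n : ℤ) - (2*M + 4*t + 1) ≤ wt (dperm F * g * (dperm F)⁻¹) := by
  have h1 := wt_ge_pair (dperm F) g j
  have hv1 : ((dperm F) (g j)).val = dfun n t M o y w (g j).val := rfl
  have hv2 : ((dperm F) j).val = dfun n t M o y w j.val := rfl
  rw [hv1, hv2] at h1
  have hw6 := F.hw6; have hol := F.hol; have hw := F.hw; have ht := F.ht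
  omega

lemma lower_all {n t M K o y w : ℕ} (F : Facts n t M K o y w) :
    ∀ g ∈ dihedralSubgroup n, g ≠ 1 →
    (n : ℤ) - (2*M + 4*t + 1) ≤ wt (dperm F * g * (dperm F)⁻¹) := by
  have hn := F.hn; have ht := F.ht; have h10 := F.h10
  have hMt := F.hMt; have hMt2 := F.hMt2; have hw := F.hw
  have hol := F.hol; have hou := F.hou; have hw6 := F.hw6
  have hKl := F.hKl; have hKu := F.hKu; have hyF := F.hy
  have hyu := F.hyu
  have hn2 : 2 ≤ n := by omega
  intro g hg hg1
  obtain ⟨k, hk, hcase⟩ := dihedral_mem_cases hn2 hg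
  -- helper to bound q by M
  have hqM : ∀ q : ℕ, 2*t*q ≤ n - 1 → q ≤ M := by
    intro q hq
    by_contra hc
    push_neg at hc
    have h1 : 2*t*(M+1) ≤ 2*t*q := Nat.mul_le_mul_left _ (by omega)
    have h2 : 2*t*(M+1) = 2*M*t + 2*t := by ring
    omega
  rcases hcase with hrot | hrefl
  · -- rotation
    have hk1 : 1 ≤ k := by
      rcases Nat.eq_zero_or_pos k with h | h
      · exfalso; apply hg1; rw [hrot, h, pow_zero]
      · exact h
    rcases le_or_gt k (n - 2*t) with hksmall | hklarge
    · -- k ≤ n - 2t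
      have hdm := Nat.div_add_mod (k + 2*t - 1) (2*t)
      set q := (k + 2*t - 1) / (2*t) with hqdef
      set r := (k + 2*t - 1) % (2*t) with hrdef
      have hrlt : r < 2*t := Nat.mod_lt _ (by omega)
      have hq1 : 1 ≤ q := by
        rcases Nat.eq_zero_or_pos q with h | h
        · exfalso; rw [h, Nat.mul_zero] at hdm; omega
        · exact h
      have hqle : 2*t*q ≤ n - 1 := by omega
      have hqM' : q ≤ M := hqM q hqle
      set a := 2*t*q - k with hadef
      have ha2t : a ≤ 2*t - 1 := by omega
      have han : a < n := by omega
      have htq : 2*t*q < n := by omega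
      set j : Fin n := ⟨a, han⟩ with hjdef
      have hgj : (g j).val = 2*t*q := by
        rw [hrot, rotpow_val hn2]
        have : (j : Fin n).val + k = 2*t*q := by
          simp only [hjdef]; omega
        rw [this]
        exact Nat.mod_eq_of_lt htq
      apply conclude F g j
      left
      constructor
      · have : (j : Fin n).val = a := rfl
        rw [this, dfun_low F (by omega)]
        omega
      · rw [hgj, dfun_grid F hq1 hqM']
        omega
    · -- k > n - 2t
      have h2tn : 2*t < n := by omega
      set a := 2*t + k - n with hadef
      have ha1 : 1 ≤ a := by omega
      have ha2 : a ≤ 2*t - 1 := by omega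
      set j : Fin n := ⟨2*t, h2tn⟩ with hjdef
      have hgj : (g j).val = a := by
        rw [hrot, rotpow_val hn2]
        have he : (j : Fin n).val + k = n + a := by
          simp only [hjdef]; omega
        rw [he, Nat.add_mod_left]
        exact Nat.mod_eq_of_lt (by omega)
      apply conclude F g j
      right
      constructor
      · have he : (j : Fin n).val = 2*t*1 := by simp only [hjdef]; omega
        rw [he, dfun_grid F (le_refl 1) (by have := F.hM5; omega)]
        omega
      · rw [hgj, dfun_low F (by omega)]
        omega
  · -- reflection
    set c := (k + n - 1) % n with hcdef
    have hcn : c < n := Nat.mod_lt _ (by omega)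
    rcases le_or_gt (2*t) c with hc2t | hc2t
    · -- c ≥ 2t
      have hdm := Nat.div_add_mod c (2*t)
      set q := c / (2*t) with hqdef
      set x := c % (2*t) with hxdef
      have hxlt : x < 2*t := Nat.mod_lt _ (by omega)
      have hq1 : 1 ≤ q := by
        rcases Nat.eq_zero_or_pos q with h | h
        · exfalso; rw [h, Nat.mul_zero] at hdm; omega
        · exact h
      have hqle : 2*t*q ≤ n - 1 := by omega
      have hqM' : q ≤ M := hqM q hqle
      set j : Fin n := ⟨x, by omega⟩ with hjdef
      have hgj : (g j).val = 2*t*q := by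
        rw [hrefl, Equiv.Perm.mul_apply, rotpow_val hn2, rev_val]
        have hjv : (j : Fin n).val = x := rfl
        rw [hjv]
        exact refl_target hn2 (by omega) (by omega) (Or.inl (by omega))
      apply conclude F g j
      left
      constructor
      · have : (j : Fin n).val = x := rfl
        rw [this, dfun_low F (by omega)]
        omega
      · rw [hgj, dfun_grid F hq1 hqM']
        omega
    · -- c < 2t
      by_cases hcs : c + n = 2*K*t
      · -- special class : use x* = 4t+2, y
        set j : Fin n := ⟨4*t+2, by omega⟩ with hjdef
        have hgj : (g j).val = y := by
          rw [hrefl, Equiv.Perm.mul_apply, rotpow_val hn2, rev_val]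
          have hjv : (j : Fin n).val = 4*t+2 := rfl
          rw [hjv]
          exact refl_target hn2 (by omega) (by omega) (Or.inr (by omega))
        apply conclude F g j
        left
        constructor
        · have hjv : (j : Fin n).val = 4*t+2 := rfl
          rw [hjv, dfun_S2 F (by omega) (by omega)]
          omega
        · rw [hgj, dfun_y F]
      · -- generic small class
        have hdm := Nat.div_add_mod (n + c) (2*t)
        set D := (n + c) / (2*t) with hDdef
        set r := (n + c) % (2*t) with hrdef
        have hrlt : r < 2*t := Nat.mod_lt _ (by omega)
        have hr1 : 1 ≤ r := by
          rcases Nat.eq_zero_or_pos r with h | h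
          · exfalso
            -- n + c = 2t*D, and n ≤ 2Kt ≤ n + 2t - 1 forces D = K
            rw [h, Nat.add_zero] at hdm
            rcases lt_trichotomy D K with hDK | hDK | hDK
            · have h1 : 2*t*(D+1) ≤ 2*t*K := Nat.mul_le_mul_left _ (by omega)
              have h2 : 2*t*K = 2*K*t := by ring
              have h3 : 2*t*(D+1) = 2*t*D + 2*t := by ring
              omega
            · apply hcs; rw [hDK] at hdm
              have : 2*t*K = 2*K*t := by ring
              omega
            · have h1 : 2*t*(K+1) ≤ 2*t*D := Nat.mul_le_mul_left _ (by omega)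
              have h2 : 2*t*K = 2*K*t := by ring
              have h3 : 2*t*(K+1) = 2*t*K + 2*t := by ring
              omega
          · exact h
        have hD4 : 4 ≤ D := by
          by_contra hc4
          push_neg at hc4
          have h1 : 2*t*D ≤ 2*t*3 := Nat.mul_le_mul_left _ (by omega)
          omega
        set q := D - 2 with hqdef2
        have hq2 : q + 2 = D := by omega
        have hqt : 2*t*q + 4*t = 2*t*D := by
          calc 2*t*q + 4*t = 2*t*(q+2) := by ring
          _ = 2*t*D := by rw [hq2]
        set x := 4*t + r with hxdef
        set yv := 2*t*q with hyvdef
        have hxy : x + yv = n + c := by omega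
        have hyvn : yv ≤ n - 2*t - 2 := by omega
        have hqle : 2*t*q ≤ n - 1 := by omega
        have hqM' : q ≤ M := hqM q hqle
        have hq1 : 1 ≤ q := by omega
        set j : Fin n := ⟨x, by omega⟩ with hjdef
        have hgj : (g j).val = yv := by
          rw [hrefl, Equiv.Perm.mul_apply, rotpow_val hn2, rev_val]
          have hjv : (j : Fin n).val = x := rfl
          rw [hjv]
          exact refl_target hn2 (by omega) (by omega) (Or.inr (by omega))
        apply conclude F g j
        left
        constructor
        · have hjv : (j : Fin n).val = x := rfl
          rw [hjv, dfun_S2 F (by omega) (by omega)]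
          omega
        · rw [hgj, dfun_grid F hq1 hqM']
          omega

end Lower
section Upper

lemma rot_cancel {n : ℕ} {a k k' : ℕ} (ha : a < n) (hk : k < n) (hk' : k' < n)
    (h : (a + k) % n = (a + k') % n) : k = k' := by
  have h1 : k ≡ k' [MOD n] := Nat.ModEq.add_left_cancel' a h
  have h2 : k % n = k' % n := h1
  rwa [Nat.mod_eq_of_lt hk, Nat.mod_eq_of_lt hk'] at h2

lemma upper_all (n : ℕ) (hn : 37 ≤ n) (l : Equiv.Perm (Fin n)) :
    ∃ g ∈ dihedralSubgroup n, g ≠ 1 ∧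
      (wt (l * g * l⁻¹) : ℝ) ≤ (n : ℝ) - (⌈(Real.sqrt (4 * (n:ℝ) - 3) - 1) / 2⌉₊ : ℝ) := by
  classical
  set m := ⌈(Real.sqrt (4 * (n:ℝ) - 3) - 1) / 2⌉₊ with hmdef
  have hn2 : 2 ≤ n := by omega
  have hm1 : 1 ≤ m := by
    rw [hmdef, Nat.one_le_ceil_iff]
    have h2 : (2:ℝ) ≤ Real.sqrt (4 * (n:ℝ) - 3) := by
      rw [show (2:ℝ) = Real.sqrt 4 by
            rw [show (4:ℝ) = 2^2 by norm_num, Real.sqrt_sq (by norm_num)]]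
      apply Real.sqrt_le_sqrt
      have : (37:ℝ) ≤ n := by exact_mod_cast hn
      linarith
    linarith
  -- minimality : m*m + 2 ≤ n + m
  have hmm : m*m + 2 ≤ n + m := by
    obtain ⟨m', hm'⟩ : ∃ m', m = m' + 1 := ⟨m - 1, by omega⟩
    have hlt : ((m' : ℕ) : ℝ) < (Real.sqrt (4 * (n:ℝ) - 3) - 1) / 2 := by
      apply Nat.lt_ceil.mp
      rw [← hmdef]; omega
    have h2 : (2*(m':ℝ) + 1) < Real.sqrt (4 * (n:ℝ) - 3) := by linarith
    have h3 : (2*(m':ℝ) + 1)^2 < 4 * (n:ℝ) - 3 := by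
      rw [← Real.lt_sqrt (by positivity)]
      exact h2
    have h4 : (((2*m' + 1)^2 : ℕ) : ℝ) < 4 * (n:ℝ) - 3 := by push_cast; push_cast at h3; linarith
    have h5 : (2*m' + 1)^2 + 4 ≤ 4*n := by
      have hc : (((2*m' + 1)^2 : ℕ) : ℝ) < ((4*n - 3 : ℕ) : ℝ) := by
        rw [Nat.cast_sub (by omega : 3 ≤ 4*n)]
        push_cast
        push_cast at h4
        linarith
      have := Nat.cast_lt.mp hc
      omega
    have h6 : (2*m' + 1)^2 = 4*(m'*m') + 4*m' + 1 := by ring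
    have h7 : m*m = m'*m' + 2*m' + 1 := by rw [hm']; ring
    omega
  have hmn : m + 1 ≤ n := by
    rcases le_or_gt 2 m with h | h
    · have : 2*m ≤ m*m := by nlinarith
      omega
    · omega
  -- the bad set
  set ρn : Equiv.Perm (Fin n) := finRotate n with hρdef
  set bad : ℕ → Prop := fun k => ∃ j : Fin n,
      n - m + 1 ≤ (((l ((ρn ^ k) j)).val : ℤ) - ((l j).val : ℤ)).natAbs with hbaddef
  set Kb := (Finset.Ico 1 n).filter bad with hKbdef
  set P := (Finset.univ ×ˢ (Finset.univ : Finset (Fin n))).filter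
      (fun p : Fin n × Fin n => (p.1).val + (n - m) < (p.2).val) with hPdef
  have hKbcard : Kb.card ≤ P.card * 2 := by
    have hcard2 : (P ×ˢ (Finset.univ : Finset Bool)).card = P.card * 2 := by
      rw [Finset.card_product, Finset.card_univ, Fintype.card_bool]
    rw [← hcard2]
    set Φ : ℕ → (Fin n × Fin n) × Bool := fun k =>
      if h : bad k then
        (if (l h.choose).val < (l ((ρn ^ k) h.choose)).val
         then ((l h.choose, l ((ρn ^ k) h.choose)), true)
         else ((l ((ρn ^ k) h.choose), l h.choose), false))
      else ((⟨0, by omega⟩, ⟨0, by omega⟩), true) with hΦdef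
    apply Finset.card_le_card_of_injOn Φ
    · intro k hk
      rw [hKbdef, Finset.mem_coe, Finset.mem_filter] at hk
      obtain ⟨hkIco, hbadk⟩ := hk
      have hspec := hbadk.choose_spec
      have hv1 := (l hbadk.choose).isLt
      have hv2 := (l ((ρn ^ k) hbadk.choose)).isLt
      rw [Finset.mem_coe, Finset.mem_product]
      simp only [hΦdef, dif_pos hbadk]
      constructor
      · split_ifs with hlt <;>
        · refine Finset.mem_filter.mpr ⟨Finset.mem_product.mpr
            ⟨Finset.mem_univ _, Finset.mem_univ _⟩, ?_⟩
          simp only [Prod.fst, Prod.snd]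
          omega
      · split_ifs <;> exact Finset.mem_univ _
    · intro k hk k' hk' heq
      have hk1 := Finset.mem_coe.mp hk
      have hk'1 := Finset.mem_coe.mp hk'
      rw [hKbdef, Finset.mem_filter, Finset.mem_Ico] at hk1 hk'1
      obtain ⟨⟨hk1a, hk1b⟩, hbadk⟩ := hk1
      obtain ⟨⟨hk'1a, hk'1b⟩, hbadk'⟩ := hk'1
      simp only [hΦdef, dif_pos hbadk, dif_pos hbadk'] at heq
      set j := hbadk.choose with hj
      set j' := hbadk'.choose with hj'
      have hjlt := j.isLt
      have hval : ∀ (i i' : Fin n), l i = l i' → i = i' := fun i i' h => l.injective h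
      split_ifs at heq with h1 h2 h2
      · -- both true
        rw [Prod.mk.injEq, Prod.mk.injEq] at heq
        obtain ⟨⟨e1, e2⟩, -⟩ := heq
        have ej : j = j' := hval _ _ e1
        have er : (ρn ^ k) j = (ρn ^ k') j := by
          rw [ej] at e2 ⊢
          exact hval _ _ e2
        have hval1 := rotpow_val hn2 k j
        have hval2 := rotpow_val hn2 k' j
        rw [er, hval2] at hval1
        exact rot_cancel hjlt hk1b hk'1b hval1.symm
      · rw [Prod.mk.injEq] at heq; exact absurd heq.2 (by simp)
      · rw [Prod.mk.injEq] at heq; exact absurd heq.2 (by simp)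
      · -- both false
        rw [Prod.mk.injEq, Prod.mk.injEq] at heq
        obtain ⟨⟨e1, e2⟩, -⟩ := heq
        have ej : j = j' := hval _ _ e2
        have er : (ρn ^ k) j = (ρn ^ k') j := by
          rw [ej] at e1 ⊢
          exact hval _ _ e1
        have hval1 := rotpow_val hn2 k j
        have hval2 := rotpow_val hn2 k' j
        rw [er, hval2] at hval1
        exact rot_cancel hjlt hk1b hk'1b hval1.symm
  -- bound P.card
  have hPcard : P.card * 2 ≤ m * m - m := by
    set T := ((Finset.range m) ×ˢ (Finset.range m)).filter
        (fun p : ℕ × ℕ => p.1 < p.2) with hTdef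
    have hPT : P.card ≤ T.card := by
      apply Finset.card_le_card_of_injOn (fun p => (p.1.val, p.2.val - (n - m)))
      · intro p hp
        rw [hPdef, Finset.mem_coe, Finset.mem_filter] at hp
        have h1 := p.1.isLt
        have h2 := p.2.isLt
        simp only [Finset.mem_coe]; rw [hTdef, Finset.mem_filter, Finset.mem_product, Finset.mem_range, Finset.mem_range]
        refine ⟨⟨by omega, by omega⟩, by simp only [Prod.fst, Prod.snd]; omega⟩
      · intro p hp p' hp' heq
        have hp1 := Finset.mem_coe.mp hp
        have hp'1 := Finset.mem_coe.mp hp'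
        rw [hPdef, Finset.mem_filter] at hp1 hp'1
        have h1 := p.2.isLt
        have h2 := p'.2.isLt
        rw [Prod.mk.injEq] at heq
        obtain ⟨e1, e2⟩ := heq
        have hv1 : p.1 = p'.1 := Fin.ext e1
        have hv2 : p.2 = p'.2 := Fin.ext (by omega)
        exact Prod.ext hv1 hv2
    have hTT : T.card * 2 = m * m - m := by
      set T' := ((Finset.range m) ×ˢ (Finset.range m)).filter
          (fun p : ℕ × ℕ => p.2 < p.1) with hT'def
      have hswap : T.card = T'.card := by
        refine Finset.card_bij' (fun p _ => (p.2, p.1)) (fun p _ => (p.2, p.1)) ?_ ?_ ?_ ?_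
        · intro a ha
          rw [hTdef, Finset.mem_filter, Finset.mem_product] at ha
          rw [hT'def, Finset.mem_filter, Finset.mem_product]
          exact ⟨⟨ha.1.2, ha.1.1⟩, ha.2⟩
        · intro a ha
          rw [hT'def, Finset.mem_filter, Finset.mem_product] at ha
          rw [hTdef, Finset.mem_filter, Finset.mem_product]
          exact ⟨⟨ha.1.2, ha.1.1⟩, ha.2⟩
        · intro a _; rfl
        · intro a _; rfl
      have hunion : T ∪ T' = (Finset.range m).offDiag := by
        ext p
        rw [Finset.mem_union, hTdef, hT'def, Finset.mem_filter, Finset.mem_filter,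
          Finset.mem_offDiag]
        rw [Finset.mem_product, Finset.mem_range, Finset.mem_range]
        constructor
        · rintro (⟨⟨a, b⟩, c⟩ | ⟨⟨a, b⟩, c⟩) <;>
            exact ⟨a, b, by omega⟩
        · rintro ⟨a, b, c⟩
          rcases lt_or_gt_of_ne c with h | h
          · exact Or.inl ⟨⟨a, b⟩, h⟩
          · exact Or.inr ⟨⟨a, b⟩, h⟩
      have hdisj : Disjoint T T' := by
        rw [Finset.disjoint_left]
        intro p hp hp'
        rw [hTdef, Finset.mem_filter] at hp
        rw [hT'def, Finset.mem_filter] at hp'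
        omega
      have hcard := Finset.card_union_of_disjoint hdisj
      rw [hunion, Finset.offDiag_card, Finset.card_range] at hcard
      omega
    omega
  -- find a good k
  have hKbsmall : Kb.card < (Finset.Ico 1 n).card := by
    rw [Nat.card_Ico]
    have : m * m - m ≤ n - 2 := by omega
    omega
  have hexists : ∃ k ∈ Finset.Ico 1 n, k ∉ Kb := by
    by_contra hc
    push_neg at hc
    have hsub : Finset.Ico 1 n ⊆ Kb := fun k hk => hc k hk
    have := Finset.card_le_card hsub
    omega
  obtain ⟨k, hkIco, hknot⟩ := hexists
  rw [Finset.mem_Ico] at hkIco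
  have hnotbad : ¬ bad k := by
    intro hb
    exact hknot (Finset.mem_filter.mpr ⟨Finset.mem_Ico.mpr hkIco, hb⟩)
  refine ⟨ρn ^ k, ?_, ?_, ?_⟩
  · apply pow_mem
    apply Subgroup.subset_closure
    left; rfl
  · intro h1
    have h0 : ((ρn ^ k) (⟨0, by omega⟩ : Fin n)).val = k := by
      rw [rotpow_val hn2]
      simp only []
      rw [Nat.zero_add, Nat.mod_eq_of_lt hkIco.2]
    rw [h1] at h0
    simp at h0
    omega
  · -- wt bound
    have hwt : wt (l * (ρn ^ k) * l⁻¹) ≤ n - m := by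
      apply Finset.sup_le
      intro i _
      have he : (l * (ρn ^ k) * l⁻¹) i = l ((ρn ^ k) (l⁻¹ i)) := by
        simp [Equiv.Perm.mul_apply]
      rw [he]
      have hj : ∀ j : Fin n, (((l ((ρn ^ k) j)).val : ℤ) - ((l j).val : ℤ)).natAbs ≤ n - m := by
        intro j
        by_contra hc
        exact hnotbad ⟨j, by omega⟩
      have hj2 := hj (l⁻¹ i)
      rw [show l (l⁻¹ i) = i from l.apply_symm_apply i] at hj2
      exact hj2
    have hcast : ((n - m : ℕ) : ℝ) = (n : ℝ) - m := by
      rw [Nat.cast_sub (by omega)]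
    calc (wt (l * (ρn ^ k) * l⁻¹) : ℝ) ≤ ((n - m : ℕ) : ℝ) := by exact_mod_cast hwt
    _ = (n : ℝ) - m := hcast

end Upper
section Final

lemma mkFacts {n : ℕ} (hn : 37 ≤ n) :
    Facts n (dT n) (dM n) (dK n) (dO n) (dY n) (dW n) := by
  have ht := ht3 hn
  have h10 := ht10 hn
  have hMt' := hMt hn
  have hMt2' := hMt2 hn
  have hKl' := hKl hn
  have hKu' := hKu hn
  have hK6' := hK6 hn
  have h12K' := h12K hn
  have hO' := hO hn
  have hbig' := hbig hn
  refine ⟨hn, ht, by omega, by omega, by omega, hKl', by omega, hK6', h12K', by ring,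
    hO'.2.2, by omega, by omega, hbig', ?_, ?_⟩
  · rw [dY]; omega
  · rw [dW]; omega

lemma log_ge3 {n : ℕ} (hn : 37 ≤ n) : (3:ℝ) ≤ Real.log (2*(n:ℝ)+2) := by
  have hpos : (0:ℝ) < 2*(n:ℝ)+2 := by positivity
  rw [Real.le_log_iff_exp_le hpos]
  have he : Real.exp 3 = (Real.exp 1)^3 := by
    rw [← Real.exp_nat_mul]; norm_num
  have h1 : (Real.exp 1)^3 ≤ (2.7182818286:ℝ)^3 :=
    pow_le_pow_left₀ (Real.exp_pos 1).le Real.exp_one_lt_d9.le 3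
  have h2 : (2.7182818286:ℝ)^3 ≤ 76 := by norm_num
  have h3 : (37:ℝ) ≤ (n:ℝ) := by exact_mod_cast hn
  rw [he]
  linarith

lemma real_chain {n : ℕ} (hn : 37 ≤ n) :
    (n : ℝ) - 2*(n:ℝ)*Real.sqrt (Real.log (2*(n:ℝ)+2)/((n:ℝ)/2-1)) -
      Real.sqrt ((n:ℝ)*Real.log (2*(n:ℝ)+2)/2)
      ≤ (n : ℝ) - (2*(dM n : ℝ) + 4*(dT n : ℝ) + 1) := by
  have hs := hs6 hn
  have hMs' := hMs hn
  have htup' := htup hn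
  have hnat : 2*dM n + 4*dT n + 1 ≤ 4*Nat.sqrt n + 5 := by omega
  have hsq : Nat.sqrt n * Nat.sqrt n ≤ n := Nat.sqrt_le n
  -- (4s+5)^2 ≤ 24n in ℕ
  have hnat2 : (4*Nat.sqrt n + 5)*(4*Nat.sqrt n + 5) ≤ 24*n := by
    have h1 : 40*Nat.sqrt n + 25 ≤ 8*(Nat.sqrt n * Nat.sqrt n) := by nlinarith
    nlinarith
  have h1 : (2*(dM n : ℝ) + 4*(dT n : ℝ) + 1) ≤ (4*(Nat.sqrt n : ℝ) + 5) := by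
    exact_mod_cast hnat
  have h2 : (4*(Nat.sqrt n : ℝ) + 5) ≤ Real.sqrt (24*(n:ℝ)) := by
    rw [show (24*(n:ℝ)) = ((24*n : ℕ) : ℝ) by push_cast; ring]
    rw [show (4*(Nat.sqrt n : ℝ) + 5) = ((4*Nat.sqrt n + 5 : ℕ) : ℝ) by push_cast; ring]
    rw [Real.le_sqrt (by positivity) (by positivity)]
    rw [show ((4*Nat.sqrt n + 5 : ℕ) : ℝ)^2 = (((4*Nat.sqrt n + 5)*(4*Nat.sqrt n + 5) : ℕ) : ℝ) by
      push_cast; ring]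
    exact_mod_cast hnat2
  have hL := log_ge3 hn
  have hd : (0:ℝ) < (n:ℝ)/2 - 1 := by
    have : (37:ℝ) ≤ (n:ℝ) := by exact_mod_cast hn
    linarith
  have h3 : Real.sqrt (24*(n:ℝ)) ≤ 2*(n:ℝ)*Real.sqrt (Real.log (2*(n:ℝ)+2)/((n:ℝ)/2-1)) := by
    have hn0 : (0:ℝ) < (n:ℝ) := by positivity
    have hle : 24*(n:ℝ) ≤ (2*(n:ℝ))^2 * (Real.log (2*(n:ℝ)+2)/((n:ℝ)/2-1)) := by
      rw [mul_div_assoc']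
      rw [le_div_iff₀ hd]
      have hnn : (37:ℝ) ≤ (n:ℝ) := by exact_mod_cast hn
      nlinarith
    calc Real.sqrt (24*(n:ℝ)) ≤ Real.sqrt ((2*(n:ℝ))^2 * (Real.log (2*(n:ℝ)+2)/((n:ℝ)/2-1))) :=
          Real.sqrt_le_sqrt hle
    _ = 2*(n:ℝ)*Real.sqrt (Real.log (2*(n:ℝ)+2)/((n:ℝ)/2-1)) := by
        rw [Real.sqrt_mul (by positivity), Real.sqrt_sq (by positivity)]
  have h4 : (0:ℝ) ≤ Real.sqrt ((n:ℝ)*Real.log (2*(n:ℝ)+2)/2) := Real.sqrt_nonneg _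
  linarith


end Final

/-- For `n ≥ 37` the dihedral group `D_n` has a labeling with minimal ℓ∞-distance at
least `n - 2n√(ln(2n+2)/(n/2-1)) - √(n ln(2n+2)/2)`, i.e. `n - O(√(n ln n))`; moreover
every labeling gives minimal distance at most `n - ⌈(√(4n-3)-1)/2⌉`. -/
theorem dihedral_labeling_bounds (n : ℕ) (hn : 37 ≤ n) :
    (∃ l : Equiv.Perm (Fin n), ∀ g ∈ dihedralSubgroup n, g ≠ 1 →
      (n : ℝ) - 2 * n * Real.sqrt (Real.log (2 * n + 2) / ((n : ℝ) / 2 - 1)) -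
        Real.sqrt (n * Real.log (2 * n + 2) / 2) ≤ (wt (l * g * l⁻¹) : ℝ)) ∧
    (∀ l : Equiv.Perm (Fin n), ∃ g ∈ dihedralSubgroup n, g ≠ 1 ∧
      (wt (l * g * l⁻¹) : ℝ) ≤ (n : ℝ) - (⌈(Real.sqrt (4 * n - 3) - 1) / 2⌉₊ : ℝ)) := by
  constructor
  · refine ⟨dperm (mkFacts hn), fun g hg hg1 => ?_⟩
    have hz := lower_all (mkFacts hn) g hg hg1
    have hr : ((n : ℝ) - (2*(dM n : ℝ) + 4*(dT n : ℝ) + 1)) ≤ (wt (dperm (mkFacts hn) * g * (dperm (mkFacts hn))⁻¹) : ℝ) := by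
      have := hz
      push_cast at this ⊢
      exact_mod_cast this
    have hc := real_chain hn
    linarith
  · intro l
    exact upper_all n hn l
end
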